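/- arXiv:1506.01512 — 6 statements merged into one kernel-verified Lean document; each statement's English description precedes it below -/
import Mathlib

section
/- For every integer n ≥ 2 and every real number p with 1 ≤ p < n/(n-1), set γ := 1 − 1/p (so 0 ≤ γ < 1/n). There exists a constant C = C(n,p) > 0 depending only on n and p with the following property. Let (α,β) ⊆ ℝ be a bounded open interval, let a_j ∈ C^{n-1,1}([α,β], ℂ) for j = 1,…,n, and let λ : (α,β) → ℂ be a continuous function such that λ(t)^n + Σ_{j=1}^n a_j(t) λ(t)^{n-j} = 0 for all t ∈ (α,β). Then λ is Hölder continuous of exponent γ and sup_{t∈(α,β)} |λ(t)| + sup_{t≠s∈(α,β)} |λ(t)−λ(s)|/|t−s|^γ ≤ C · max{1, (β−α)^{1/p}} · max_{1≤j≤n} ‖a_j‖_{C^{n-1,1}([α,β])}^{1/j}. -/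
open Set MeasureTheory Real

noncomputable section

/-- `f` is absolutely continuous on the set `S` : for every `ε > 0` there is `δ > 0` such
that for any finitely many non-overlapping intervals `[u i, v i] ⊆ S` of total length `< δ`
the sum `∑ ‖f (v i) - f (u i)‖` is `< ε`. -/
def AbsContOn {E : Type*} [NormedAddCommGroup E] (f : ℝ → E) (S : Set ℝ) : Prop :=
  ∀ ε : ℝ, 0 < ε → ∃ δ : ℝ, 0 < δ ∧
    ∀ (N : ℕ) (u v : Fin N → ℝ),
      (∀ i, u i ≤ v i ∧ Set.Icc (u i) (v i) ⊆ S) →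
      (∀ i j, i ≠ j → Disjoint (Set.Ioo (u i) (v i)) (Set.Ioo (u j) (v j))) →
      (∑ i, (v i - u i)) < δ →
      (∑ i, ‖f (v i) - f (u i)‖) < ε

/-- `d (i+1)` is the derivative of `d i` on `S` for all `i < k`; thus `d i` is the `i`-th
derivative of `d 0` on `S` for `i ≤ k`. -/
def DerivChain {E : Type*} [NormedAddCommGroup E] [NormedSpace ℝ E]
    (d : ℕ → ℝ → E) (k : ℕ) (S : Set ℝ) : Prop :=
  ∀ i < k, ∀ x ∈ S, HasDerivWithinAt (d i) (d (i + 1) x) S x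

/-- Hölder constant of exponent `a` of `g` on `S`. -/
def HolderConst {E : Type*} [NormedAddCommGroup E] (a : ℝ) (S : Set ℝ) (g : ℝ → E) : ℝ :=
  sSup {r : ℝ | ∃ x ∈ S, ∃ y ∈ S, x ≠ y ∧ r = ‖g x - g y‖ / |x - y| ^ a}

/-- Membership in `C^{k,1}(S)`, encoded via the chain of derivatives `d`:
`d 0` is `k` times differentiable with `i`-th derivative `d i`, and the top
derivative `d k` is Lipschitz. -/
def MemCk1 {E : Type*} [NormedAddCommGroup E] [NormedSpace ℝ E]
    (d : ℕ → ℝ → E) (k : ℕ) (S : Set ℝ) : Prop :=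
  DerivChain d k S ∧ ∃ L : ℝ, ∀ x ∈ S, ∀ y ∈ S, ‖d k x - d k y‖ ≤ L * |x - y|

/-- The `C^{k,1}`-norm: sup of all derivatives up to order `k` plus the Lipschitz
(Hölder-1) constant of the `k`-th derivative. -/
def CNorm {E : Type*} [NormedAddCommGroup E] (d : ℕ → ℝ → E) (k : ℕ) (S : Set ℝ) : ℝ :=
  sSup {r : ℝ | ∃ i ≤ k, ∃ x ∈ S, r = ‖d i x‖} + HolderConst 1 S (d k)

namespace RootHolderAux

open Polynomial

lemma exists_roots_finset (n : ℕ) (hn : 1 ≤ n) (a : ℕ → ℂ) :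
    ∃ R : Finset ℂ, R.card ≤ n ∧
      ∀ z : ℂ, ∀ ε : ℝ, 0 ≤ ε →
        ‖z ^ n + ∑ j ∈ Finset.Icc 1 n, a j * z ^ (n - j)‖ ≤ ε ^ n →
        ∃ r ∈ R, ‖z - r‖ ≤ ε := by
  set q : ℂ[X] := ∑ j ∈ Finset.Icc 1 n, C (a j) * X ^ (n - j) with hq
  have hdeg : q.degree < (n : ℕ) := by
    refine lt_of_le_of_lt (degree_sum_le _ _) ?_
    rw [Finset.sup_lt_iff (by exact_mod_cast WithBot.bot_lt_coe n)]
    intro j hj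
    refine lt_of_le_of_lt (degree_C_mul_X_pow_le _ _) ?_
    have hj1 : 1 ≤ j := (Finset.mem_Icc.mp hj).1
    exact_mod_cast Nat.sub_lt (by omega) (by omega)
  set P : ℂ[X] := X ^ n + q with hP
  have hmonic : P.Monic := monic_X_pow_add hdeg
  have hdegP : P.degree = n := by
    rw [hP, degree_add_eq_left_of_degree_lt (by simpa [degree_X_pow] using hdeg), degree_X_pow]
  have hnatdeg : P.natDegree = n := natDegree_eq_of_degree_eq_some hdegP
  have hsplits : Splits P := IsAlgClosed.splits P
  have hcard : Multiset.card P.roots = n := (splits_iff_card_roots.mp hsplits).trans hnatdeg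
  refine ⟨P.roots.toFinset, le_trans (Multiset.toFinset_card_le _) (le_of_eq hcard), ?_⟩
  intro z ε hε hball
  have heval : P.eval z = z ^ n + ∑ j ∈ Finset.Icc 1 n, a j * z ^ (n - j) := by
    simp [hP, hq, eval_finset_sum]
  have hne : P.roots.toFinset.Nonempty := by
    refine Multiset.toFinset_nonempty.mpr ?_
    intro h0
    rw [h0] at hcard; simp at hcard; omega
  obtain ⟨r₀, hr₀mem, hr₀min⟩ := Finset.exists_min_image P.roots.toFinset (fun r => ‖z - r‖) hne
  refine ⟨r₀, hr₀mem, ?_⟩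
  have hfact : P = (P.roots.map fun r => X - C r).prod :=
    hsplits.eq_prod_roots_of_monic hmonic
  have hevalprod : ‖P.eval z‖₊ = (P.roots.map fun r => ‖z - r‖₊).prod := by
    conv_lhs => rw [hfact]
    rw [eval_multiset_prod, Multiset.map_map]
    have hmp : ∀ m : Multiset ℂ, ‖m.prod‖₊ = (m.map (fun w => ‖w‖₊)).prod := fun m =>
      map_multiset_prod (nnnormHom.toMonoidHom : ℂ →* NNReal) m
    rw [hmp, Multiset.map_map]
    congr 1
    apply Multiset.map_congr rfl
    intro r _
    simp
  have hmin : ‖z - r₀‖₊ ^ n ≤ ‖P.eval z‖₊ := by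
    rw [hevalprod, ← hcard]
    have hcc : Multiset.card P.roots = Multiset.card (P.roots.map fun r => ‖z - r‖₊) := by simp
    rw [hcc]
    apply Multiset.pow_card_le_prod
    intro x hx
    obtain ⟨r, hr, rfl⟩ := Multiset.mem_map.mp hx
    have := hr₀min r (Multiset.mem_toFinset.mpr hr)
    exact_mod_cast this
  have hmin' : ‖z - r₀‖ ^ n ≤ ‖P.eval z‖ := by exact_mod_cast hmin
  have hfin : ‖z - r₀‖ ^ n ≤ ε ^ n := le_trans hmin' (by rw [heval]; exact hball)
  exact le_of_pow_le_pow_left₀ (by omega) hε hfin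

lemma holderConst_nonneg {E : Type*} [NormedAddCommGroup E] (a : ℝ) (S : Set ℝ) (g : ℝ → E) :
    0 ≤ HolderConst a S g := by
  apply Real.sSup_nonneg
  rintro r ⟨x, hx, y, hy, hxy, rfl⟩
  exact div_nonneg (norm_nonneg _) (Real.rpow_nonneg (abs_nonneg _) _)

lemma contOn_of_memCk1 {d : ℕ → ℝ → ℂ} {k : ℕ} {α β : ℝ}
    (h : MemCk1 d k (Icc α β)) {i : ℕ} (hi : i ≤ k) :
    ContinuousOn (d i) (Icc α β) := by
  rcases lt_or_eq_of_le hi with hlt | rfl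
  · exact fun x hx => (h.1 i hlt x hx).continuousWithinAt
  · obtain ⟨L, hL⟩ := h.2
    have hlip : LipschitzOnWith (Real.toNNReal L) (d i) (Icc α β) := by
      apply LipschitzOnWith.of_dist_le'
      intro x hx y hy
      rw [dist_eq_norm, Real.dist_eq]
      exact hL x hx y hy
    exact hlip.continuousOn

lemma bdd_derivset {d : ℕ → ℝ → ℂ} {k : ℕ} {α β : ℝ} (h : MemCk1 d k (Icc α β)) :
    BddAbove {r : ℝ | ∃ i ≤ k, ∃ x ∈ Icc α β, r = ‖d i x‖} := by
  have hb : ∀ i, ∃ Ci : ℝ, i ≤ k → ∀ x ∈ Icc α β, ‖d i x‖ ≤ Ci := by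
    intro i
    by_cases hi : i ≤ k
    · obtain ⟨Ci, hCi⟩ := (isCompact_Icc).exists_bound_of_continuousOn (contOn_of_memCk1 h hi)
      exact ⟨Ci, fun _ => hCi⟩
    · exact ⟨0, fun h' => absurd h' hi⟩
  choose Cf hCf using hb
  refine ⟨(Finset.range (k+1)).sup' ⟨0, Finset.mem_range.mpr (Nat.succ_pos k)⟩ Cf, ?_⟩
  rintro r ⟨i, hi, x, hx, rfl⟩
  exact le_trans (hCf i hi x hx) (Finset.le_sup' _ (Finset.mem_range.mpr (by omega)))

lemma deriv_le_cnorm {d : ℕ → ℝ → ℂ} {k : ℕ} {α β : ℝ}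
    (h : MemCk1 d k (Icc α β)) {i : ℕ} (hi : i ≤ k) {x : ℝ} (hx : x ∈ Icc α β) :
    ‖d i x‖ ≤ CNorm d k (Icc α β) := by
  have h1 : ‖d i x‖ ≤ sSup {r : ℝ | ∃ i ≤ k, ∃ x ∈ Icc α β, r = ‖d i x‖} :=
    le_csSup (bdd_derivset h) ⟨i, hi, x, hx, rfl⟩
  exact le_trans h1 (le_add_of_nonneg_right (holderConst_nonneg _ _ _))

lemma cnorm_nonneg {d : ℕ → ℝ → ℂ} {k : ℕ} {α β : ℝ} :
    0 ≤ CNorm d k (Icc α β) := by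
  refine add_nonneg ?_ (holderConst_nonneg _ _ _)
  apply Real.sSup_nonneg
  rintro r ⟨i, hi, x, hx, rfl⟩
  exact norm_nonneg _

lemma lip_le_cnorm {d : ℕ → ℝ → ℂ} {k : ℕ} {α β : ℝ} (hk : 1 ≤ k)
    (h : MemCk1 d k (Icc α β)) {x y : ℝ} (hx : x ∈ Icc α β) (hy : y ∈ Icc α β) :
    ‖d 0 x - d 0 y‖ ≤ CNorm d k (Icc α β) * |x - y| := by
  have hderiv : ∀ z ∈ Icc α β, HasDerivWithinAt (d 0) (d 1 z) (Icc α β) z :=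
    fun z hz => h.1 0 (by omega) z hz
  have hbound : ∀ z ∈ Icc α β, ‖d 1 z‖ ≤ CNorm d k (Icc α β) :=
    fun z hz => deriv_le_cnorm h hk hz
  have := (convex_Icc α β).norm_image_sub_le_of_norm_hasDerivWithin_le hderiv hbound hy hx
  simpa [Real.norm_eq_abs] using this

lemma geom_sum_half (n : ℕ) : ∑ j ∈ Finset.Icc 1 n, ((1:ℝ)/2) ^ j = 1 - (1/2) ^ n := by
  induction n with
  | zero => simp
  | succ m ih =>
    rw [Finset.sum_Icc_succ_top (by omega), ih]
    ring

lemma root_bound (n : ℕ) (hn : 1 ≤ n) (a : ℕ → ℂ) (K : ℝ) (hK : 0 ≤ K)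
    (ha : ∀ j ∈ Finset.Icc 1 n, ‖a j‖ ≤ K ^ j) (z : ℂ)
    (hz : z ^ n + ∑ j ∈ Finset.Icc 1 n, a j * z ^ (n - j) = 0) : ‖z‖ ≤ 2 * K := by
  by_contra hcon
  push_neg at hcon
  have hz0 : 0 < ‖z‖ := lt_of_le_of_lt (by positivity) hcon
  have hKz : K < ‖z‖ / 2 := by linarith
  have heq : ‖z‖ ^ n = ‖∑ j ∈ Finset.Icc 1 n, a j * z ^ (n - j)‖ := by
    rw [← norm_pow]
    have : z ^ n = -(∑ j ∈ Finset.Icc 1 n, a j * z ^ (n - j)) := by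
      rw [eq_neg_iff_add_eq_zero]; exact hz
    rw [this, norm_neg]
  have hsum : ‖∑ j ∈ Finset.Icc 1 n, a j * z ^ (n - j)‖ ≤
      ∑ j ∈ Finset.Icc 1 n, (1/2 : ℝ) ^ j * ‖z‖ ^ n := by
    refine le_trans (norm_sum_le _ _) (Finset.sum_le_sum ?_)
    intro j hj
    have hj1 : 1 ≤ j := (Finset.mem_Icc.mp hj).1
    have hjn : j ≤ n := (Finset.mem_Icc.mp hj).2
    rw [norm_mul, norm_pow]
    have h1 : ‖a j‖ ≤ (‖z‖ / 2) ^ j :=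
      le_trans (ha j hj) (pow_le_pow_left₀ hK (le_of_lt hKz) j)
    calc ‖a j‖ * ‖z‖ ^ (n - j) ≤ (‖z‖ / 2) ^ j * ‖z‖ ^ (n - j) := by
          apply mul_le_mul_of_nonneg_right h1 (by positivity)
      _ = (1/2 : ℝ) ^ j * (‖z‖ ^ j * ‖z‖ ^ (n - j)) := by rw [div_pow, one_div, inv_pow]; ring
      _ = (1/2 : ℝ) ^ j * ‖z‖ ^ n := by rw [← pow_add]; congr 2; omega
  have hlt : ∑ j ∈ Finset.Icc 1 n, (1/2 : ℝ) ^ j * ‖z‖ ^ n < ‖z‖ ^ n := by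
    rw [← Finset.sum_mul, geom_sum_half]
    have h2 : (0:ℝ) < (1/2) ^ n := by positivity
    have hzn : (0:ℝ) < ‖z‖ ^ n := by positivity
    nlinarith
  exact lt_irrefl _ (lt_of_le_of_lt (heq.le.trans hsum) hlt)


lemma key_estimate (n : ℕ) (hn : 2 ≤ n) {α β : ℝ}
    (d : ℕ → ℕ → ℝ → ℂ) {K : ℝ} (hK : 0 ≤ K)
    (ha_lip : ∀ j ∈ Finset.Icc 1 n, ∀ x ∈ Icc α β, ∀ y ∈ Icc α β,
      ‖d j 0 x - d j 0 y‖ ≤ K ^ j * |x - y|)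
    (l : ℝ → ℂ) (hl : ContinuousOn l (Ioo α β))
    (hroot : ∀ t ∈ Ioo α β, l t ^ n + ∑ j ∈ Finset.Icc 1 n, d j 0 t * l t ^ (n - j) = 0)
    (hlb : ∀ t ∈ Ioo α β, ‖l t‖ ≤ 2 * K)
    {s t : ℝ} (hs : s ∈ Ioo α β) (ht : t ∈ Ioo α β) (hst : s < t) :
    ‖l t - l s‖ ≤ 4 * (n:ℝ)^2 * K * (t - s) ^ ((n:ℝ)⁻¹) := by
  have hsub : Icc s t ⊆ Ioo α β := fun τ hτ => ⟨lt_of_lt_of_le hs.1 hτ.1, lt_of_le_of_lt hτ.2 ht.2⟩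
  have hts0 : (0:ℝ) ≤ t - s := by linarith
  have hn0 : (0:ℝ) < (n:ℝ) := by positivity
  set ε : ℝ := 2 * n * K * (t - s) ^ ((n:ℝ)⁻¹) with hε
  have hε0 : 0 ≤ ε := by
    apply mul_nonneg (by positivity) (Real.rpow_nonneg hts0 _)
  obtain ⟨R, hRcard, hR⟩ := exists_roots_finset n (by omega) (fun j => d j 0 s)
  have hεn : ((t - s) ^ ((n:ℝ)⁻¹)) ^ n = t - s := by
    rw [← Real.rpow_natCast ((t - s) ^ ((n:ℝ)⁻¹)) n, ← Real.rpow_mul hts0,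
      inv_mul_cancel₀ (by positivity), Real.rpow_one]
  have hnear : ∀ τ ∈ Icc s t, ∃ r ∈ R, ‖l τ - r‖ ≤ ε := by
    intro τ hτ
    have hτI : τ ∈ Ioo α β := hsub hτ
    have hτIcc : τ ∈ Icc α β := ⟨hτI.1.le, hτI.2.le⟩
    have hsIcc : s ∈ Icc α β := ⟨hs.1.le, hs.2.le⟩
    set z : ℂ := l τ with hz
    have hzb : ‖z‖ ≤ 2 * K := hlb τ hτI
    have hg : z ^ n + ∑ j ∈ Finset.Icc 1 n, d j 0 s * z ^ (n - j)
        = ∑ j ∈ Finset.Icc 1 n, (d j 0 s - d j 0 τ) * z ^ (n - j) := by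
      have h0 := hroot τ hτI
      rw [← hz] at h0
      have hzn : z ^ n = -(∑ j ∈ Finset.Icc 1 n, d j 0 τ * z ^ (n - j)) := by
        rw [eq_neg_iff_add_eq_zero]; exact h0
      rw [hzn]
      simp only [sub_mul, Finset.sum_sub_distrib]
      abel
    have hgb : ‖z ^ n + ∑ j ∈ Finset.Icc 1 n, d j 0 s * z ^ (n - j)‖ ≤ ε ^ n := by
      rw [hg]
      have hterm : ∀ j ∈ Finset.Icc 1 n,
          ‖(d j 0 s - d j 0 τ) * z ^ (n - j)‖ ≤ 2 ^ n * K ^ n * (t - s) := by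
        intro j hj
        have hj1 : 1 ≤ j := (Finset.mem_Icc.mp hj).1
        have hjn : j ≤ n := (Finset.mem_Icc.mp hj).2
        rw [norm_mul, norm_pow]
        have h1 : ‖d j 0 s - d j 0 τ‖ ≤ K ^ j * (t - s) := by
          refine le_trans (ha_lip j hj s hsIcc τ hτIcc) ?_
          have : |s - τ| ≤ t - s := by
            rw [abs_sub_comm, abs_of_nonneg (by linarith [hτ.1])]
            linarith [hτ.2]
          exact mul_le_mul_of_nonneg_left this (by positivity)
        have h2 : ‖z‖ ^ (n - j) ≤ (2 * K) ^ (n - j) :=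
          pow_le_pow_left₀ (norm_nonneg _) hzb _
        calc ‖d j 0 s - d j 0 τ‖ * ‖z‖ ^ (n - j)
            ≤ (K ^ j * (t - s)) * (2 * K) ^ (n - j) := by
              apply mul_le_mul h1 h2 (by positivity) (by positivity)
          _ = 2 ^ (n - j) * (K ^ j * K ^ (n - j)) * (t - s) := by rw [mul_pow]; ring
          _ = 2 ^ (n - j) * K ^ n * (t - s) := by rw [← pow_add]; congr 3; omega
          _ ≤ 2 ^ n * K ^ n * (t - s) := by
              apply mul_le_mul_of_nonneg_right ?_ hts0
              apply mul_le_mul_of_nonneg_right ?_ (by positivity)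
              exact pow_le_pow_right₀ (by norm_num) (by omega)
      calc ‖∑ j ∈ Finset.Icc 1 n, (d j 0 s - d j 0 τ) * z ^ (n - j)‖
          ≤ ∑ j ∈ Finset.Icc 1 n, ‖(d j 0 s - d j 0 τ) * z ^ (n - j)‖ := norm_sum_le _ _
        _ ≤ ∑ j ∈ Finset.Icc 1 n, 2 ^ n * K ^ n * (t - s) := Finset.sum_le_sum hterm
        _ = n * (2 ^ n * K ^ n * (t - s)) := by
            rw [Finset.sum_const, Nat.card_Icc]; simp [nsmul_eq_mul]
        _ ≤ ε ^ n := by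
            rw [hε, mul_pow, mul_pow, hεn, mul_pow]
            have h3 : (n:ℝ) ≤ (n:ℝ) ^ n := by
              exact_mod_cast Nat.le_self_pow (by omega) n
            have h4 : (0:ℝ) ≤ 2 ^ n * K ^ n * (t - s) := by positivity
            calc (n:ℝ) * (2 ^ n * K ^ n * (t - s))
                ≤ (n:ℝ) ^ n * (2 ^ n * K ^ n * (t - s)) :=
                  mul_le_mul_of_nonneg_right h3 h4
              _ = 2 ^ n * (n:ℝ) ^ n * K ^ n * (t - s) := by ring
    exact hR z ε hε0 hgb
  -- IVT construction
  set D : ℝ := ‖l t - l s‖ with hD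
  have hD0 : 0 ≤ D := norm_nonneg _
  set f : ℝ → ℝ := fun τ => ‖l τ - l s‖ with hf
  have hfc : ContinuousOn f (Icc s t) := ((hl.mono hsub).sub continuousOn_const).norm
  have hIVT := intermediate_value_Icc hst.le hfc
  have hmem : ∀ m : Fin (n+1), ∃ τ ∈ Icc s t, f τ = (m:ℝ) * D / n := by
    intro m
    have hmn : ((m:ℕ):ℝ) ≤ (n:ℝ) := by exact_mod_cast Nat.lt_succ_iff.mp m.isLt
    have hv : (m:ℝ) * D / n ∈ Icc (f s) (f t) := by
      constructor
      · simp [hf]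
        positivity
      · simp only [hf]
        have hstep : (m:ℝ) * D / n ≤ (n:ℝ) * D / n := by gcongr
        calc (m:ℝ) * D / n ≤ (n:ℝ) * D / n := hstep
          _ = D := by field_simp
      
    obtain ⟨τ, hτ, hfτ⟩ := hIVT hv
    exact ⟨τ, hτ, hfτ⟩
  choose τ hτmem hτval using hmem
  choose r hrR hrε using fun m => hnear (τ m) (hτmem m)
  have hcard : R.card < (Finset.univ : Finset (Fin (n+1))).card := by
    rw [Finset.card_univ, Fintype.card_fin]
    omega
  obtain ⟨m, -, m', -, hmm', hrr'⟩ :=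
    Finset.exists_ne_map_eq_of_card_lt_of_maps_to hcard (fun m _ => hrR m)
  have h2ε : |(m:ℝ) * D / n - (m':ℝ) * D / n| ≤ 2 * ε := by
    have e1 : |f (τ m) - f (τ m')| ≤ ‖l (τ m) - l (τ m')‖ := by
      have := abs_norm_sub_norm_le (l (τ m) - l s) (l (τ m') - l s)
      simpa [hf] using this
    have e2 : ‖l (τ m) - l (τ m')‖ ≤ 2 * ε := by
      have : l (τ m) - l (τ m') = (l (τ m) - r m) + (r m' - l (τ m')) := by
        rw [hrr']; ring
      rw [this]
      calc ‖(l (τ m) - r m) + (r m' - l (τ m'))‖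
          ≤ ‖l (τ m) - r m‖ + ‖r m' - l (τ m')‖ := norm_add_le _ _
        _ ≤ ε + ε := by
            refine add_le_add (hrε m) ?_
            rw [norm_sub_rev]
            exact hrε m'
        _ = 2 * ε := by ring
    rw [← hτval m, ← hτval m']
    exact e1.trans e2
  have hge : D / n ≤ |(m:ℝ) * D / n - (m':ℝ) * D / n| := by
    have hd1 : (1:ℝ) ≤ |(m:ℝ) - (m':ℝ)| := by
      have hne : (m:ℕ) ≠ (m':ℕ) := fun h => hmm' (Fin.ext h)
      have hzne : ((m:ℕ):ℤ) - ((m':ℕ):ℤ) ≠ 0 := by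
        intro h
        apply hne
        omega
      have := Int.one_le_abs hzne
      calc (1:ℝ) ≤ |(((m:ℕ):ℤ) - ((m':ℕ):ℤ) : ℤ)| := by exact_mod_cast this
        _ = |(m:ℝ) - (m':ℝ)| := by push_cast; ring_nf
    have : (m:ℝ) * D / n - (m':ℝ) * D / n = ((m:ℝ) - (m':ℝ)) * (D / n) := by ring
    rw [this, abs_mul, abs_of_nonneg (div_nonneg hD0 hn0.le)]
    calc D / n = 1 * (D / n) := by ring
      _ ≤ |(m:ℝ) - (m':ℝ)| * (D / n) := by
          apply mul_le_mul_of_nonneg_right hd1 (div_nonneg hD0 hn0.le)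
  have hfin : D / n ≤ 2 * ε := hge.trans h2ε
  have : D ≤ 2 * ε * n := by
    rw [div_le_iff₀ hn0] at hfin
    linarith
  calc D ≤ 2 * ε * n := this
    _ = 4 * (n:ℝ)^2 * K * (t - s) ^ ((n:ℝ)⁻¹) := by rw [hε]; ring

end RootHolderAux

/-- Any continuous root of a monic polynomial of degree `n` with
`C^{n-1,1}` coefficients on a bounded interval `(α,β)` is Hölder continuous of
exponent `γ = 1 - 1/p < 1/n`, with
`sup |λ| + Höld_γ(λ) ≤ C(n,p) max{1,(β-α)^{1/p}} max_j ‖a_j‖_{C^{n-1,1}}^{1/j}`. -/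
theorem continuous_root_holder
    (n : ℕ) (hn : 2 ≤ n) (p : ℝ) (hp1 : 1 ≤ p)
    (hp2 : p < (n : ℝ) / ((n : ℝ) - 1)) :
    ∃ C : ℝ, 0 < C ∧
      ∀ (α β : ℝ), α < β →
      ∀ d : ℕ → ℕ → ℝ → ℂ,
      (∀ j ∈ Finset.Icc 1 n, MemCk1 (d j) (n - 1) (Icc α β)) →
      ∀ l : ℝ → ℂ, ContinuousOn l (Ioo α β) →
      (∀ t ∈ Ioo α β, l t ^ n + ∑ j ∈ Finset.Icc 1 n, d j 0 t * l t ^ (n - j) = 0) →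
      BddAbove ((fun t => ‖l t‖) '' Ioo α β) ∧
      BddAbove {r : ℝ | ∃ t ∈ Ioo α β, ∃ s ∈ Ioo α β, t ≠ s ∧
        r = ‖l t - l s‖ / |t - s| ^ (1 - 1 / p)} ∧
      sSup ((fun t => ‖l t‖) '' Ioo α β) +
        sSup {r : ℝ | ∃ t ∈ Ioo α β, ∃ s ∈ Ioo α β, t ≠ s ∧
          r = ‖l t - l s‖ / |t - s| ^ (1 - 1 / p)} ≤
        C * max 1 ((β - α) ^ (1 / p)) *
          (Finset.Icc 1 n).sup' (Finset.nonempty_Icc.mpr (by omega))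
            (fun j => CNorm (d j) (n - 1) (Icc α β) ^ ((j : ℝ)⁻¹)) := by
  open RootHolderAux in
exact (by
  -- exponent arithmetic
  have hp0 : (0:ℝ) < p := lt_of_lt_of_le one_pos hp1
  have hnpos : (0:ℝ) < (n:ℝ) := by positivity
  have hn1 : (0:ℝ) < (n:ℝ) - 1 := by
    have : (2:ℝ) ≤ (n:ℝ) := by exact_mod_cast hn
    linarith
  have hγ0 : 0 ≤ 1 - 1/p := by
    have : 1/p ≤ 1 := by rw [div_le_one hp0]; exact hp1
    linarith
  have hpn : p * ((n:ℝ) - 1) < n := (lt_div_iff₀ hn1).mp hp2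
  have hγlt : 1 - 1/p ≤ (n:ℝ)⁻¹ := by
    have hinv : (n:ℝ)⁻¹ * n = 1 := inv_mul_cancel₀ (ne_of_gt hnpos)
    have h2 : 1 - (n:ℝ)⁻¹ ≤ 1/p := by
      rw [le_div_iff₀ hp0]
      nlinarith [hpn, hinv, hnpos, hp0]
    linarith
  have he1 : 0 ≤ (n:ℝ)⁻¹ - (1 - 1/p) := by linarith
  have he2 : (n:ℝ)⁻¹ - (1 - 1/p) ≤ 1/p := by
    have h1 : (n:ℝ)⁻¹ ≤ 1 := by
      rw [inv_le_one_iff₀]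
      right
      exact_mod_cast Nat.one_le_cast.mpr (by omega)
    linarith
  refine ⟨4 * (n:ℝ)^2 + 2, by positivity, ?_⟩
  intro α β hαβ d hd l hl hroot
  have hk1 : 1 ≤ n - 1 := by omega
  have hne : (Finset.Icc 1 n).Nonempty := Finset.nonempty_Icc.mpr (by omega)
  set K : ℝ := (Finset.Icc 1 n).sup' hne
    (fun j => CNorm (d j) (n - 1) (Icc α β) ^ ((j : ℝ)⁻¹)) with hKdef
  have hK0 : 0 ≤ K := by
    obtain ⟨j, hj, hjval⟩ := Finset.exists_mem_eq_sup' hne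
      (fun j => CNorm (d j) (n - 1) (Icc α β) ^ ((j : ℝ)⁻¹))
    rw [hKdef, hjval]
    exact Real.rpow_nonneg cnorm_nonneg _
  have hCNK : ∀ j ∈ Finset.Icc 1 n, CNorm (d j) (n - 1) (Icc α β) ≤ K ^ j := by
    intro j hj
    have hj1 : 1 ≤ j := (Finset.mem_Icc.mp hj).1
    have hjR : ((j:ℝ)) ≠ 0 := Nat.cast_ne_zero.mpr (by omega)
    have h1 : CNorm (d j) (n - 1) (Icc α β) ^ ((j:ℝ)⁻¹) ≤ K := by
      rw [hKdef]
      exact Finset.le_sup' (fun j => CNorm (d j) (n - 1) (Icc α β) ^ ((j:ℝ)⁻¹)) hj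
    have h2 : (CNorm (d j) (n - 1) (Icc α β) ^ ((j:ℝ)⁻¹)) ^ j ≤ K ^ j :=
      pow_le_pow_left₀ (Real.rpow_nonneg cnorm_nonneg _) h1 j
    calc CNorm (d j) (n - 1) (Icc α β)
        = (CNorm (d j) (n - 1) (Icc α β) ^ ((j:ℝ)⁻¹)) ^ j := by
          rw [← Real.rpow_natCast (CNorm (d j) (n - 1) (Icc α β) ^ ((j:ℝ)⁻¹)) j,
            ← Real.rpow_mul cnorm_nonneg, inv_mul_cancel₀ hjR, Real.rpow_one]
      _ ≤ K ^ j := h2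
  have ha_bound : ∀ j ∈ Finset.Icc 1 n, ∀ x ∈ Icc α β, ‖d j 0 x‖ ≤ K ^ j :=
    fun j hj x hx => (deriv_le_cnorm (hd j hj) (Nat.zero_le _) hx).trans (hCNK j hj)
  have ha_lip : ∀ j ∈ Finset.Icc 1 n, ∀ x ∈ Icc α β, ∀ y ∈ Icc α β,
      ‖d j 0 x - d j 0 y‖ ≤ K ^ j * |x - y| :=
    fun j hj x hx y hy => (lip_le_cnorm hk1 (hd j hj) hx hy).trans
      (mul_le_mul_of_nonneg_right (hCNK j hj) (abs_nonneg _))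
  have hlb : ∀ t ∈ Ioo α β, ‖l t‖ ≤ 2 * K :=
    fun t ht => root_bound n (by omega) (fun j => d j 0 t) K hK0
      (fun j hj => ha_bound j hj t (Ioo_subset_Icc_self ht)) (l t) (hroot t ht)
  set M : ℝ := max 1 ((β - α) ^ (1 / p)) with hMdef
  have hM1 : 1 ≤ M := le_max_left _ _
  have hpow : ∀ δ : ℝ, 0 < δ → δ ≤ β - α → δ ^ ((n:ℝ)⁻¹ - (1 - 1/p)) ≤ M := by
    intro δ hδ hδβ
    by_cases hδ1 : δ ≤ 1
    · exact le_trans (Real.rpow_le_one hδ.le hδ1 he1) hM1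
    · push_neg at hδ1
      calc δ ^ ((n:ℝ)⁻¹ - (1 - 1/p)) ≤ δ ^ (1/p) :=
            Real.rpow_le_rpow_of_exponent_le hδ1.le he2
        _ ≤ (β - α) ^ (1/p) := Real.rpow_le_rpow hδ.le hδβ (by positivity)
        _ ≤ M := le_max_right _ _
  have hq' : ∀ s t : ℝ, s ∈ Ioo α β → t ∈ Ioo α β → s < t →
      ‖l t - l s‖ / |t - s| ^ (1 - 1/p) ≤ 4 * (n:ℝ)^2 * K * M := by
    intro s t hs ht hst
    have hδ : 0 < t - s := by linarith
    have hδβ : t - s ≤ β - α := by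
      have h1 := hs.1; have h2 := ht.2; linarith
    have habs : |t - s| = t - s := abs_of_pos hδ
    rw [habs, div_le_iff₀ (Real.rpow_pos_of_pos hδ _)]
    calc ‖l t - l s‖ ≤ 4 * (n:ℝ)^2 * K * (t - s) ^ ((n:ℝ)⁻¹) :=
          key_estimate n hn d hK0 ha_lip l hl hroot hlb hs ht hst
      _ = 4 * (n:ℝ)^2 * K * ((t - s) ^ ((n:ℝ)⁻¹ - (1 - 1/p)) * (t - s) ^ (1 - 1/p)) := by
          rw [← Real.rpow_add hδ]
          norm_num
      _ = (4 * (n:ℝ)^2 * K * (t - s) ^ ((n:ℝ)⁻¹ - (1 - 1/p))) * (t - s) ^ (1 - 1/p) := by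
          ring
      _ ≤ 4 * (n:ℝ)^2 * K * M * (t - s) ^ (1 - 1/p) := by
          apply mul_le_mul_of_nonneg_right ?_ (Real.rpow_nonneg hδ.le _)
          apply mul_le_mul_of_nonneg_left (hpow _ hδ hδβ) (by positivity)
  have hq : ∀ r ∈ {r : ℝ | ∃ t ∈ Ioo α β, ∃ s ∈ Ioo α β, t ≠ s ∧
      r = ‖l t - l s‖ / |t - s| ^ (1 - 1 / p)}, r ≤ 4 * (n:ℝ)^2 * K * M := by
    rintro r ⟨t, ht, s, hs, hts, rfl⟩
    rcases lt_or_gt_of_ne hts with h | h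
    · have := hq' t s ht hs h
      rw [norm_sub_rev, abs_sub_comm] at this
      exact this
    · exact hq' s t hs ht h
  have hbd1 : BddAbove ((fun t => ‖l t‖) '' Ioo α β) := by
    refine ⟨2 * K, ?_⟩
    rintro r ⟨x, hx, rfl⟩
    exact hlb x hx
  have hbd2 : BddAbove {r : ℝ | ∃ t ∈ Ioo α β, ∃ s ∈ Ioo α β, t ≠ s ∧
      r = ‖l t - l s‖ / |t - s| ^ (1 - 1 / p)} := ⟨4 * (n:ℝ)^2 * K * M, hq⟩
  refine ⟨hbd1, hbd2, ?_⟩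
  have hA : sSup ((fun t => ‖l t‖) '' Ioo α β) ≤ 2 * K := by
    apply Real.sSup_le ?_ (by positivity)
    rintro r ⟨x, hx, rfl⟩
    exact hlb x hx
  have hB : sSup {r : ℝ | ∃ t ∈ Ioo α β, ∃ s ∈ Ioo α β, t ≠ s ∧
      r = ‖l t - l s‖ / |t - s| ^ (1 - 1 / p)} ≤ 4 * (n:ℝ)^2 * K * M := by
    apply Real.sSup_le hq
    have : (0:ℝ) < M := lt_of_lt_of_le one_pos hM1
    positivity
  have hfinal : 2 * K + 4 * (n:ℝ)^2 * K * M ≤ (4 * (n:ℝ)^2 + 2) * M * K := by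
    nlinarith [hK0, hM1, sq_nonneg (n:ℝ)]
  exact le_trans (add_le_add hA hB) hfinal

  )
end
end

section
/- Let n₁, n₂ ≥ 1 and n = n₁ + n₂. For b ∈ ℂ^{n₁} write P_b(Z) = Z^{n₁} + Σ_{i=1}^{n₁} b_i Z^{n₁−i}, and similarly for c ∈ ℂ^{n₂} and a ∈ ℂ^{n}. Suppose a ∈ ℂ^n, b ∈ ℂ^{n₁}, c ∈ ℂ^{n₂} satisfy P_a = P_b · P_c (as polynomials) and P_b and P_c have no common root in ℂ. Then there exist an open neighborhood U ⊆ ℂ^n of a and analytic (holomorphic) maps β : U → ℂ^{n₁} and γ : U → ℂ^{n₂} with β(a) = b, γ(a) = c, and P_{a'} = P_{β(a')} · P_{γ(a')} for all a' ∈ U. -/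
open Set Polynomial

noncomputable section

/-- The monic polynomial `Z^n + ∑_{j=1}^n a_j Z^{n-j}` associated with the coefficient
vector `a ∈ ℂ^n` (here `a i` corresponds to `a_{i+1}`). -/
def monicPoly {n : ℕ} (a : Fin n → ℂ) : Polynomial ℂ :=
  X ^ n + ∑ i : Fin n, C (a i) * X ^ (n - 1 - (i : ℕ))

namespace SplitAux

def lowPoly {n : ℕ} (a : Fin n → ℂ) : Polynomial ℂ :=
  ∑ i : Fin n, C (a i) * X ^ (n - 1 - (i : ℕ))

lemma monicPoly_eq {n : ℕ} (a : Fin n → ℂ) : monicPoly a = X ^ n + lowPoly a := rfl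

lemma lowPoly_add {n : ℕ} (a b : Fin n → ℂ) : lowPoly (a + b) = lowPoly a + lowPoly b := by
  simp [lowPoly, Finset.sum_add_distrib, add_mul, C_add]

lemma lowPoly_smul {n : ℕ} (r : ℂ) (a : Fin n → ℂ) : lowPoly (r • a) = r • lowPoly a := by
  simp [lowPoly, Finset.smul_sum, smul_eq_C_mul, mul_assoc]

lemma degree_lowPoly_le {n : ℕ} (hn : 1 ≤ n) (a : Fin n → ℂ) :
    (lowPoly a).degree ≤ ((n - 1 : ℕ) : WithBot ℕ) := by
  refine (degree_sum_le _ _).trans ?_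
  refine Finset.sup_le fun i _ => ?_
  refine (degree_C_mul_X_pow_le _ _).trans ?_
  exact_mod_cast (show n - 1 - (i:ℕ) ≤ n - 1 by omega)

lemma degree_lowPoly_lt {n : ℕ} (hn : 1 ≤ n) (a : Fin n → ℂ) :
    (lowPoly a).degree < (n : WithBot ℕ) :=
  (degree_lowPoly_le hn a).trans_lt (by exact_mod_cast (show n - 1 < n by omega))

lemma monic_monicPoly {n : ℕ} (hn : 1 ≤ n) (a : Fin n → ℂ) : (monicPoly a).Monic := by
  rw [monicPoly_eq]
  exact monic_X_pow_add (degree_lowPoly_lt hn a)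

lemma degree_monicPoly {n : ℕ} (hn : 1 ≤ n) (a : Fin n → ℂ) :
    (monicPoly a).degree = n := by
  rw [monicPoly_eq, degree_add_eq_left_of_degree_lt, degree_X_pow]
  rw [degree_X_pow]; exact degree_lowPoly_lt hn a

lemma natDegree_monicPoly {n : ℕ} (hn : 1 ≤ n) (a : Fin n → ℂ) :
    (monicPoly a).natDegree = n :=
  natDegree_eq_of_degree_eq_some (degree_monicPoly hn a)

lemma coeff_lowPoly {n : ℕ} (a : Fin n → ℂ) {k : ℕ} (hk : k < n) :
    (lowPoly a).coeff k = a ⟨n - 1 - k, by omega⟩ := by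
  classical
  rw [lowPoly, finset_sum_coeff]
  rw [Finset.sum_eq_single (⟨n - 1 - k, by omega⟩ : Fin n)]
  · rw [coeff_C_mul, coeff_X_pow, if_pos (by simp; omega), mul_one]
  · intro i _ hi
    rw [coeff_C_mul, coeff_X_pow, if_neg, mul_zero]
    intro h
    apply hi
    have := i.isLt
    apply Fin.ext
    simp only at h ⊢
    omega
  · intro h; exact absurd (Finset.mem_univ _) h

lemma coeff_monicPoly_lt {n : ℕ} (a : Fin n → ℂ) {k : ℕ} (hk : k < n) :
    (monicPoly a).coeff k = a ⟨n - 1 - k, by omega⟩ := by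
  rw [monicPoly_eq, coeff_add, coeff_X_pow, if_neg (by omega), zero_add,
    coeff_lowPoly a hk]

lemma monicPoly_reconstruct {n : ℕ} (hn : 1 ≤ n) {p : Polynomial ℂ}
    (hp : p.Monic) (hd : p.natDegree = n) :
    monicPoly (fun i : Fin n => p.coeff (n - 1 - (i : ℕ))) = p := by
  ext k
  rcases lt_trichotomy k n with h | h | h
  · rw [coeff_monicPoly_lt _ h]
    congr 1
    show n - 1 - (n - 1 - k) = k
    omega
  · subst h
    have h1 : p.coeff k = 1 := by have := hp.coeff_natDegree; rwa [hd] at this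
    rw [monicPoly_eq, coeff_add, coeff_X_pow, if_pos rfl,
      coeff_eq_zero_of_degree_lt (degree_lowPoly_lt hn _), add_zero, h1]
  · rw [coeff_eq_zero_of_natDegree_lt (by omega : p.natDegree < k),
      coeff_eq_zero_of_natDegree_lt (by rw [natDegree_monicPoly hn]; omega)]

end SplitAux

namespace SplitAux

/-- The multiplication map on coefficient vectors. -/
def phi (n₁ n₂ : ℕ) (p : (Fin n₁ → ℂ) × (Fin n₂ → ℂ)) : Fin (n₁ + n₂) → ℂ :=
  fun k => (monicPoly p.1 * monicPoly p.2).coeff (n₁ + n₂ - 1 - (k : ℕ))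

/-- The Sylvester-type linear map, derivative of `phi` at `(b, c)`. -/
def Tlin (n₁ n₂ : ℕ) (b : Fin n₁ → ℂ) (c : Fin n₂ → ℂ) :
    ((Fin n₁ → ℂ) × (Fin n₂ → ℂ)) →ₗ[ℂ] (Fin (n₁ + n₂) → ℂ) where
  toFun p := fun k =>
    (lowPoly p.1 * monicPoly c + lowPoly p.2 * monicPoly b).coeff (n₁ + n₂ - 1 - (k : ℕ))
  map_add' p q := by
    funext k
    show (lowPoly (p + q).1 * monicPoly c + lowPoly (p + q).2 * monicPoly b).coeff
        (n₁ + n₂ - 1 - (k : ℕ))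
      = (lowPoly p.1 * monicPoly c + lowPoly p.2 * monicPoly b).coeff (n₁ + n₂ - 1 - (k : ℕ))
      + (lowPoly q.1 * monicPoly c + lowPoly q.2 * monicPoly b).coeff (n₁ + n₂ - 1 - (k : ℕ))
    rw [← coeff_add]
    congr 1
    rw [show (p + q).1 = p.1 + q.1 from rfl, show (p + q).2 = p.2 + q.2 from rfl,
      lowPoly_add, lowPoly_add]
    ring
  map_smul' r p := by
    funext k
    show (lowPoly (r • p).1 * monicPoly c + lowPoly (r • p).2 * monicPoly b).coeff
        (n₁ + n₂ - 1 - (k : ℕ))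
      = r * (lowPoly p.1 * monicPoly c + lowPoly p.2 * monicPoly b).coeff (n₁ + n₂ - 1 - (k : ℕ))
    rw [show (r • p).1 = r • p.1 from rfl, show (r • p).2 = r • p.2 from rfl,
      lowPoly_smul, lowPoly_smul, smul_mul_assoc, smul_mul_assoc, ← smul_add, coeff_smul,
      smul_eq_mul]

/-- The bilinear remainder map. -/
def blin (n₁ n₂ : ℕ) : (Fin n₁ → ℂ) →ₗ[ℂ] (Fin n₂ → ℂ) →ₗ[ℂ] (Fin (n₁ + n₂) → ℂ) :=
  LinearMap.mk₂ ℂ (fun u v k => (lowPoly u * lowPoly v).coeff (n₁ + n₂ - 1 - (k : ℕ)))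
    (fun u u' v => by
      funext k
      show (lowPoly (u + u') * lowPoly v).coeff (n₁ + n₂ - 1 - (k : ℕ))
        = (lowPoly u * lowPoly v).coeff (n₁ + n₂ - 1 - (k : ℕ))
        + (lowPoly u' * lowPoly v).coeff (n₁ + n₂ - 1 - (k : ℕ))
      rw [lowPoly_add, add_mul, coeff_add])
    (fun r u v => by
      funext k
      show (lowPoly (r • u) * lowPoly v).coeff (n₁ + n₂ - 1 - (k : ℕ))
        = r * (lowPoly u * lowPoly v).coeff (n₁ + n₂ - 1 - (k : ℕ))
      rw [lowPoly_smul, smul_mul_assoc, coeff_smul, smul_eq_mul])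
    (fun u v v' => by
      funext k
      show (lowPoly u * lowPoly (v + v')).coeff (n₁ + n₂ - 1 - (k : ℕ))
        = (lowPoly u * lowPoly v).coeff (n₁ + n₂ - 1 - (k : ℕ))
        + (lowPoly u * lowPoly v').coeff (n₁ + n₂ - 1 - (k : ℕ))
      rw [lowPoly_add, mul_add, coeff_add])
    (fun r u v => by
      funext k
      show (lowPoly u * lowPoly (r • v)).coeff (n₁ + n₂ - 1 - (k : ℕ))
        = r * (lowPoly u * lowPoly v).coeff (n₁ + n₂ - 1 - (k : ℕ))
      rw [lowPoly_smul, mul_smul_comm, coeff_smul, smul_eq_mul])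

/-- Continuous version of `blin`. -/
def blinL (n₁ n₂ : ℕ) : (Fin n₁ → ℂ) →L[ℂ] (Fin n₂ → ℂ) →L[ℂ] (Fin (n₁ + n₂) → ℂ) :=
  LinearMap.toContinuousLinearMap
    { toFun := fun u => LinearMap.toContinuousLinearMap (blin n₁ n₂ u)
      map_add' := fun u v => by ext w; simp [map_add]
      map_smul' := fun r u => by ext w; simp [map_smul] }

lemma blinL_apply (n₁ n₂ : ℕ) (u : Fin n₁ → ℂ) (v : Fin n₂ → ℂ) :
    blinL n₁ n₂ u v = fun k : Fin (n₁ + n₂) =>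
      (lowPoly u * lowPoly v).coeff (n₁ + n₂ - 1 - (k : ℕ)) := rfl

lemma monicPoly_add_lowPoly {n : ℕ} (b x : Fin n → ℂ) :
    monicPoly x = monicPoly b + lowPoly (x - b) := by
  rw [monicPoly_eq, monicPoly_eq, add_assoc, ← lowPoly_add]
  congr 2
  abel

/-- Decomposition of `phi` into constant + linear + bilinear parts around `(b,c)`. -/
lemma phi_decomp (n₁ n₂ : ℕ) (b : Fin n₁ → ℂ) (c : Fin n₂ → ℂ)
    (p : (Fin n₁ → ℂ) × (Fin n₂ → ℂ)) :
    phi n₁ n₂ p = phi n₁ n₂ (b, c) + Tlin n₁ n₂ b c (p - (b, c))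
      + blinL n₁ n₂ (p.1 - b) (p.2 - c) := by
  funext k
  show (monicPoly p.1 * monicPoly p.2).coeff (n₁ + n₂ - 1 - (k : ℕ)) = _
  rw [monicPoly_add_lowPoly b p.1, monicPoly_add_lowPoly c p.2,
    show (monicPoly b + lowPoly (p.1 - b)) * (monicPoly c + lowPoly (p.2 - c))
      = monicPoly b * monicPoly c
        + (lowPoly (p.1 - b) * monicPoly c + lowPoly (p.2 - c) * monicPoly b)
        + lowPoly (p.1 - b) * lowPoly (p.2 - c) from by ring,
    coeff_add, coeff_add]
  rfl

end SplitAux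


open SplitAux

/-- **splitting lemma.** If `P_a = P_b · P_c` with `P_b`, `P_c` monic without
common root, then locally around `a` the splitting persists with analytic coefficient maps. -/
theorem splitting_lemma (n₁ n₂ : ℕ) (h₁ : 1 ≤ n₁) (h₂ : 1 ≤ n₂)
    (b : Fin n₁ → ℂ) (c : Fin n₂ → ℂ) (a : Fin (n₁ + n₂) → ℂ)
    (hsplit : monicPoly a = monicPoly b * monicPoly c)
    (hnocommon : ¬ ∃ z : ℂ, (monicPoly b).eval z = 0 ∧ (monicPoly c).eval z = 0) :
    ∃ U : Set (Fin (n₁ + n₂) → ℂ), IsOpen U ∧ a ∈ U ∧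
      ∃ (B : (Fin (n₁ + n₂) → ℂ) → Fin n₁ → ℂ) (G : (Fin (n₁ + n₂) → ℂ) → Fin n₂ → ℂ),
        AnalyticOnNhd ℂ B U ∧ AnalyticOnNhd ℂ G U ∧ B a = b ∧ G a = c ∧
        ∀ a' ∈ U, monicPoly a' = monicPoly (B a') * monicPoly (G a') := by
  classical
  have hn : 1 ≤ n₁ + n₂ := by omega
  -- coprimality
  have hcop : IsCoprime (monicPoly b) (monicPoly c) := by
    rw [Polynomial.isCoprime_iff_aeval_ne_zero_of_isAlgClosed (k := ℂ) (K := ℂ)]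
    intro z
    by_contra h
    push_neg at h
    exact hnocommon ⟨z, by simpa [coe_aeval_eq_eval] using h⟩
  -- reconstruction
  have hmul : ∀ p : (Fin n₁ → ℂ) × (Fin n₂ → ℂ),
      monicPoly (phi n₁ n₂ p) = monicPoly p.1 * monicPoly p.2 := by
    intro p
    exact monicPoly_reconstruct hn ((monic_monicPoly h₁ _).mul (monic_monicPoly h₂ _))
      (by rw [Monic.natDegree_mul (monic_monicPoly h₁ _) (monic_monicPoly h₂ _),
        natDegree_monicPoly h₁, natDegree_monicPoly h₂])
  have ha' : phi n₁ n₂ (b, c) = a := by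
    funext k
    have hk := k.isLt
    show (monicPoly b * monicPoly c).coeff (n₁ + n₂ - 1 - (k : ℕ)) = a k
    rw [← hsplit, coeff_monicPoly_lt a (show n₁ + n₂ - 1 - (k : ℕ) < n₁ + n₂ by omega)]
    congr 1
    apply Fin.ext
    show n₁ + n₂ - 1 - (n₁ + n₂ - 1 - (k : ℕ)) = (k : ℕ)
    omega
  -- injectivity of the Sylvester map
  have hinj : Function.Injective (Tlin n₁ n₂ b c) := by
    rw [← LinearMap.ker_eq_bot, LinearMap.ker_eq_bot']
    intro p hp
    have hq : lowPoly p.1 * monicPoly c + lowPoly p.2 * monicPoly b = 0 := by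
      ext m
      rw [coeff_zero]
      rcases lt_or_ge m (n₁ + n₂) with hm | hm
      · have h0 := congrFun hp (⟨n₁ + n₂ - 1 - m, by omega⟩ : Fin (n₁ + n₂))
        have hidx : n₁ + n₂ - 1 - ((⟨n₁ + n₂ - 1 - m, by omega⟩ : Fin (n₁ + n₂)) : ℕ) = m := by
          show n₁ + n₂ - 1 - (n₁ + n₂ - 1 - m) = m
          omega
        rw [show (0 : Fin (n₁ + n₂) → ℂ) ⟨n₁ + n₂ - 1 - m, by omega⟩ = 0 from rfl] at h0
        rw [← hidx]
        exact h0
      · apply coeff_eq_zero_of_degree_lt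
        refine lt_of_le_of_lt (degree_add_le _ _) (max_lt ?_ ?_)
        · refine lt_of_le_of_lt (degree_mul_le _ _) ?_
          refine lt_of_le_of_lt (add_le_add (degree_lowPoly_le h₁ p.1)
            (le_of_eq (degree_monicPoly h₂ c))) ?_
          rw [← Nat.cast_add]
          exact_mod_cast (show n₁ - 1 + n₂ < m by omega)
        · refine lt_of_le_of_lt (degree_mul_le _ _) ?_
          refine lt_of_le_of_lt (add_le_add (degree_lowPoly_le h₂ p.2)
            (le_of_eq (degree_monicPoly h₁ b))) ?_
          rw [← Nat.cast_add]
          exact_mod_cast (show n₂ - 1 + n₁ < m by omega)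
    have hdvd : monicPoly b ∣ lowPoly p.1 * monicPoly c :=
      ⟨-(lowPoly p.2), by linear_combination hq⟩
    have hdvd2 : monicPoly b ∣ lowPoly p.1 := hcop.dvd_of_dvd_mul_right hdvd
    have h3 : lowPoly p.1 = 0 := by
      rcases eq_or_ne (lowPoly p.1) 0 with h | h
      · exact h
      · exact eq_zero_of_dvd_of_degree_lt hdvd2
          ((degree_lowPoly_lt h₁ p.1).trans_le (le_of_eq (degree_monicPoly h₁ b).symm))
    have h4 : lowPoly p.2 = 0 := by
      have h5 : lowPoly p.2 * monicPoly b = 0 := by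
        rw [h3] at hq; simpa using hq
      rcases mul_eq_zero.1 h5 with h | h
      · exact h
      · exact absurd h (monic_monicPoly h₁ b).ne_zero
    have hp1 : p.1 = 0 := by
      funext i
      have hi := i.isLt
      have := congrArg (fun q : Polynomial ℂ => q.coeff (n₁ - 1 - (i : ℕ))) h3
      simp only [coeff_zero] at this
      rw [coeff_lowPoly p.1 (show n₁ - 1 - (i : ℕ) < n₁ by omega)] at this
      have hidx : (⟨n₁ - 1 - (n₁ - 1 - (i : ℕ)), by omega⟩ : Fin n₁) = i := by
        apply Fin.ext
        show n₁ - 1 - (n₁ - 1 - (i : ℕ)) = (i : ℕ)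
        omega
      rw [hidx] at this
      exact this
    have hp2 : p.2 = 0 := by
      funext i
      have hi := i.isLt
      have := congrArg (fun q : Polynomial ℂ => q.coeff (n₂ - 1 - (i : ℕ))) h4
      simp only [coeff_zero] at this
      rw [coeff_lowPoly p.2 (show n₂ - 1 - (i : ℕ) < n₂ by omega)] at this
      have hidx : (⟨n₂ - 1 - (n₂ - 1 - (i : ℕ)), by omega⟩ : Fin n₂) = i := by
        apply Fin.ext
        show n₂ - 1 - (n₂ - 1 - (i : ℕ)) = (i : ℕ)
        omega
      rw [hidx] at this
      exact this
    exact Prod.ext hp1 hp2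
  have hsurj : Function.Surjective (Tlin n₁ n₂ b c) := by
    refine (LinearMap.injective_iff_surjective_of_finrank_eq_finrank ?_).1 hinj
    simp [Module.finrank_prod, Module.finrank_fin_fun]
  -- the derivative as a continuous linear equivalence
  set e : ((Fin n₁ → ℂ) × (Fin n₂ → ℂ)) ≃L[ℂ] (Fin (n₁ + n₂) → ℂ) :=
    LinearEquiv.toContinuousLinearEquiv
      (LinearEquiv.ofBijective (Tlin n₁ n₂ b c) ⟨hinj, hsurj⟩) with he
  set Tc : ((Fin n₁ → ℂ) × (Fin n₂ → ℂ)) →L[ℂ] (Fin (n₁ + n₂) → ℂ) :=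
    (e : ((Fin n₁ → ℂ) × (Fin n₂ → ℂ)) →L[ℂ] (Fin (n₁ + n₂) → ℂ)) with hTc
  -- decomposition of phi as a function
  have hfun : (fun p : (Fin n₁ → ℂ) × (Fin n₂ → ℂ) =>
      phi n₁ n₂ (b, c) + Tc (p - (b, c)) + blinL n₁ n₂ (p.1 - b) (p.2 - c)) = phi n₁ n₂ := by
    funext p
    exact (phi_decomp n₁ n₂ b c p).symm
  -- strict derivative
  have hstrict : HasStrictFDerivAt (phi n₁ n₂) (Tc : _ →L[ℂ] _) (b, c) := by
    rw [← hfun]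
    have hbil := (blinL n₁ n₂).isBoundedBilinearMap
    have hsub : HasStrictFDerivAt
        (fun p : (Fin n₁ → ℂ) × (Fin n₂ → ℂ) => (p.1 - b, p.2 - c))
        (ContinuousLinearMap.id ℂ _) ((b, c) : (Fin n₁ → ℂ) × (Fin n₂ → ℂ)) :=
      (hasStrictFDerivAt_id _).sub_const ((b, c) : (Fin n₁ → ℂ) × (Fin n₂ → ℂ))
    have hR : HasStrictFDerivAt
        (fun p : (Fin n₁ → ℂ) × (Fin n₂ → ℂ) => blinL n₁ n₂ (p.1 - b) (p.2 - c))
        (0 : _ →L[ℂ] _) (b, c) := by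
      have h2 := (hbil.hasStrictFDerivAt (b - b, c - c)).comp (b, c) hsub
      refine h2.congr_fderiv ?_
      symm
      refine (ContinuousLinearMap.ext fun q => ?_).symm
      have hz : hbil.deriv (b - b, c - c) q = 0 := by
        rw [IsBoundedBilinearMap.deriv_apply]
        simp [sub_self]
      simp [hz]
    have hlin : HasStrictFDerivAt
        (fun p : (Fin n₁ → ℂ) × (Fin n₂ → ℂ) => Tc (p - (b, c))) Tc (b, c) := by
      have := (Tc.hasStrictFDerivAt (x := ((b, c) : (Fin n₁ → ℂ) × (Fin n₂ → ℂ)))).sub_const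
        (Tc (b, c))
      rw [show (fun p : (Fin n₁ → ℂ) × (Fin n₂ → ℂ) => Tc (p - (b, c))) = fun x => Tc x - Tc (b, c) from ?_]
      · exact this
      funext p
      rw [map_sub]
    have := (hlin.const_add (phi n₁ n₂ (b, c))).add hR
    rwa [add_zero] at this
  -- analyticity of phi at (b, c)
  have hanphi : AnalyticAt ℂ (phi n₁ n₂) (b, c) := by
    rw [← hfun]
    refine AnalyticAt.add (AnalyticAt.add ?_ ?_) ?_
    · exact analyticAt_const
    · exact (Tc.analyticAt _).comp (analyticAt_id.sub analyticAt_const)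
    · have hinner : AnalyticAt ℂ
          (fun p : (Fin n₁ → ℂ) × (Fin n₂ → ℂ) => (p.1 - b, p.2 - c)) (b, c) :=
        (analyticAt_fst.sub analyticAt_const).prod (analyticAt_snd.sub analyticAt_const)
      have houter : AnalyticAt ℂ
          (fun q : (Fin n₁ → ℂ) × (Fin n₂ → ℂ) => blinL n₁ n₂ q.1 q.2) (b - b, c - c) :=
        (blinL n₁ n₂).analyticAt_bilinear _
      exact AnalyticAt.comp (f := fun p : (Fin n₁ → ℂ) × (Fin n₂ → ℂ) => (p.1 - b, p.2 - c))
        (x := (b, c)) houter hinner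
  -- inverse function theorem
  set f := hstrict.toOpenPartialHomeomorph (phi n₁ n₂) with hf
  have hcoe : ⇑f = phi n₁ n₂ := hstrict.toOpenPartialHomeomorph_coe
  have hsrc : ((b, c) : (Fin n₁ → ℂ) × (Fin n₂ → ℂ)) ∈ f.source :=
    hstrict.mem_toOpenPartialHomeomorph_source
  have hfa : f (b, c) = a := by rw [hcoe]; exact ha'
  have htgt : a ∈ f.target := by rw [← hfa]; exact f.map_source hsrc
  have hansymm : AnalyticAt ℂ (⇑f.symm) a := by
    rw [← hfa]
    refine f.analyticAt_symm' hsrc ?_ ?_ (i := e)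
    · rw [hcoe]; exact hanphi
    · rw [hcoe]; exact hstrict.hasFDerivAt.fderiv
  refine ⟨f.target ∩ {x | AnalyticAt ℂ (⇑f.symm) x}, f.open_target.inter (isOpen_analyticAt ℂ _),
    ⟨htgt, hansymm⟩, fun x => (f.symm x).1, fun x => (f.symm x).2, ?_, ?_, ?_, ?_, ?_⟩
  · intro x hx
    exact ((ContinuousLinearMap.fst ℂ _ _).analyticAt _).comp hx.2
  · intro x hx
    exact ((ContinuousLinearMap.snd ℂ _ _).analyticAt _).comp hx.2
  · rw [← hfa]
    show (f.symm (f (b, c))).1 = b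
    rw [f.left_inv hsrc]
  · rw [← hfa]
    show (f.symm (f (b, c))).2 = c
    rw [f.left_inv hsrc]
  · intro a' ha2
    have hr : f (f.symm a') = a' := f.right_inv ha2.1
    rw [hcoe] at hr
    calc monicPoly a' = monicPoly (phi n₁ n₂ (f.symm a')) := by rw [hr]
      _ = monicPoly (f.symm a').1 * monicPoly (f.symm a').2 := hmul _
end
end

section
/- Let m ≥ 1 be an integer and α ∈ (0,1]. There exists a constant C depending only on m and α with the following property. Let P(x) = a₁x + a₂x² + ⋯ + a_m x^m be a polynomial with complex coefficients, let A, M ≥ 0 and B > 0, and suppose |P(x)| ≤ A(1 + M x^{m+α}) for all real x ∈ [0,B]. Then |a_j| ≤ C · A · (1 + M^{j/(m+α)} B^j) · B^{-j} for every j = 1,…,m. -/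
open Set

noncomputable section

lemma key_lemma (m : ℕ) (hm : 1 ≤ m) : ∃ C0 : ℝ, 0 < C0 ∧ ∀ (a : ℕ → ℂ) (K : ℝ),
    (∀ x : ℝ, x ∈ Icc (0:ℝ) 1 → ‖∑ j ∈ Finset.Icc 1 m, a j * (x:ℂ)^j‖ ≤ K) →
    ∀ j ∈ Finset.Icc 1 m, ‖a j‖ ≤ C0 * K := by
  have hm0 : (m:ℝ) ≠ 0 := Nat.cast_ne_zero.mpr (by omega)
  have hmpos : (0:ℝ) < m := by positivity
  set r : Fin m → ℝ := fun i => ((i:ℕ)+1)/m with hr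
  have hr_mem : ∀ i, r i ∈ Icc (0:ℝ) 1 := by
    intro i
    constructor
    · positivity
    · rw [div_le_one hmpos]
      have : (i:ℕ) + 1 ≤ m := i.2
      exact_mod_cast this
  set v : Fin m → ℂ := fun i => ((r i : ℝ) : ℂ) with hv
  have hv_inj : Function.Injective v := by
    intro i j hij
    have h1 : r i = r j := Complex.ofReal_injective hij
    have h2 : ((i:ℕ):ℝ) = ((j:ℕ):ℝ) := by
      have h1' : (((i:ℕ):ℝ)+1)/(m:ℝ) = (((j:ℕ):ℝ)+1)/m := h1
      field_simp at h1'
      linarith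
    exact Fin.ext (by exact_mod_cast h2)
  have hv_ne : ∀ i, v i ≠ 0 := by
    intro i
    simp only [hv, hr]
    have : (0:ℝ) < ((i:ℕ)+1)/m := by positivity
    exact_mod_cast this.ne'
  set V : Matrix (Fin m) (Fin m) ℂ := Matrix.of (fun i k => v i ^ ((k:ℕ)+1)) with hV
  have hVeq : V = Matrix.diagonal v * Matrix.vandermonde v := by
    ext i k
    simp [hV, Matrix.diagonal_mul, Matrix.vandermonde, pow_succ']
  have hdet : V.det ≠ 0 := by
    rw [hVeq, Matrix.det_mul, Matrix.det_diagonal]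
    refine mul_ne_zero (Finset.prod_ne_zero_iff.mpr fun i _ => hv_ne i) ?_
    rw [Matrix.det_vandermonde_ne_zero_iff]
    exact hv_inj
  have hunit : IsUnit V.det := isUnit_iff_ne_zero.mpr hdet
  set W := V⁻¹ with hW
  refine ⟨∑ k, ∑ i, ‖W k i‖ + 1, by positivity, ?_⟩
  intro a K hK j hj
  simp only [Finset.mem_Icc] at hj
  have hK0 : 0 ≤ K := by
    have := hK 0 ⟨le_refl _, zero_le_one⟩
    have hz : ∑ j ∈ Finset.Icc 1 m, a j * ((0:ℝ):ℂ)^j = 0 := by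
      apply Finset.sum_eq_zero
      intro i hi
      simp only [Finset.mem_Icc] at hi
      simp [zero_pow (by omega : i ≠ 0)]
    rw [hz] at this
    simpa using this
  set u : Fin m → ℂ := fun k => a ((k:ℕ)+1) with hu
  have hmul : ∀ i, (V.mulVec u) i = ∑ j ∈ Finset.Icc 1 m, a j * (v i)^j := by
    intro i
    rw [Matrix.mulVec, dotProduct]
    rw [← Finset.Ico_add_one_right_eq_Icc, Finset.sum_Ico_eq_sum_range]
    rw [show (∑ k : Fin m, V i k * u k) = ∑ t ∈ Finset.range m, v i ^ (t+1) * a (t+1)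
      from Fin.sum_univ_eq_sum_range (fun t => v i ^ (t+1) * a (t+1)) m]
    apply Finset.sum_congr (by rw [Nat.add_sub_cancel])
    intro x hx
    rw [add_comm 1 x, mul_comm]
  have hbound : ∀ i, ‖(V.mulVec u) i‖ ≤ K := by
    intro i
    rw [hmul i]
    exact hK (r i) (hr_mem i)
  have hrec : W.mulVec (V.mulVec u) = u := by
    rw [Matrix.mulVec_mulVec, Matrix.nonsing_inv_mul V hunit, Matrix.one_mulVec]
  set k : Fin m := ⟨j-1, by omega⟩ with hk
  have haj : a j = u k := by simp [hu, hk]; congr 1; omega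
  have : ‖u k‖ ≤ (∑ i, ‖W k i‖) * K := by
    rw [← hrec]
    rw [Matrix.mulVec, dotProduct]
    calc ‖∑ i, W k i * (V.mulVec u) i‖ ≤ ∑ i, ‖W k i * (V.mulVec u) i‖ := norm_sum_le _ _
      _ ≤ ∑ i, ‖W k i‖ * K := by
          apply Finset.sum_le_sum
          intro i _
          rw [norm_mul]
          exact mul_le_mul_of_nonneg_left (hbound i) (norm_nonneg _)
      _ = (∑ i, ‖W k i‖) * K := by rw [Finset.sum_mul]
  rw [haj]
  refine this.trans ?_
  apply mul_le_mul_of_nonneg_right _ hK0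
  calc ∑ i, ‖W k i‖ ≤ ∑ k', ∑ i, ‖W k' i‖ := by
        apply Finset.single_le_sum (f := fun k' => ∑ i, ‖W k' i‖) _ (Finset.mem_univ k)
        intro i _
        positivity
    _ ≤ ∑ k', ∑ i, ‖W k' i‖ + 1 := by linarith

/-- **coefficient estimates.** If `P(x) = ∑_{j=1}^m a_j x^j` satisfies
`|P(x)| ≤ A(1 + M x^{m+α})` on `[0,B]`, then
`|a_j| ≤ C(m,α) · A · (1 + M^{j/(m+α)} B^j) · B^{-j}` for `j = 1,…,m`. -/
theorem coefficient_estimates (m : ℕ) (hm : 1 ≤ m) (αe : ℝ) (hα1 : 0 < αe) (hα2 : αe ≤ 1) :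
    ∃ C : ℝ, 0 < C ∧
      ∀ (a : ℕ → ℂ) (A M B : ℝ), 0 ≤ A → 0 ≤ M → 0 < B →
      (∀ x : ℝ, x ∈ Icc (0 : ℝ) B →
        ‖∑ j ∈ Finset.Icc 1 m, a j * (x : ℂ) ^ j‖ ≤ A * (1 + M * x ^ ((m : ℝ) + αe))) →
      ∀ j ∈ Finset.Icc 1 m,
        ‖a j‖ ≤ C * A * (1 + M ^ ((j : ℝ) / ((m : ℝ) + αe)) * B ^ j) * (B ^ j)⁻¹ := by
  obtain ⟨C0, hC0, hkey⟩ := key_lemma m hm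
  refine ⟨2*C0, by positivity, ?_⟩
  intro a A M B hA hM hB hP j hj
  have hmα : (0:ℝ) < (m:ℝ) + αe := by positivity
  set e : ℝ := (m:ℝ) + αe with he
  set b : ℝ := if M = 0 then B else min B (M ^ (-(1/e))) with hbdef
  have hb0 : 0 < b := by
    by_cases hM0 : M = 0
    · simpa [hbdef, hM0] using hB
    · have hMpos : 0 < M := lt_of_le_of_ne hM (Ne.symm hM0)
      simp only [hbdef, hM0, if_false, lt_min_iff]
      exact ⟨hB, Real.rpow_pos_of_pos hMpos _⟩
  have hbB : b ≤ B := by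
    by_cases hM0 : M = 0
    · simp [hbdef, hM0]
    · simp only [hbdef, hM0, if_false]
      exact min_le_left _ _
  have hMb : M * b ^ e ≤ 1 := by
    by_cases hM0 : M = 0
    · simp [hM0]
    · have hMpos : 0 < M := lt_of_le_of_ne hM (Ne.symm hM0)
      have hble : b ≤ M ^ (-(1/e)) := by
        simp only [hbdef, hM0, if_false]; exact min_le_right _ _
      have h1 : b ^ e ≤ (M ^ (-(1/e))) ^ e :=
        Real.rpow_le_rpow hb0.le hble hmα.le
      have h2 : (M ^ (-(1/e))) ^ e = M⁻¹ := by
        rw [← Real.rpow_mul hM, show -(1/e)*e = -1 by field_simp, Real.rpow_neg_one]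
      have h3 : b ^ e ≤ M⁻¹ := h2 ▸ h1
      calc M * b ^ e ≤ M * M⁻¹ := mul_le_mul_of_nonneg_left h3 hM
        _ = 1 := mul_inv_cancel₀ hMpos.ne'
  -- bound on [0,1] after rescaling
  have h2A : ∀ x : ℝ, x ∈ Icc (0:ℝ) 1 →
      ‖∑ j ∈ Finset.Icc 1 m, (a j * (b:ℂ)^j) * (x:ℂ)^j‖ ≤ 2*A := by
    intro x hx
    obtain ⟨hx0, hx1⟩ := hx
    have hbx : b*x ∈ Icc (0:ℝ) B := by
      constructor
      · positivity
      · calc b*x ≤ b*1 := by nlinarith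
          _ ≤ B := by linarith
    have heq : ∑ j ∈ Finset.Icc 1 m, (a j * (b:ℂ)^j) * (x:ℂ)^j
        = ∑ j ∈ Finset.Icc 1 m, a j * ((b*x:ℝ):ℂ)^j := by
      apply Finset.sum_congr rfl
      intro i _
      push_cast
      ring
    rw [heq]
    refine (hP (b*x) hbx).trans ?_
    have hMbx : M * (b*x) ^ e ≤ 1 := by
      have h1 : (b*x) ^ e ≤ b ^ e := by
        apply Real.rpow_le_rpow (by positivity) _ hmα.le
        nlinarith
      calc M * (b*x)^e ≤ M * b^e := by nlinarith [Real.rpow_nonneg (show (0:ℝ) ≤ b*x by positivity) e]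
        _ ≤ 1 := hMb
    nlinarith
  have hk := hkey (fun j => a j * (b:ℂ)^j) (2*A) h2A j hj
  simp only [norm_mul, norm_pow, Complex.norm_real] at hk
  rw [Real.norm_eq_abs, abs_of_pos hb0] at hk
  have hT : 0 ≤ M ^ ((j:ℝ)/e) * B^j := by positivity
  have hBj : (0:ℝ) < B^j := pow_pos hB j
  have hBb : B^j ≤ (1 + M ^ ((j:ℝ)/e) * B^j) * b^j := by
    by_cases hM0 : M = 0
    · have hbB2 : b = B := by simp [hbdef, hM0]
      rw [hbB2]
      nlinarith [pow_pos hB j]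
    · have hMpos : 0 < M := lt_of_le_of_ne hM (Ne.symm hM0)
      rcases le_or_gt B (M ^ (-(1/e))) with h | h
      · have hbB2 : b = B := by
          simp only [hbdef, hM0, if_false]
          exact min_eq_left h
        rw [hbB2]
        nlinarith [pow_pos hB j]
      · have hbeq : b = M ^ (-(1/e)) := by
          simp only [hbdef, hM0, if_false]
          exact min_eq_right h.le
        have key1 : M ^ ((j:ℝ)/e) * b^j = 1 := by
          rw [hbeq, ← Real.rpow_natCast (M ^ (-(1/e))) j, ← Real.rpow_mul hM,
            ← Real.rpow_add hMpos,
            show (j:ℝ)/e + (-(1/e))*(j:ℝ) = 0 by field_simp; ring, Real.rpow_zero]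
        have key2 : M ^ ((j:ℝ)/e) * B^j * b^j = B^j := by
          rw [mul_comm (M ^ ((j:ℝ)/e)) (B^j), mul_assoc, key1, mul_one]
        nlinarith [pow_pos hb0 j]
  rw [← div_eq_mul_inv, le_div_iff₀ hBj]
  calc ‖a j‖ * B^j ≤ ‖a j‖ * ((1 + M ^ ((j:ℝ)/e) * B^j) * b^j) :=
        mul_le_mul_of_nonneg_left hBb (norm_nonneg _)
    _ = (‖a j‖ * b^j) * (1 + M ^ ((j:ℝ)/e) * B^j) := by ring
    _ ≤ (C0 * (2*A)) * (1 + M ^ ((j:ℝ)/e) * B^j) := by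
        apply mul_le_mul_of_nonneg_right hk
        linarith
    _ = 2 * C0 * A * (1 + M ^ ((j:ℝ)/e) * B^j) := by ring
end
end

section
/- Let I ⊆ ℝ be a bounded open interval, m a positive integer, and α ∈ (0,1]. There exists a constant C depending only on m and α such that for every f ∈ C^{m,α}(Ī, ℂ), every t ∈ I, and every s = 1,…,m: |f^{(s)}(t)| ≤ C |I|^{-s} ( V_I(f) + V_I(f)^{(m+α−s)/(m+α)} · (Höld_{α,I}(f^{(m)}))^{s/(m+α)} · |I|^s ), where V_I(f) := sup_{t,s∈I} |f(t) − f(s)| and |I| is the length of I. -/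
open Set MeasureTheory Real

noncomputable section

/-- The oscillation `V_I(g) = sup_{x,y ∈ S} ‖g x - g y‖`. -/
def OscOn {E : Type*} [NormedAddCommGroup E] (S : Set ℝ) (g : ℝ → E) : ℝ :=
  sSup {r : ℝ | ∃ x ∈ S, ∃ y ∈ S, r = ‖g x - g y‖}

lemma exists_coeffs {n : ℕ} (x : Fin n → ℝ) (hx : Function.Injective x) (y : Fin n → ℝ) :
    ∃ c : Fin n → ℝ, ∀ i : Fin n, ∑ j, c j * x j ^ (i : ℕ) = y i := by
  have hdet : (Matrix.vandermonde x).det ≠ 0 :=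
    Matrix.det_vandermonde_ne_zero_iff.2 hx
  set A := (Matrix.vandermonde x).transpose with hA
  have hdetA : IsUnit A.det := by
    rw [hA, Matrix.det_transpose]; exact isUnit_iff_ne_zero.2 hdet
  refine ⟨A⁻¹.mulVec y, fun i => ?_⟩
  have h1 : A.mulVec (A⁻¹.mulVec y) = y := by
    rw [Matrix.mulVec_mulVec, Matrix.mul_nonsing_inv _ hdetA, Matrix.one_mulVec]
  have h2 := congrFun h1 i
  simpa [Matrix.mulVec, dotProduct, Matrix.vandermonde, hA, mul_comm] using h2


lemma taylor_remainder {m : ℕ} (hm : 1 ≤ m) {a b : ℝ} {αe : ℝ} (hα1 : 0 < αe)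
    (d : ℕ → ℝ → ℂ) (hd : DerivChain d m (Icc a b))
    {H : ℝ} (hH : 0 ≤ H)
    (hHol : ∀ x ∈ Ioo a b, ∀ y ∈ Ioo a b, ‖d m x - d m y‖ ≤ H * |x - y| ^ αe)
    {t p : ℝ} (ht : t ∈ Ioo a b) (hp : p ∈ Ioo a b) (htp : t ≤ p) :
    ‖d 0 p - ∑ i ∈ Finset.range (m + 1),
        (((i.factorial : ℝ))⁻¹ * (p - t) ^ i) • d i t‖ ≤
      H * (p - t) ^ αe * (p - t) ^ m := by
  have hab : a < b := lt_trans ht.1 ht.2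
  have hIcc : Icc t p ⊆ Ioo a b := fun y hy => ⟨lt_of_lt_of_le ht.1 hy.1, lt_of_le_of_lt hy.2 hp.2⟩
  have hIccab : Icc t p ⊆ Icc a b := hIcc.trans Ioo_subset_Icc_self
  -- the remainder functions
  set R : ℕ → ℝ → ℂ := fun k y =>
    d k y - ∑ i ∈ Finset.range (m - k + 1), (((i.factorial : ℝ))⁻¹ * (y - t) ^ i) • d (k + i) t
    with hR
  -- continuity of d k on Icc a b for k < m
  have hcont : ∀ k < m, ContinuousOn (d k) (Icc a b) := by
    intro k hk
    intro y hy
    exact (hd k hk y hy).continuousWithinAt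
  -- key induction
  have main : ∀ j : ℕ, j ≤ m → ∀ y ∈ Icc t p,
      ‖R (m - j) y‖ ≤ H * (p - t) ^ αe * (y - t) ^ j := by
    intro j
    induction j with
    | zero =>
      intro _ y hy
      rw [Nat.sub_zero]
      have h1 : R m y = d m y - d m t := by
        simp [hR]
      rw [h1]
      have h2 := hHol y (hIcc hy) t ht
      have h3 : |y - t| = y - t := abs_of_nonneg (by linarith [hy.1])
      rw [h3] at h2
      have h4 : (y - t) ^ αe ≤ (p - t) ^ αe :=
        Real.rpow_le_rpow (by linarith [hy.1]) (by linarith [hy.2]) (le_of_lt hα1)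
      calc ‖d m y - d m t‖ ≤ H * (y - t) ^ αe := h2
        _ ≤ H * (p - t) ^ αe := by nlinarith [Real.rpow_nonneg (show (0:ℝ) ≤ y - t by linarith [hy.1]) αe]
        _ = H * (p - t) ^ αe * (y - t) ^ 0 := by ring
    | succ j ih =>
      intro hj y hy
      have hjm : j ≤ m := le_of_lt hj
      set k := m - (j + 1) with hk
      have hkm : k < m := by omega
      have hkj : m - k = j + 1 := by omega
      have hksucc : k + 1 = m - j := by omega
      -- derivative of R k is R (k+1) within Ici y, for y ∈ Ico t p
      have hderiv : ∀ y ∈ Ico t p, HasDerivWithinAt (R k) (R (k + 1) y) (Ici y) y := by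
        intro y hy
        have hyIcc : y ∈ Icc t p := ⟨hy.1, le_of_lt hy.2⟩
        have hmem : Icc a b ∈ nhdsWithin y (Ici y) :=
          Filter.mem_of_superset (Icc_mem_nhdsGE_of_mem ⟨hy.1, hy.2⟩) hIccab
        have h1 : HasDerivWithinAt (d k) (d (k + 1) y) (Ici y) y :=
          (hd k hkm y (hIccab hyIcc)).mono_of_mem_nhdsWithin hmem
        -- derivative of the polynomial part
        have h2 : HasDerivAt (fun z : ℝ =>
            ∑ i ∈ Finset.range (m - k + 1), (((i.factorial : ℝ))⁻¹ * (z - t) ^ i) • d (k + i) t)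
            (∑ i ∈ Finset.range (m - (k+1) + 1), (((i.factorial : ℝ))⁻¹ * (y - t) ^ i) • d (k + 1 + i) t)
            y := by
          have hterm : ∀ i ∈ Finset.range (m - k + 1), HasDerivAt
              (fun z : ℝ => (((i.factorial : ℝ))⁻¹ * (z - t) ^ i) • d (k + i) t)
              ((((i.factorial : ℝ))⁻¹ * ((i : ℝ) * (y - t) ^ (i - 1) * 1)) • d (k + i) t) y := by
            intro i _
            exact ((((hasDerivAt_id y).sub_const t).fun_pow i).const_mul _).smul_const _
          have := HasDerivAt.fun_sum hterm
          convert this using 1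
          · rfl
          rw [hkj]
          rw [Finset.sum_range_succ' (fun i =>
            ((((i.factorial : ℝ))⁻¹ * ((i : ℝ) * (y - t) ^ (i - 1) * 1)) • d (k + i) t)) (j+1)]
          simp only [Nat.cast_zero, Nat.factorial_zero, Nat.cast_one, zero_mul, mul_zero,
            zero_smul, add_zero, pow_zero]
          have hjk : m - (k + 1) + 1 = j + 1 := by omega
          rw [hjk]
          apply Finset.sum_congr rfl
          intro i _
          have harith : ((i + 1).factorial : ℝ)⁻¹ * (((i:ℝ) + 1) * (y - t) ^ i * 1)
              = ((i.factorial : ℝ))⁻¹ * (y - t) ^ i := by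
            rw [Nat.factorial_succ]
            have h0 : ((i.factorial : ℝ)) ≠ 0 := Nat.cast_ne_zero.2 i.factorial_ne_zero
            push_cast
            field_simp
          rw [show k + 1 + i = k + (i+1) by omega]
          push_cast
          rw [harith]
        exact h1.sub ((h2.hasDerivWithinAt).mono (fun z _ => trivial))
      -- continuity of R k on Icc t p
      have hcontR : ContinuousOn (R k) (Icc t p) := by
        apply ContinuousOn.sub
        · exact (hcont k hkm).mono hIccab
        · apply continuousOn_finset_sum
          intro i _
          exact (ContinuousOn.smul (f := fun y : ℝ => ((i.factorial : ℝ))⁻¹ * (y - t) ^ i) (by fun_prop) continuousOn_const)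
      -- apply MVT
      have hRt : ‖R k t‖ ≤ H * (p - t) ^ αe * (t - t) ^ (j+1) / (j+1) := by
        have : R k t = 0 := by
          rw [hR]
          simp only [sub_self]
          rw [Finset.sum_eq_single 0]
          · simp
          · intro i _ hi
            simp [zero_pow hi]
          · intro h; simp at h
        rw [this]
        simp only [norm_zero, sub_self]
        rw [zero_pow (by omega : j + 1 ≠ 0)]
        simp
      have hB : ∀ z : ℝ, HasDerivAt (fun y : ℝ => H * (p - t) ^ αe * (y - t) ^ (j+1) / (j+1))
          (H * (p - t) ^ αe * (z - t) ^ j) z := by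
        intro z
        have h1 : HasDerivAt (fun y : ℝ => (y - t) ^ (j+1))
            (((j:ℝ)+1) * (z - t) ^ j * 1) z := by
          have := ((hasDerivAt_id z).sub_const t).fun_pow (j+1)
          simpa using this
        have h2 := (h1.const_mul (H * (p - t) ^ αe)).div_const ((j:ℝ)+1)
        convert h2 using 1
        · rfl
        · rfl
        have : ((j:ℝ)+1) ≠ 0 := by positivity
        field_simp
      have hbound : ∀ z ∈ Ico t p, ‖R (k+1) z‖ ≤ H * (p - t) ^ αe * (z - t) ^ j := by
        intro z hz
        have := ih hjm z ⟨hz.1, le_of_lt hz.2⟩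
        rwa [show m - j = k + 1 by omega] at this
      have := image_norm_le_of_norm_deriv_right_le_deriv_boundary hcontR hderiv hRt
        hB hbound hy
      calc ‖R k y‖ ≤ H * (p - t) ^ αe * (y - t) ^ (j+1) / (j+1) := this
        _ ≤ H * (p - t) ^ αe * (y - t) ^ (j+1) := by
            apply div_le_self
            · exact mul_nonneg (mul_nonneg hH (Real.rpow_nonneg (by linarith) _))
                (pow_nonneg (by linarith [hy.1]) _)
            · exact_mod_cast Nat.one_le_iff_ne_zero.2 (by omega)
  have := main m le_rfl p ⟨htp, le_rfl⟩
  rw [Nat.sub_self] at this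
  simp only [hR, Nat.sub_zero, Nat.zero_add, zero_add] at this
  exact this


lemma key_estimate (m : ℕ) (hm : 1 ≤ m) (αe : ℝ) (hα1 : 0 < αe) :
    ∃ K : ℝ, 0 < K ∧ ∀ (a b : ℝ), a < b → ∀ d : ℕ → ℝ → ℂ,
      DerivChain d m (Icc a b) →
      ∀ H : ℝ, 0 ≤ H → (∀ x ∈ Ioo a b, ∀ y ∈ Ioo a b, ‖d m x - d m y‖ ≤ H * |x - y| ^ αe) →
      ∀ V : ℝ, (∀ x ∈ Ioo a b, ∀ y ∈ Ioo a b, ‖d 0 x - d 0 y‖ ≤ V) →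
      ∀ t ∈ Ioo a b, ∀ h : ℝ, 0 < h → t + m * h < b →
      ∀ s : ℕ, 1 ≤ s → s ≤ m →
      ‖d s t‖ * h ^ s ≤ K * (V + H * (((m:ℝ) * h) ^ αe * ((m:ℝ) * h) ^ m)) := by
  -- the interpolation coefficients
  have hxinj : Function.Injective (fun j : Fin (m+1) => ((j : ℕ) : ℝ)) := by
    intro u v huv
    simp only [Nat.cast_inj] at huv
    exact Fin.ext huv
  have hcoef : ∀ s : ℕ, ∃ c : Fin (m+1) → ℝ, ∀ i : Fin (m+1),
      ∑ j, c j * ((j : ℕ) : ℝ) ^ (i : ℕ) = if (i : ℕ) = s then (s.factorial : ℝ) else 0 :=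
    fun s => exists_coeffs _ hxinj _
  choose c hc using hcoef
  set K : ℝ := 1 + ∑ s ∈ Finset.range (m+1), ∑ j, |c s j| with hK
  have hKpos : 0 < K := by
    have : (0:ℝ) ≤ ∑ s ∈ Finset.range (m+1), ∑ j, |c s j| :=
      Finset.sum_nonneg fun s _ => Finset.sum_nonneg fun j _ => abs_nonneg _
    linarith
  have hKs : ∀ s ≤ m, ∑ j, |c s j| ≤ K := by
    intro s hs
    have h1 : ∑ j, |c s j| ≤ ∑ s ∈ Finset.range (m+1), ∑ j, |c s j| :=
      Finset.single_le_sum (f := fun s => ∑ j, |c s j|)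
        (fun i _ => Finset.sum_nonneg fun j _ => abs_nonneg _)
        (Finset.mem_range.2 (by omega))
    linarith
  refine ⟨K, hKpos, ?_⟩
  intro a b hab d hd H hH hHol V hV t ht h hh hmh s hs1 hsm
  -- the evaluation points
  set p : Fin (m+1) → ℝ := fun j => t + (j : ℕ) * h with hp
  have hpIoo : ∀ j : Fin (m+1), p j ∈ Ioo a b := by
    intro j
    constructor
    · have : (0:ℝ) ≤ (j:ℕ) * h := by positivity
      have := ht.1; simp only [hp]; linarith
    · have hj : ((j:ℕ):ℝ) ≤ (m:ℝ) := by exact_mod_cast Nat.le_of_lt_succ j.isLt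
      have : ((j:ℕ):ℝ) * h ≤ (m:ℝ) * h := by nlinarith
      simp only [hp]; linarith
  have hptle : ∀ j : Fin (m+1), t ≤ p j := by
    intro j; simp only [hp]; nlinarith [Nat.cast_nonneg (α := ℝ) (j:ℕ)]
  -- the Taylor polynomial
  set T : ℝ → ℂ := fun x =>
    ∑ i ∈ Finset.range (m + 1), (((i.factorial : ℝ))⁻¹ * (x - t) ^ i) • d i t with hT
  -- remainder bound
  have hrem : ∀ j : Fin (m+1), ‖d 0 (p j) - T (p j)‖ ≤
      H * (((m:ℝ) * h) ^ αe * ((m:ℝ) * h) ^ m) := by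
    intro j
    have h1 := taylor_remainder hm hα1 d hd hH hHol ht (hpIoo j) (hptle j)
    have h2 : p j - t = (j:ℕ) * h := by simp [hp]
    have hjm : ((j:ℕ):ℝ) * h ≤ (m:ℝ) * h := by
      have hj : ((j:ℕ):ℝ) ≤ (m:ℝ) := by exact_mod_cast Nat.le_of_lt_succ j.isLt
      nlinarith
    have hj0 : (0:ℝ) ≤ ((j:ℕ):ℝ) * h := by positivity
    calc ‖d 0 (p j) - T (p j)‖ ≤ H * (p j - t) ^ αe * (p j - t) ^ m := h1
      _ = H * (((j:ℕ):ℝ) * h) ^ αe * (((j:ℕ):ℝ) * h) ^ m := by rw [h2]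
      _ ≤ H * (((m:ℝ) * h) ^ αe * ((m:ℝ) * h) ^ m) := by
          rw [mul_assoc]
          apply mul_le_mul_of_nonneg_left _ hH
          exact mul_le_mul (Real.rpow_le_rpow hj0 hjm (le_of_lt hα1))
            (pow_le_pow_left₀ hj0 hjm m) (pow_nonneg hj0 m)
            (Real.rpow_nonneg (by positivity) αe)
  -- the key algebraic identity
  have hcsum0 : ∑ j, c s j = 0 := by
    have h0 : ¬ ((0:ℕ) = s) := by omega
    have := hc s ⟨0, by omega⟩
    simpa [h0] using this
  have hTsum : ∑ j : Fin (m+1), (c s j) • T (p j) = (h ^ s) • d s t := by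
    have h1 : ∀ j : Fin (m+1), (c s j) • T (p j)
        = ∑ i ∈ Finset.range (m+1), (c s j * ((j:ℕ):ℝ)^i * (((i.factorial : ℝ))⁻¹ * h ^ i)) • d i t := by
      intro j
      rw [hT]
      rw [Finset.smul_sum]
      apply Finset.sum_congr rfl
      intro i _
      rw [smul_smul]
      congr 1
      have : p j - t = ((j:ℕ):ℝ) * h := by simp [hp]
      rw [this, mul_pow]
      ring
    rw [Finset.sum_congr rfl (fun j _ => h1 j)]
    rw [Finset.sum_comm]
    have h2 : ∀ i ∈ Finset.range (m+1),
        ∑ j : Fin (m+1), (c s j * ((j:ℕ):ℝ)^i * (((i.factorial : ℝ))⁻¹ * h ^ i)) • d i t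
        = ((if i = s then (s.factorial : ℝ) else 0) * (((i.factorial : ℝ))⁻¹ * h ^ i)) • d i t := by
      intro i hi
      rw [← Finset.sum_smul]
      congr 1
      rw [← Finset.sum_mul]
      congr 1
      exact hc s ⟨i, Finset.mem_range.1 hi⟩
    rw [Finset.sum_congr rfl h2]
    rw [Finset.sum_eq_single s]
    · simp only [if_pos rfl, ↓reduceIte]
      congr 1
      have : (s.factorial : ℝ) ≠ 0 := Nat.cast_ne_zero.2 s.factorial_ne_zero
      field_simp
    · intro i _ his
      simp [his]
    · intro hs'
      exact absurd (Finset.mem_range.2 (by omega)) hs'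
  have hident : (h ^ s) • d s t = ∑ j : Fin (m+1), (c s j) • (d 0 (p j) - d 0 t)
      - ∑ j : Fin (m+1), (c s j) • (d 0 (p j) - T (p j)) := by
    rw [← Finset.sum_sub_distrib]
    have : ∀ j : Fin (m+1), (c s j) • (d 0 (p j) - d 0 t) - (c s j) • (d 0 (p j) - T (p j))
        = (c s j) • T (p j) - (c s j) • d 0 t := by
      intro j
      rw [← smul_sub, ← smul_sub]
      congr 1
      ring
    rw [Finset.sum_congr rfl (fun j _ => this j), Finset.sum_sub_distrib, hTsum,
      ← Finset.sum_smul, hcsum0, zero_smul, sub_zero]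
  -- conclude
  have hnorm : ‖d s t‖ * h ^ s = ‖(h ^ s) • d s t‖ := by
    rw [norm_smul, Real.norm_eq_abs, abs_of_pos (by positivity), mul_comm]
  rw [hnorm, hident]
  have hb1 : ‖∑ j : Fin (m+1), (c s j) • (d 0 (p j) - d 0 t)‖ ≤ (∑ j, |c s j|) * V := by
    calc ‖∑ j : Fin (m+1), (c s j) • (d 0 (p j) - d 0 t)‖
        ≤ ∑ j : Fin (m+1), ‖(c s j) • (d 0 (p j) - d 0 t)‖ := norm_sum_le _ _
      _ ≤ ∑ j : Fin (m+1), |c s j| * V := by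
          apply Finset.sum_le_sum
          intro j _
          rw [norm_smul, Real.norm_eq_abs]
          exact mul_le_mul_of_nonneg_left (hV _ (hpIoo j) _ ht) (abs_nonneg _)
      _ = (∑ j, |c s j|) * V := by rw [Finset.sum_mul]
  have hb2 : ‖∑ j : Fin (m+1), (c s j) • (d 0 (p j) - T (p j))‖ ≤
      (∑ j, |c s j|) * (H * (((m:ℝ) * h) ^ αe * ((m:ℝ) * h) ^ m)) := by
    calc ‖∑ j : Fin (m+1), (c s j) • (d 0 (p j) - T (p j))‖
        ≤ ∑ j : Fin (m+1), ‖(c s j) • (d 0 (p j) - T (p j))‖ := norm_sum_le _ _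
      _ ≤ ∑ j : Fin (m+1), |c s j| * (H * (((m:ℝ) * h) ^ αe * ((m:ℝ) * h) ^ m)) := by
          apply Finset.sum_le_sum
          intro j _
          rw [norm_smul, Real.norm_eq_abs]
          exact mul_le_mul_of_nonneg_left (hrem j) (abs_nonneg _)
      _ = (∑ j, |c s j|) * (H * (((m:ℝ) * h) ^ αe * ((m:ℝ) * h) ^ m)) := by rw [Finset.sum_mul]
  have hV0 : 0 ≤ V := le_trans (norm_nonneg _) (hV t ht t ht)
  have hH0 : 0 ≤ H * (((m:ℝ) * h) ^ αe * ((m:ℝ) * h) ^ m) := by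
    apply mul_nonneg hH
    apply mul_nonneg (Real.rpow_nonneg (by positivity) _) (by positivity)
  calc ‖_ - _‖ ≤ (∑ j, |c s j|) * V + (∑ j, |c s j|) * (H * (((m:ℝ) * h) ^ αe * ((m:ℝ) * h) ^ m)) :=
        le_trans (norm_sub_le _ _) (add_le_add hb1 hb2)
    _ = (∑ j, |c s j|) * (V + H * (((m:ℝ) * h) ^ αe * ((m:ℝ) * h) ^ m)) := by ring
    _ ≤ K * (V + H * (((m:ℝ) * h) ^ αe * ((m:ℝ) * h) ^ m)) := by
        apply mul_le_mul_of_nonneg_right (hKs s hsm)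
        linarith


lemma reflect_chain {m : ℕ} {a b : ℝ} {d : ℕ → ℝ → ℂ} (hd : DerivChain d m (Icc a b)) :
    DerivChain (fun i x => (-1:ℂ)^i • d i (a + b - x)) m (Icc a b) := by
  intro i hi x hx
  have hmaps : MapsTo (fun x : ℝ => a + b - x) (Icc a b) (Icc a b) := by
    intro y hy
    simp only [Set.mem_Icc] at hy ⊢
    constructor <;> linarith [hy.1, hy.2]
  have hu : HasDerivWithinAt (fun x : ℝ => a + b - x) (-1) (Icc a b) x := by
    simpa using (hasDerivWithinAt_id x (Icc a b)).const_sub (a + b)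
  have h1 : HasDerivWithinAt (fun x : ℝ => d i (a + b - x))
      ((-1 : ℝ) • d (i+1) (a + b - x)) (Icc a b) x :=
    HasDerivWithinAt.scomp x (hd i hi _ (hmaps hx)) hu hmaps
  have h2 := h1.const_smul ((-1:ℂ)^i)
  convert h2 using 1
  show (-1:ℂ) ^ (i+1) • d (i+1) (a + b - x) = _
  rw [pow_succ, neg_one_smul ℝ, mul_smul, neg_one_smul ℂ, smul_neg]
  rfl

lemma deriv_zero_of_const {m : ℕ} {a b : ℝ} (hab : a < b) {d : ℕ → ℝ → ℂ}
    (hd : DerivChain d m (Icc a b))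
    (hconst : ∀ x ∈ Ioo a b, ∀ y ∈ Ioo a b, d 0 x = d 0 y) :
    ∀ k, 1 ≤ k → k ≤ m → ∀ x ∈ Ioo a b, d k x = 0 := by
  have step : ∀ k < m, (∀ x ∈ Ioo a b, ∀ y ∈ Ioo a b, d k x = d k y) →
      ∀ x ∈ Ioo a b, d (k+1) x = 0 := by
    intro k hk hconst x hx
    have h1 : HasDerivWithinAt (d k) (d (k+1) x) (Ioo a b) x :=
      (hd k hk x (Ioo_subset_Icc_self hx)).mono Ioo_subset_Icc_self
    have h2 : HasDerivWithinAt (d k) 0 (Ioo a b) x := by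
      apply (hasDerivWithinAt_const x (Ioo a b) (d k x)).congr
      · intro y hy; exact hconst y hy x hx
      · rfl
    exact (isOpen_Ioo.uniqueDiffWithinAt hx).eq_deriv _ h1 h2
  intro k
  induction k with
  | zero => omega
  | succ k ih =>
    intro _ hk1 x hx
    rcases Nat.eq_zero_or_pos k with rfl | hkpos
    · exact step 0 (by omega) hconst x hx
    · have hzero : ∀ x ∈ Ioo a b, d k x = 0 := ih (by omega) (by omega)
      exact step k (by omega) (fun u hu v hv => by rw [hzero u hu, hzero v hv]) x hx

/-- For `f ∈ C^{m,α}(Ī,ℂ)` on a bounded open interval `I` and `1 ≤ s ≤ m`,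
`|f^{(s)}(t)| ≤ C |I|^{-s} (V_I(f) + V_I(f)^{(m+α-s)/(m+α)} Höld_{α,I}(f^{(m)})^{s/(m+α)} |I|^s)`
for all `t ∈ I`, with `C = C(m,α)`. -/
theorem taylor_derivative_bounds (m : ℕ) (hm : 1 ≤ m) (αe : ℝ) (hα1 : 0 < αe) (hα2 : αe ≤ 1) :
    ∃ C : ℝ, 0 < C ∧
      ∀ (a b : ℝ), a < b →
      ∀ d : ℕ → ℝ → ℂ,
      DerivChain d m (Icc a b) →
      (∃ H : ℝ, ∀ x ∈ Ioo a b, ∀ y ∈ Ioo a b, ‖d m x - d m y‖ ≤ H * |x - y| ^ αe) →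
      ∀ t ∈ Ioo a b, ∀ s : ℕ, 1 ≤ s → s ≤ m →
        ‖d s t‖ ≤ C * ((b - a) ^ s)⁻¹ *
          (OscOn (Ioo a b) (d 0) +
            OscOn (Ioo a b) (d 0) ^ (((m : ℝ) + αe - (s : ℝ)) / ((m : ℝ) + αe)) *
            (HolderConst αe (Ioo a b) (d m)) ^ ((s : ℝ) / ((m : ℝ) + αe)) *
            (b - a) ^ s) := by
  obtain ⟨K, hK, hkey⟩ := key_estimate m hm αe hα1
  have hm1 : (1:ℝ) ≤ (m:ℝ) := by exact_mod_cast hm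
  have hmpos : (0:ℝ) < (m:ℝ) := by linarith
  set K1 : ℝ := K * (1 + (m:ℝ)^(m+1)) with hK1
  have hK1pos : 0 < K1 := by positivity
  set C : ℝ := K1 * (8*(m:ℝ))^m with hC
  have hCpos : 0 < C := by positivity
  have hK1C : K1 ≤ C := by
    have h8 : (1:ℝ) ≤ (8*(m:ℝ))^m := one_le_pow₀ (by linarith)
    nlinarith
  refine ⟨C, hCpos, ?_⟩
  intro a b hab d hd hHex t ht s hs1 hsm
  have hba : (0:ℝ) < b - a := by linarith
  set V := OscOn (Ioo a b) (d 0) with hVdef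
  set Hold := HolderConst αe (Ioo a b) (d m) with hHolddef
  -- two distinct points of the interval
  set x₁ := a + (b-a)/3 with hx₁def
  set x₂ := a + 2*(b-a)/3 with hx₂def
  have hx₁ : x₁ ∈ Ioo a b := by constructor <;> (simp only [hx₁def]; linarith)
  have hx₂ : x₂ ∈ Ioo a b := by constructor <;> (simp only [hx₂def]; linarith)
  have hx12 : x₁ ≠ x₂ := by simp only [hx₁def, hx₂def]; intro hcon; nlinarith [hcon]
  -- oscillation facts
  obtain ⟨M, hM⟩ : ∃ M, ∀ x ∈ Icc a b, ‖d 0 x‖ ≤ M := by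
    have hcont : ContinuousOn (d 0) (Icc a b) := fun y hy => (hd 0 hm y hy).continuousWithinAt
    exact isCompact_Icc.exists_bound_of_continuousOn hcont
  have hVbdd : BddAbove {r : ℝ | ∃ x ∈ Ioo a b, ∃ y ∈ Ioo a b, r = ‖d 0 x - d 0 y‖} := by
    refine ⟨2*M, ?_⟩
    rintro r ⟨x, hx, y, hy, rfl⟩
    have h1 := hM x (Ioo_subset_Icc_self hx)
    have h2 := hM y (Ioo_subset_Icc_self hy)
    calc ‖d 0 x - d 0 y‖ ≤ ‖d 0 x‖ + ‖d 0 y‖ := norm_sub_le _ _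
      _ ≤ 2*M := by linarith
  have hV : ∀ x ∈ Ioo a b, ∀ y ∈ Ioo a b, ‖d 0 x - d 0 y‖ ≤ V := fun x hx y hy =>
    le_csSup hVbdd ⟨x, hx, y, hy, rfl⟩
  have hV0 : 0 ≤ V := le_trans (norm_nonneg _) (hV x₁ hx₁ x₁ hx₁)
  -- Hölder facts
  obtain ⟨H, hH⟩ := hHex
  have hHoldbdd : BddAbove {r : ℝ | ∃ x ∈ Ioo a b, ∃ y ∈ Ioo a b, x ≠ y ∧
      r = ‖d m x - d m y‖ / |x - y| ^ αe} := by
    refine ⟨max H 0, ?_⟩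
    rintro r ⟨x, hx, y, hy, hxy, rfl⟩
    have hpos : (0:ℝ) < |x - y| ^ αe :=
      Real.rpow_pos_of_pos (abs_pos.2 (sub_ne_zero.2 hxy)) _
    rw [div_le_iff₀ hpos]
    exact le_trans (hH x hx y hy) (mul_le_mul_of_nonneg_right (le_max_left _ _) hpos.le)
  have hHol : ∀ x ∈ Ioo a b, ∀ y ∈ Ioo a b, ‖d m x - d m y‖ ≤ Hold * |x - y| ^ αe := by
    intro x hx y hy
    by_cases hxy : x = y
    · subst hxy
      simp [Real.zero_rpow (ne_of_gt hα1)]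
    · have hmem := le_csSup hHoldbdd ⟨x, hx, y, hy, hxy, rfl⟩
      have hpos : (0:ℝ) < |x - y| ^ αe :=
        Real.rpow_pos_of_pos (abs_pos.2 (sub_ne_zero.2 hxy)) _
      calc ‖d m x - d m y‖ = ‖d m x - d m y‖ / |x - y| ^ αe * |x - y| ^ αe := by
            field_simp
        _ ≤ Hold * |x - y| ^ αe := mul_le_mul_of_nonneg_right hmem hpos.le
  have hHold0 : 0 ≤ Hold := by
    refine le_trans (by positivity) (le_csSup hHoldbdd ⟨x₁, hx₁, x₂, hx₂, hx12, rfl⟩)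
  -- the wrapper : the key estimate applied on the correct side
  have wrap : ∀ h : ℝ, 0 < h → (m:ℝ) * h < (b - a)/4 →
      ‖d s t‖ * h ^ s ≤ K * (V + Hold * (((m:ℝ)*h)^αe * ((m:ℝ)*h)^m)) := by
    intro h hh hmh4
    by_cases hside : t + m*h < b
    · exact hkey a b hab d hd Hold hHold0 hHol V hV t ht h hh hside s hs1 hsm
    · push_neg at hside
      set e : ℕ → ℝ → ℂ := fun i x => (-1:ℂ)^i • d i (a + b - x) with he
      have hde : DerivChain e m (Icc a b) := reflect_chain hd
      have hmapsIoo : ∀ x ∈ Ioo a b, a + b - x ∈ Ioo a b := fun x hx =>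
        ⟨by linarith [hx.2], by linarith [hx.1]⟩
      have habs : ∀ x y : ℝ, |a + b - x - (a + b - y)| = |x - y| := by
        intro x y
        rw [show a + b - x - (a + b - y) = -(x - y) by ring, abs_neg]
      have heHol : ∀ x ∈ Ioo a b, ∀ y ∈ Ioo a b, ‖e m x - e m y‖ ≤ Hold * |x - y| ^ αe := by
        intro x hx y hy
        have h1 : e m x - e m y = (-1:ℂ)^m • (d m (a+b-x) - d m (a+b-y)) := by
          simp only [he, smul_sub]
        rw [h1, norm_smul]
        have h2 : ‖(-1:ℂ)^m‖ = 1 := by simp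
        rw [h2, one_mul]
        have h3 := hHol _ (hmapsIoo x hx) _ (hmapsIoo y hy)
        rwa [habs x y] at h3
      have heV : ∀ x ∈ Ioo a b, ∀ y ∈ Ioo a b, ‖e 0 x - e 0 y‖ ≤ V := by
        intro x hx y hy
        have h1 : e 0 x - e 0 y = d 0 (a+b-x) - d 0 (a+b-y) := by
          simp only [he, pow_zero, one_smul]
        rw [h1]
        exact hV _ (hmapsIoo x hx) _ (hmapsIoo y hy)
      have ht' : a + b - t ∈ Ioo a b := hmapsIoo t ht
      have hside' : (a + b - t) + m*h < b := by linarith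
      have hconc := hkey a b hab e hde Hold hHold0 heHol V heV (a+b-t) ht' h hh hside' s hs1 hsm
      have henorm : ‖e s (a+b-t)‖ = ‖d s t‖ := by
        simp only [he, norm_smul]
        rw [show a + b - (a + b - t) = t by ring]
        simp
      rwa [henorm] at hconc
  -- bound on the Hölder term
  have hfac : ∀ h : ℝ, 0 < h →
      Hold * (((m:ℝ)*h)^αe * ((m:ℝ)*h)^m) ≤ (m:ℝ)^(m+1) * (Hold * (h^αe * h^m)) := by
    intro h hh
    have h1 : ((m:ℝ)*h)^αe = (m:ℝ)^αe * h^αe := Real.mul_rpow (by positivity) hh.le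
    have h3 : ((m:ℝ)*h)^m = (m:ℝ)^m * h^m := mul_pow _ _ _
    have h2 : (m:ℝ)^αe ≤ (m:ℝ) := by
      have := Real.rpow_le_rpow_of_exponent_le hm1 hα2
      rwa [Real.rpow_one] at this
    rw [h1, h3]
    have hhe : (0:ℝ) ≤ h^αe := Real.rpow_nonneg hh.le _
    have hme : (0:ℝ) ≤ (m:ℝ)^αe := Real.rpow_nonneg (by positivity) _
    have key : (m:ℝ)^αe * (m:ℝ)^m ≤ (m:ℝ)^(m+1) := by
      rw [pow_succ]
      calc (m:ℝ)^αe * (m:ℝ)^m ≤ (m:ℝ) * (m:ℝ)^m :=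
            mul_le_mul_of_nonneg_right h2 (by positivity)
        _ = (m:ℝ)^m * (m:ℝ) := by ring
    calc Hold * ((m:ℝ)^αe * h^αe * ((m:ℝ)^m * h^m))
        = ((m:ℝ)^αe * (m:ℝ)^m) * (Hold * (h^αe * h^m)) := by ring
      _ ≤ (m:ℝ)^(m+1) * (Hold * (h^αe * h^m)) := by
          apply mul_le_mul_of_nonneg_right key
          exact mul_nonneg hHold0 (mul_nonneg hhe (by positivity))
  -- nonnegativity of pieces of the RHS
  have hθpos : (0:ℝ) < ((m:ℝ) + αe - (s:ℝ)) / ((m:ℝ) + αe) := by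
    have hsle : (s:ℝ) ≤ (m:ℝ) := by exact_mod_cast hsm
    apply div_pos (by linarith) (by linarith)
  have hW0 : 0 ≤ V ^ (((m:ℝ) + αe - (s:ℝ)) / ((m:ℝ) + αe)) *
      Hold ^ ((s:ℝ) / ((m:ℝ) + αe)) * (b - a)^s := by
    apply mul_nonneg (mul_nonneg (Real.rpow_nonneg hV0 _) (Real.rpow_nonneg hHold0 _))
    positivity
  by_cases hVzero : V = 0
  · -- degenerate case : constant function
    have hconst : ∀ x ∈ Ioo a b, ∀ y ∈ Ioo a b, d 0 x = d 0 y := by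
      intro x hx y hy
      have h1 := hV x hx y hy
      rw [hVzero] at h1
      have h2 : ‖d 0 x - d 0 y‖ = 0 := le_antisymm h1 (norm_nonneg _)
      exact sub_eq_zero.1 (norm_eq_zero.1 h2)
    have hz := deriv_zero_of_const hab hd hconst s hs1 hsm t ht
    rw [hz, norm_zero, hVzero, Real.zero_rpow (ne_of_gt hθpos)]
    simp
  · have hVpos : 0 < V := lt_of_le_of_ne hV0 (Ne.symm hVzero)
    set h1 : ℝ := (b - a)/(8*(m:ℝ)) with hh1def
    have hh1pos : 0 < h1 := div_pos hba (by positivity)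
    have hmh1 : (m:ℝ) * h1 = (b-a)/8 := by
      rw [hh1def]; field_simp
    have hmh14 : (m:ℝ) * h1 < (b - a)/4 := by rw [hmh1]; linarith
    by_cases hcase : Hold * (h1^αe * h1^m) ≤ V
    · -- case A : use h = h1
      have hw := wrap h1 hh1pos hmh14
      have hb2 : ‖d s t‖ * h1^s ≤ K1 * V := by
        calc ‖d s t‖ * h1^s ≤ K * (V + Hold * (((m:ℝ)*h1)^αe * ((m:ℝ)*h1)^m)) := hw
          _ ≤ K * (V + (m:ℝ)^(m+1) * (Hold * (h1^αe * h1^m))) := by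
              apply mul_le_mul_of_nonneg_left _ hK.le
              exact add_le_add_right (hfac h1 hh1pos) _
          _ ≤ K * (V + (m:ℝ)^(m+1) * V) := by
              apply mul_le_mul_of_nonneg_left _ hK.le
              apply add_le_add_right
              exact mul_le_mul_of_nonneg_left hcase (by positivity)
          _ = K1 * V := by rw [hK1]; ring
      have hdst : ‖d s t‖ ≤ K1 * V / h1^s := (le_div_iff₀ (pow_pos hh1pos s)).2 hb2
      have hfinal : ‖d s t‖ ≤ C * ((b - a)^s)⁻¹ * V := by
        have e1 : h1^s = (b-a)^s / (8*(m:ℝ))^s := by rw [hh1def, div_pow]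
        have e2 : K1 * V / h1^s = K1 * V * (8*(m:ℝ))^s / (b-a)^s := by
          rw [e1, div_div_eq_mul_div]
        have e3 : (8*(m:ℝ))^s ≤ (8*(m:ℝ))^m :=
          pow_le_pow_right₀ (by linarith) hsm
        calc ‖d s t‖ ≤ K1 * V * (8*(m:ℝ))^s / (b-a)^s := by rw [← e2]; exact hdst
          _ ≤ K1 * V * (8*(m:ℝ))^m / (b-a)^s := by
              gcongr
          _ = C * ((b - a)^s)⁻¹ * V := by rw [hC]; field_simp
      calc ‖d s t‖ ≤ C * ((b - a)^s)⁻¹ * V := hfinal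
        _ ≤ C * ((b - a)^s)⁻¹ * (V + V ^ (((m:ℝ) + αe - (s:ℝ)) / ((m:ℝ) + αe)) *
            Hold ^ ((s:ℝ) / ((m:ℝ) + αe)) * (b - a)^s) := by
            apply mul_le_mul_of_nonneg_left (by linarith) (by positivity)
    · -- case B : use the optimal h
      push_neg at hcase
      have hHoldpos : 0 < Hold := by
        rcases lt_or_ge 0 Hold with h | h
        · exact h
        · exfalso
          have : Hold * (h1^αe * h1^m) ≤ 0 := by
            apply mul_nonpos_of_nonpos_of_nonneg h
            exact mul_nonneg (Real.rpow_nonneg hh1pos.le _) (by positivity)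
          linarith
      set β : ℝ := (m:ℝ) + αe with hβdef
      have hβpos : 0 < β := by rw [hβdef]; linarith
      have hβne : β ≠ 0 := ne_of_gt hβpos
      set h0 : ℝ := (V/Hold)^(β⁻¹) with hh0def
      have hVH : 0 < V / Hold := div_pos hVpos hHoldpos
      have hh0pos : 0 < h0 := Real.rpow_pos_of_pos hVH _
      have hpow : h0^αe * h0^m = V / Hold := by
        rw [← Real.rpow_natCast h0 m, ← Real.rpow_add hh0pos]
        rw [show αe + (m:ℝ) = β by rw [hβdef]; ring]
        rw [hh0def]
        exact Real.rpow_inv_rpow hVH.le hβne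
      have hHoldh0 : Hold * (h0^αe * h0^m) = V := by
        rw [hpow]; field_simp
      have hh01 : h0 < h1 := by
        by_contra hle
        push_neg at hle
        have : Hold * (h1^αe * h1^m) ≤ Hold * (h0^αe * h0^m) := by
          apply mul_le_mul_of_nonneg_left _ hHold0
          exact mul_le_mul (Real.rpow_le_rpow hh1pos.le hle hα1.le)
            (pow_le_pow_left₀ hh1pos.le hle m)
            (by positivity) (Real.rpow_nonneg hh0pos.le _)
        rw [hHoldh0] at this
        linarith
      have hmh04 : (m:ℝ) * h0 < (b - a)/4 := by
        have := mul_lt_mul_of_pos_left hh01 hmpos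
        linarith [hmh14]
      have hw := wrap h0 hh0pos hmh04
      have hb2 : ‖d s t‖ * h0^s ≤ K1 * V := by
        calc ‖d s t‖ * h0^s ≤ K * (V + Hold * (((m:ℝ)*h0)^αe * ((m:ℝ)*h0)^m)) := hw
          _ ≤ K * (V + (m:ℝ)^(m+1) * (Hold * (h0^αe * h0^m))) := by
              apply mul_le_mul_of_nonneg_left _ hK.le
              exact add_le_add_right (hfac h0 hh0pos) _
          _ = K * (V + (m:ℝ)^(m+1) * V) := by rw [hHoldh0]
          _ = K1 * V := by rw [hK1]; ring
      have hdst : ‖d s t‖ ≤ K1 * (V / h0^s) := by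
        rw [← mul_div_assoc]
        exact (le_div_iff₀ (pow_pos hh0pos s)).2 hb2
      -- rewrite V / h0^s
      set q : ℝ := (s:ℝ)/β with hqdef
      have e1 : h0^s = (V/Hold)^q := by
        rw [← Real.rpow_natCast h0 s, hh0def, ← Real.rpow_mul hVH.le]
        congr 1
        rw [hqdef]; field_simp
      have e2 : (V/Hold)^q = V^q / Hold^q := Real.div_rpow hV0 hHold0 q
      have e3 : V / h0^s = V^(1-q) * Hold^q := by
        rw [e1, e2]
        rw [Real.rpow_sub hVpos, Real.rpow_one]
        have hVq : 0 < V^q := Real.rpow_pos_of_pos hVpos _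
        have hHq : 0 < Hold^q := Real.rpow_pos_of_pos hHoldpos _
        field_simp
      have e4 : (1 : ℝ) - q = ((m:ℝ) + αe - (s:ℝ)) / ((m:ℝ) + αe) := by
        rw [hqdef, hβdef]
        field_simp
      have e5 : V / h0^s = V ^ (((m:ℝ) + αe - (s:ℝ)) / ((m:ℝ) + αe)) *
          Hold ^ ((s:ℝ) / ((m:ℝ) + αe)) := by
        rw [e3, e4, hqdef, hβdef]
      rw [e5] at hdst
      have hfin : ‖d s t‖ ≤ C * (V ^ (((m:ℝ) + αe - (s:ℝ)) / ((m:ℝ) + αe)) *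
          Hold ^ ((s:ℝ) / ((m:ℝ) + αe))) := by
        calc ‖d s t‖ ≤ K1 * (V ^ (((m:ℝ) + αe - (s:ℝ)) / ((m:ℝ) + αe)) *
            Hold ^ ((s:ℝ) / ((m:ℝ) + αe))) := hdst
          _ ≤ C * (V ^ (((m:ℝ) + αe - (s:ℝ)) / ((m:ℝ) + αe)) *
            Hold ^ ((s:ℝ) / ((m:ℝ) + αe))) := by
              apply mul_le_mul_of_nonneg_right hK1C
              exact mul_nonneg (Real.rpow_nonneg hV0 _) (Real.rpow_nonneg hHold0 _)
      calc ‖d s t‖ ≤ C * (V ^ (((m:ℝ) + αe - (s:ℝ)) / ((m:ℝ) + αe)) *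
            Hold ^ ((s:ℝ) / ((m:ℝ) + αe))) := hfin
        _ = C * ((b - a)^s)⁻¹ * (V ^ (((m:ℝ) + αe - (s:ℝ)) / ((m:ℝ) + αe)) *
            Hold ^ ((s:ℝ) / ((m:ℝ) + αe)) * (b - a)^s) := by
            have : (0:ℝ) < (b-a)^s := pow_pos hba s
            field_simp
        _ ≤ C * ((b - a)^s)⁻¹ * (V + V ^ (((m:ℝ) + αe - (s:ℝ)) / ((m:ℝ) + αe)) *
            Hold ^ ((s:ℝ) / ((m:ℝ) + αe)) * (b - a)^s) := by
            apply mul_le_mul_of_nonneg_left (by linarith) (by positivity)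
end
end

section
/- Let m be a positive integer and α ∈ (0,1]. There exists a constant C depending only on m and α with the following property. Let t₀ ∈ ℝ, δ > 0, I = (t₀−δ, t₀+δ), and let f ∈ C^{m,α}(Ī, ℝ) be such that f does not change sign on I (f ≥ 0 on all of I, or f ≤ 0 on all of I) and f' does not change sign on I (f' ≥ 0 on all of I, or f' ≤ 0 on all of I). Then for all s = 1,…,m: |f^{(s)}(t₀)| ≤ C |I|^{-s} ( |f(t₀)| + |f(t₀)|^{(m+α−s)/(m+α)} · (Höld_{α,I}(f^{(m)}))^{s/(m+α)} · |I|^s ). -/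
open Set MeasureTheory Real

noncomputable section

open Finset Filter Topology

private lemma vand_solve (m s : ℕ) :
    ∃ a : Fin (m+1) → ℝ, ∀ k : Fin (m+1),
      ∑ j, a j * (j : ℝ) ^ (k : ℕ) = if (k : ℕ) = s then 1 else 0 := by
  classical
  set V : Matrix (Fin (m+1)) (Fin (m+1)) ℝ := Matrix.vandermonde (fun j => (j : ℝ)) with hV
  have hdet : IsUnit V.det := by
    refine (Matrix.det_vandermonde_ne_zero_iff.mpr ?_).isUnit
    intro i j hij
    have : ((i:ℕ):ℝ) = ((j:ℕ):ℝ) := hij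
    exact Fin.val_injective (Nat.cast_injective this)
  set b : Fin (m+1) → ℝ := fun k => if (k : ℕ) = s then 1 else 0 with hb
  refine ⟨Matrix.vecMul b V⁻¹, fun k => ?_⟩
  have : Matrix.vecMul (Matrix.vecMul b V⁻¹) V = b := by
    rw [Matrix.vecMul_vecMul, Matrix.nonsing_inv_mul V hdet, Matrix.vecMul_one]
  have hk := congrFun this k
  simpa [Matrix.vecMul, dotProduct, Matrix.vandermonde, hb, hV] using hk

private lemma taylor_bound (αe H : ℝ) (hα : 0 < αe) (hH0 : 0 ≤ H) :
    ∀ (m : ℕ) (d : ℕ → ℝ → ℝ) (S : Set ℝ), Convex ℝ S →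
    ∀ t₀ ∈ S, DerivChain d m S →
    (∀ u ∈ S, |d m u - d m t₀| ≤ H * |u - t₀| ^ αe) →
    ∀ t ∈ S, |d 0 t - ∑ i ∈ Finset.range (m+1), d i t₀ / i.factorial * (t - t₀)^i|
      ≤ H * |t - t₀| ^ αe * |t - t₀| ^ m := by
  intro m
  induction m with
  | zero =>
    intro d S hconv t₀ ht₀ hchain hH t ht
    simpa using hH t ht
  | succ m IH =>
    intro d S hconv t₀ ht₀ hchain hH t ht
    set P : ℝ → ℝ := fun u => ∑ i ∈ Finset.range (m+2), d i t₀ / i.factorial * (u - t₀)^i with hP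
    set Q : ℝ → ℝ := fun u => ∑ i ∈ Finset.range (m+1), d (i+1) t₀ / i.factorial * (u - t₀)^i with hQ
    set g : ℝ → ℝ := fun u => d 0 u - P u with hg
    have hderiv : ∀ u ∈ S, HasDerivWithinAt g (d 1 u - Q u) S u := by
      intro u hu
      have h0 : HasDerivWithinAt (d 0) (d 1 u) S u := hchain 0 (by omega) u hu
      have hPd : HasDerivAt P (Q u) u := by
        have hsum : HasDerivAt P
            (∑ i ∈ Finset.range (m+2), d i t₀ / i.factorial * ((i : ℝ) * (u - t₀)^(i-1))) u := by
          apply HasDerivAt.fun_sum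
          intro i _
          have h1 := (((hasDerivAt_id u).sub_const t₀).pow i).const_mul (d i t₀ / (i.factorial:ℝ))
          simpa using h1
        convert hsum using 1
        rw [Finset.sum_range_succ']
        simp only [Nat.cast_zero, zero_mul, mul_zero, add_zero, Nat.add_sub_cancel]
        refine Finset.sum_congr rfl ?_
        intro i _
        rw [Nat.factorial_succ]
        have h1 : ((i.factorial : ℝ)) ≠ 0 := by positivity
        have h2 : ((i:ℝ)+1) ≠ 0 := by positivity
        push_cast
        field_simp
      exact (h0.sub (hPd.hasDerivWithinAt))
    have hIH : ∀ u ∈ S, |d 1 u - Q u| ≤ H * |u - t₀| ^ αe * |u - t₀| ^ m := by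
      intro u hu
      have := IH (fun k => d (k+1)) S hconv t₀ ht₀
        (fun i hi x hx => hchain (i+1) (by omega) x hx)
        (fun x hx => hH x hx) u hu
      simpa [hQ] using this
    set J : Set ℝ := Set.uIcc t₀ t with hJ
    have hJS : J ⊆ S := (hconv.ordConnected).uIcc_subset ht₀ ht
    have habs : ∀ u ∈ J, |u - t₀| ≤ |t - t₀| := by
      intro u hu
      rcases le_total t₀ t with hc | hc
      · rw [hJ, Set.uIcc_of_le hc] at hu
        rw [abs_of_nonneg (by linarith [hu.1]), abs_of_nonneg (by linarith)]
        linarith [hu.2]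
      · rw [hJ, Set.uIcc_of_ge hc] at hu
        rw [abs_of_nonpos (by linarith [hu.2]), abs_of_nonpos (by linarith)]
        linarith [hu.1]
    have hbound : ∀ u ∈ J, ‖d 1 u - Q u‖ ≤ H * |t - t₀| ^ αe * |t - t₀| ^ m := by
      intro u hu
      refine le_trans (hIH u (hJS hu)) ?_
      have h1 : |u - t₀| ^ αe ≤ |t - t₀| ^ αe :=
        Real.rpow_le_rpow (abs_nonneg _) (habs u hu) hα.le
      have h2 : |u - t₀| ^ m ≤ |t - t₀| ^ m :=
        pow_le_pow_left₀ (abs_nonneg _) (habs u hu) m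
      calc H * |u - t₀| ^ αe * |u - t₀| ^ m ≤ H * |t - t₀| ^ αe * |u - t₀| ^ m := by
            apply mul_le_mul_of_nonneg_right (mul_le_mul_of_nonneg_left h1 hH0)
              (pow_nonneg (abs_nonneg _) m)
        _ ≤ H * |t - t₀| ^ αe * |t - t₀| ^ m := by
            apply mul_le_mul_of_nonneg_left h2
            have : (0:ℝ) ≤ |t - t₀| ^ αe := Real.rpow_nonneg (abs_nonneg _) _
            positivity
    have key := Convex.norm_image_sub_le_of_norm_hasDerivWithin_le
      (f := g) (f' := fun u => d 1 u - Q u)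
      (fun u hu => (hderiv u (hJS hu)).mono hJS) hbound
      (convex_uIcc t₀ t) (Set.left_mem_uIcc) (Set.right_mem_uIcc)
    have hgt₀ : g t₀ = 0 := by
      rw [hg]
      simp only [hP]
      rw [Finset.sum_eq_single 0]
      · simp
      · intro i _ hi; simp [zero_pow hi]
      · simp
    have hfin : ‖g t - g t₀‖ ≤ H * |t - t₀| ^ αe * |t - t₀| ^ m * ‖t - t₀‖ := key
    rw [hgt₀, sub_zero] at hfin
    calc |g t| ≤ H * |t - t₀| ^ αe * |t - t₀| ^ m * ‖t - t₀‖ := hfin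
      _ = H * |t - t₀| ^ αe * |t - t₀| ^ (m+1) := by
          rw [Real.norm_eq_abs]; ring

private lemma node_est (m s : ℕ) (hsm : s ≤ m) (αe : ℝ) (hα : 0 < αe)
    (a : Fin (m+1) → ℝ)
    (ha : ∀ k : Fin (m+1), ∑ j, a j * (j:ℝ)^(k:ℕ) = if (k:ℕ) = s then 1 else 0)
    (d : ℕ → ℝ → ℝ) (t₀ x : ℝ) (hx : x ≠ 0)
    (S : Set ℝ) (hconv : Convex ℝ S) (hmem : ∀ j : Fin (m+1), t₀ + (j:ℕ) * x ∈ S)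
    (hchain : DerivChain d m S)
    (H M : ℝ) (hH0 : 0 ≤ H)
    (hH : ∀ u ∈ S, |d m u - d m t₀| ≤ H * |u - t₀| ^ αe)
    (hM : ∀ j : Fin (m+1), |d 0 (t₀ + (j:ℕ) * x)| ≤ M) :
    |d s t₀| ≤ (s.factorial * ∑ j, |a j|) *
      (M + H * ((m:ℝ)*|x|) ^ αe * ((m:ℝ)*|x|) ^ m) * (|x| ^ s)⁻¹ := by
  have ht₀S : t₀ ∈ S := by simpa using hmem 0
  set P : ℝ → ℝ := fun u => ∑ i ∈ Finset.range (m+1), d i t₀ / i.factorial * (u - t₀)^i with hP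
  have hR : ∀ j : Fin (m+1), |d 0 (t₀ + (j:ℕ)*x) - P (t₀ + (j:ℕ)*x)|
      ≤ H * ((m:ℝ)*|x|) ^ αe * ((m:ℝ)*|x|) ^ m := by
    intro j
    have h1 := taylor_bound αe H hα hH0 m d S hconv t₀ ht₀S hchain hH _ (hmem j)
    have habs : |t₀ + (j:ℕ)*x - t₀| ≤ (m:ℝ)*|x| := by
      have hj : ((j:ℕ):ℝ) ≤ (m:ℝ) := by exact_mod_cast Nat.le_of_lt_succ j.isLt
      rw [add_sub_cancel_left, abs_mul, Nat.abs_cast]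
      exact mul_le_mul_of_nonneg_right hj (abs_nonneg x)
    refine h1.trans ?_
    have h2 : |t₀ + (j:ℕ)*x - t₀| ^ αe ≤ ((m:ℝ)*|x|) ^ αe :=
      Real.rpow_le_rpow (abs_nonneg _) habs hα.le
    have h3 : |t₀ + (j:ℕ)*x - t₀| ^ m ≤ ((m:ℝ)*|x|) ^ m :=
      pow_le_pow_left₀ (abs_nonneg _) habs m
    exact mul_le_mul (mul_le_mul_of_nonneg_left h2 hH0) h3
      (pow_nonneg (abs_nonneg _) m) (by positivity)
  have hkey : ∑ j, a j * P (t₀ + (j:ℕ)*x) = d s t₀ / s.factorial * x ^ s := by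
    have hswap : ∑ j, a j * P (t₀ + (j:ℕ)*x)
        = ∑ i ∈ Finset.range (m+1), (d i t₀ / i.factorial * x^i) * ∑ j : Fin (m+1), a j * (j:ℝ)^i := by
      rw [hP]
      simp only [add_sub_cancel_left, Finset.mul_sum]
      rw [Finset.sum_comm]
      refine Finset.sum_congr rfl (fun i _ => ?_)
      refine Finset.sum_congr rfl (fun j _ => ?_)
      rw [mul_pow]
      ring
    rw [hswap]
    have hite : ∀ i ∈ Finset.range (m+1),
        (d i t₀ / i.factorial * x^i) * (∑ j : Fin (m+1), a j * (j:ℝ)^i)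
        = if i = s then d i t₀ / i.factorial * x^i else 0 := by
      intro i hi
      have := ha ⟨i, Finset.mem_range.mp hi⟩
      simp only [Fin.val_mk] at this
      rw [this]
      split <;> simp
    rw [Finset.sum_congr rfl hite, Finset.sum_ite_eq' (Finset.range (m+1)) s
      (fun i => d i t₀ / i.factorial * x^i)]
    simp [Finset.mem_range.mpr (Nat.lt_succ_of_le hsm)]
  have hbound : |∑ j, a j * P (t₀ + (j:ℕ)*x)|
      ≤ (∑ j, |a j|) * (M + H * ((m:ℝ)*|x|) ^ αe * ((m:ℝ)*|x|) ^ m) := by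
    calc |∑ j, a j * P (t₀ + (j:ℕ)*x)| ≤ ∑ j, |a j * P (t₀ + (j:ℕ)*x)| :=
          Finset.abs_sum_le_sum_abs _ _
      _ ≤ ∑ j : Fin (m+1), |a j| * (M + H * ((m:ℝ)*|x|) ^ αe * ((m:ℝ)*|x|) ^ m) := by
          refine Finset.sum_le_sum (fun j _ => ?_)
          rw [abs_mul]
          refine mul_le_mul_of_nonneg_left ?_ (abs_nonneg _)
          have h2 : d 0 (t₀ + (j:ℕ)*x) - (d 0 (t₀ + (j:ℕ)*x) - P (t₀ + (j:ℕ)*x)) = P (t₀ + (j:ℕ)*x) := by ring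
          have h1 : |P (t₀ + (j:ℕ)*x)| ≤ |d 0 (t₀ + (j:ℕ)*x)| + |d 0 (t₀ + (j:ℕ)*x) - P (t₀ + (j:ℕ)*x)| := by
            calc |P (t₀ + (j:ℕ)*x)| = |d 0 (t₀ + (j:ℕ)*x) - (d 0 (t₀ + (j:ℕ)*x) - P (t₀ + (j:ℕ)*x))| := by rw [h2]
              _ ≤ |d 0 (t₀ + (j:ℕ)*x)| + |d 0 (t₀ + (j:ℕ)*x) - P (t₀ + (j:ℕ)*x)| := abs_sub _ _
          exact h1.trans (add_le_add (hM j) (hR j))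
      _ = (∑ j, |a j|) * (M + H * ((m:ℝ)*|x|) ^ αe * ((m:ℝ)*|x|) ^ m) := by
          rw [← Finset.sum_mul]
  have hfac : (s.factorial : ℝ) ≠ 0 := by positivity
  have hds : |d s t₀| = s.factorial * |∑ j, a j * P (t₀ + (j:ℕ)*x)| * (|x|^s)⁻¹ := by
    rw [hkey, abs_mul, abs_div, abs_pow, Nat.abs_cast]
    have hxs : (|x|:ℝ)^s ≠ 0 := pow_ne_zero _ (abs_ne_zero.mpr hx)
    field_simp
  rw [hds]
  have hxsinv : (0:ℝ) ≤ (|x|^s)⁻¹ := by positivity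
  refine mul_le_mul_of_nonneg_right ?_ hxsinv
  rw [mul_assoc]
  exact mul_le_mul_of_nonneg_left hbound (by positivity)

private lemma sign_half (t₀ δ : ℝ) (hδ : 0 < δ) (d : ℕ → ℝ → ℝ) (m : ℕ) (hm : 1 ≤ m)
    (hchain : DerivChain d m (Icc (t₀-δ) (t₀+δ)))
    (hf : (∀ t ∈ Ioo (t₀-δ) (t₀+δ), 0 ≤ d 0 t) ∨ (∀ t ∈ Ioo (t₀-δ) (t₀+δ), d 0 t ≤ 0))
    (hf' : (∀ t ∈ Ioo (t₀-δ) (t₀+δ), 0 ≤ d 1 t) ∨ (∀ t ∈ Ioo (t₀-δ) (t₀+δ), d 1 t ≤ 0)) :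
    ∃ σ : ℝ, (σ = 1 ∨ σ = -1) ∧ ∀ h ∈ Icc (0:ℝ) (δ/2), |d 0 (t₀ + σ * h)| ≤ |d 0 t₀| := by
  have hco : ContinuousOn (d 0) (Icc (t₀-δ) (t₀+δ)) :=
    fun x hx => (hchain 0 hm x hx).continuousWithinAt
  have hint : interior (Icc (t₀-δ) (t₀+δ)) = Ioo (t₀-δ) (t₀+δ) := interior_Icc
  have hda : ∀ x ∈ Ioo (t₀-δ) (t₀+δ), HasDerivAt (d 0) (d 1 x) x := by
    intro x hx
    exact (hchain 0 hm x (Ioo_subset_Icc_self hx)).hasDerivAt (Icc_mem_nhds hx.1 hx.2)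
  have hdiff : DifferentiableOn ℝ (d 0) (interior (Icc (t₀-δ) (t₀+δ))) := by
    rw [hint]; exact fun x hx => ((hda x hx).differentiableAt).differentiableWithinAt
  have hderiv : ∀ x ∈ Ioo (t₀-δ) (t₀+δ), deriv (d 0) x = d 1 x :=
    fun x hx => (hda x hx).deriv
  have ht₀ : t₀ ∈ Icc (t₀-δ) (t₀+δ) := by constructor <;> linarith
  have ht₀o : t₀ ∈ Ioo (t₀-δ) (t₀+δ) := by constructor <;> linarith
  have hmemL : ∀ h ∈ Icc (0:ℝ) (δ/2), t₀ - h ∈ Icc (t₀-δ) (t₀+δ) ∧ t₀ - h ∈ Ioo (t₀-δ) (t₀+δ) := by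
    intro h hh; obtain ⟨h1, h2⟩ := hh
    exact ⟨⟨by linarith, by linarith⟩, ⟨by linarith, by linarith⟩⟩
  have hmemR : ∀ h ∈ Icc (0:ℝ) (δ/2), t₀ + h ∈ Icc (t₀-δ) (t₀+δ) ∧ t₀ + h ∈ Ioo (t₀-δ) (t₀+δ) := by
    intro h hh; obtain ⟨h1, h2⟩ := hh
    exact ⟨⟨by linarith, by linarith⟩, ⟨by linarith, by linarith⟩⟩
  rcases hf' with hup | hdn
  · have hmono : MonotoneOn (d 0) (Icc (t₀-δ) (t₀+δ)) := by
      apply monotoneOn_of_deriv_nonneg (convex_Icc _ _) hco hdiff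
      intro x hx; rw [hint] at hx; rw [hderiv x hx]; exact hup x hx
    rcases hf with hpos | hneg
    · refine ⟨-1, Or.inr rfl, fun h hh => ?_⟩
      have hm1 := hmemL h hh
      have h1 : d 0 (t₀ - h) ≤ d 0 t₀ := hmono hm1.1 ht₀ (by linarith [hh.1])
      have h2 : 0 ≤ d 0 (t₀ - h) := hpos _ hm1.2
      have h3 : (0:ℝ) ≤ d 0 t₀ := hpos _ ht₀o
      rw [show t₀ + -1 * h = t₀ - h by ring, abs_of_nonneg h2, abs_of_nonneg h3]
      exact h1
    · refine ⟨1, Or.inl rfl, fun h hh => ?_⟩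
      have hm1 := hmemR h hh
      have h1 : d 0 t₀ ≤ d 0 (t₀ + h) := hmono ht₀ hm1.1 (by linarith [hh.1])
      have h2 : d 0 (t₀ + h) ≤ 0 := hneg _ hm1.2
      have h3 : d 0 t₀ ≤ 0 := hneg _ ht₀o
      rw [show t₀ + 1 * h = t₀ + h by ring, abs_of_nonpos h2, abs_of_nonpos h3]
      linarith
  · have hmono : AntitoneOn (d 0) (Icc (t₀-δ) (t₀+δ)) := by
      apply antitoneOn_of_deriv_nonpos (convex_Icc _ _) hco hdiff
      intro x hx; rw [hint] at hx; rw [hderiv x hx]; exact hdn x hx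
    rcases hf with hpos | hneg
    · refine ⟨1, Or.inl rfl, fun h hh => ?_⟩
      have hm1 := hmemR h hh
      have h1 : d 0 (t₀ + h) ≤ d 0 t₀ := hmono ht₀ hm1.1 (by linarith [hh.1])
      have h2 : 0 ≤ d 0 (t₀ + h) := hpos _ hm1.2
      have h3 : (0:ℝ) ≤ d 0 t₀ := hpos _ ht₀o
      rw [show t₀ + 1 * h = t₀ + h by ring, abs_of_nonneg h2, abs_of_nonneg h3]
      exact h1
    · refine ⟨-1, Or.inr rfl, fun h hh => ?_⟩
      have hm1 := hmemL h hh
      have h1 : d 0 t₀ ≤ d 0 (t₀ - h) := hmono hm1.1 ht₀ (by linarith [hh.1])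
      have h2 : d 0 (t₀ - h) ≤ 0 := hneg _ hm1.2
      have h3 : d 0 t₀ ≤ 0 := hneg _ ht₀o
      rw [show t₀ + -1 * h = t₀ - h by ring, abs_of_nonpos h2, abs_of_nonpos h3]
      linarith

private lemma optimize (K M H₀ h₀ D : ℝ) (hK : 0 ≤ K) (hM : 0 ≤ M) (hH₀ : 0 ≤ H₀)
    (hh₀ : 0 < h₀) (s m : ℕ) (hs : 1 ≤ s) (hsm : s ≤ m) (αe : ℝ) (hα : 0 < αe)
    (est : ∀ h : ℝ, 0 < h → h ≤ h₀ → |D| ≤ K * (M + H₀ * (h ^ αe * h ^ m)) * ((h ^ s)⁻¹)) :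
    |D| ≤ 2 * K * (M * (h₀ ^ s)⁻¹ +
      M ^ (((m:ℝ) + αe - s) / ((m:ℝ) + αe)) * H₀ ^ ((s:ℝ) / ((m:ℝ) + αe))) := by
  set p : ℝ := (m:ℝ) + αe with hp
  have hppos : 0 < p := by positivity
  have hsp : (s:ℝ) < p := by
    have : (s:ℝ) ≤ (m:ℝ) := by exact_mod_cast hsm
    simp only [hp]; linarith
  have hpow_eq : ∀ h : ℝ, 0 < h → h ^ αe * h ^ m = h ^ p := by
    intro h hh
    rw [← Real.rpow_natCast h m, ← Real.rpow_add hh, hp, add_comm]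
  have hsecond_nonneg : (0:ℝ) ≤ M ^ ((p - s) / p) * H₀ ^ ((s:ℝ) / p) := by
    have := Real.rpow_nonneg hM ((p - s)/p)
    have := Real.rpow_nonneg hH₀ ((s:ℝ)/p)
    positivity
  by_cases hcase : H₀ * (h₀ ^ αe * h₀ ^ m) ≤ M
  · have h1 := est h₀ hh₀ le_rfl
    have h2 : K * (M + H₀ * (h₀ ^ αe * h₀ ^ m)) * (h₀ ^ s)⁻¹ ≤ K * (2*M) * (h₀ ^ s)⁻¹ := by
      apply mul_le_mul_of_nonneg_right _ (by positivity)
      apply mul_le_mul_of_nonneg_left _ hK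
      linarith
    calc |D| ≤ K * (2*M) * (h₀ ^ s)⁻¹ := h1.trans h2
      _ = 2 * K * (M * (h₀ ^ s)⁻¹) := by ring
      _ ≤ _ := by nlinarith [hsecond_nonneg, hK]
  · push_neg at hcase
    have hH₀pos : 0 < H₀ := by
      by_contra hcon
      push_neg at hcon
      have : H₀ = 0 := le_antisymm hcon hH₀
      rw [this, zero_mul] at hcase
      linarith
    rcases eq_or_lt_of_le hM with hM0 | hMpos
    · have hDle : |D| ≤ 0 := by
        have hev : ∀ᶠ h in 𝓝[>] (0:ℝ), |D| ≤ K * H₀ * h ^ (p - s) := by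
          filter_upwards [Ioc_mem_nhdsGT_of_mem ⟨le_refl (0:ℝ), hh₀⟩] with h hh
          have h1 := est h hh.1 hh.2
          rw [← hM0, zero_add, hpow_eq h hh.1] at h1
          have h2 : K * (H₀ * h ^ p) * (h ^ s)⁻¹ = K * H₀ * h ^ (p - s) := by
            rw [← Real.rpow_natCast h s, Real.rpow_sub hh.1]
            rw [div_eq_mul_inv]
            ring
          rw [h2] at h1; exact h1
        have htend : Tendsto (fun h : ℝ => K * H₀ * h ^ (p - s)) (𝓝[>] (0:ℝ)) (𝓝 0) := by
          have hc : ContinuousAt (fun h : ℝ => h ^ (p - s)) 0 :=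
            Real.continuousAt_rpow_const 0 (p - s) (Or.inr (by linarith))
          have h4 := (hc.tendsto).mono_left (nhdsWithin_le_nhds (s := Ioi (0:ℝ)))
          rw [Real.zero_rpow (by linarith : (0:ℝ) < p - s).ne'] at h4
          simpa using (h4.const_mul (K * H₀))
        exact ge_of_tendsto htend hev
      have hD0 : |D| = 0 := le_antisymm hDle (abs_nonneg _)
      rw [hD0]
      have : (0:ℝ) ≤ M * (h₀ ^ s)⁻¹ := by positivity
      nlinarith [hsecond_nonneg, hK]
    · set h : ℝ := (M / H₀) ^ (1/p) with hh
      have hdiv : 0 < M / H₀ := div_pos hMpos hH₀pos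
      have hhpos : 0 < h := Real.rpow_pos_of_pos hdiv _
      have hhp : h ^ p = M / H₀ := by
        rw [hh, ← Real.rpow_mul hdiv.le, one_div,
          inv_mul_cancel₀ hppos.ne', Real.rpow_one]
      have hhle : h ≤ h₀ := by
        have h1 : h ^ p < h₀ ^ p := by
          rw [hhp, ← hpow_eq h₀ hh₀, div_lt_iff₀ hH₀pos]
          linarith
        by_contra hcon
        push_neg at hcon
        have := Real.rpow_le_rpow hh₀.le hcon.le hppos.le
        linarith
      have h1 := est h hhpos hhle
      rw [hpow_eq h hhpos, hhp, mul_div_cancel₀ M hH₀pos.ne'] at h1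
      have hs1 : h ^ s = M ^ ((s:ℝ)/p) * (H₀ ^ ((s:ℝ)/p))⁻¹ := by
        rw [← Real.rpow_natCast h s, hh, ← Real.rpow_mul hdiv.le,
          show (1/p) * (s:ℝ) = (s:ℝ)/p by ring,
          Real.div_rpow hMpos.le hH₀pos.le, div_eq_mul_inv]
      have h3 : M * (h ^ s)⁻¹ = M ^ ((p - s)/p) * H₀ ^ ((s:ℝ)/p) := by
        rw [hs1, show ((p - (s:ℝ))/p) = 1 - (s:ℝ)/p by field_simp,
          Real.rpow_sub hMpos, Real.rpow_one, mul_inv, inv_inv, div_eq_mul_inv]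
        ring
      calc |D| ≤ K * (M + M) * (h ^ s)⁻¹ := h1
        _ = 2 * K * (M * (h ^ s)⁻¹) := by ring
        _ = 2 * K * (M ^ ((p - s)/p) * H₀ ^ ((s:ℝ)/p)) := by rw [h3]
        _ ≤ _ := by
            apply mul_le_mul_of_nonneg_left _ (by linarith : (0:ℝ) ≤ 2*K)
            have : (0:ℝ) ≤ M * (h₀ ^ s)⁻¹ := by positivity
            linarith


set_option maxHeartbeats 1000000

/-- **higher order Glaeser inequalities.** If `f ∈ C^{m,α}(Ī,ℝ)` on
`I = (t₀-δ, t₀+δ)` and `f` and `f'` do not change sign on `I`, then for `1 ≤ s ≤ m`: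
`|f^{(s)}(t₀)| ≤ C |I|^{-s} (|f(t₀)| + |f(t₀)|^{(m+α-s)/(m+α)} Höld_{α,I}(f^{(m)})^{s/(m+α)} |I|^s)`
with `C = C(m,α)`. -/
theorem glaeser_higher_order (m : ℕ) (hm : 1 ≤ m) (αe : ℝ) (hα1 : 0 < αe) (hα2 : αe ≤ 1) :
    ∃ C : ℝ, 0 < C ∧
      ∀ (t₀ δ : ℝ), 0 < δ →
      ∀ d : ℕ → ℝ → ℝ,
      DerivChain d m (Icc (t₀ - δ) (t₀ + δ)) →
      (∃ H : ℝ, ∀ x ∈ Ioo (t₀ - δ) (t₀ + δ), ∀ y ∈ Ioo (t₀ - δ) (t₀ + δ),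
        |d m x - d m y| ≤ H * |x - y| ^ αe) →
      ((∀ t ∈ Ioo (t₀ - δ) (t₀ + δ), 0 ≤ d 0 t) ∨
        (∀ t ∈ Ioo (t₀ - δ) (t₀ + δ), d 0 t ≤ 0)) →
      ((∀ t ∈ Ioo (t₀ - δ) (t₀ + δ), 0 ≤ d 1 t) ∨
        (∀ t ∈ Ioo (t₀ - δ) (t₀ + δ), d 1 t ≤ 0)) →
      ∀ s : ℕ, 1 ≤ s → s ≤ m →
        |d s t₀| ≤ C * ((2 * δ) ^ s)⁻¹ *
          (|d 0 t₀| +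
            |d 0 t₀| ^ (((m : ℝ) + αe - (s : ℝ)) / ((m : ℝ) + αe)) *
            (HolderConst αe (Ioo (t₀ - δ) (t₀ + δ)) (d m)) ^ ((s : ℝ) / ((m : ℝ) + αe)) *
            (2 * δ) ^ s) := by
  classical
  choose a ha using fun s : ℕ => vand_solve m s
  set K : ℕ → ℝ := fun s => (s.factorial * ∑ j, |a s j|) * ((m:ℝ)^(m+1) + 1) with hKdef
  have hKnonneg : ∀ s, 0 ≤ K s := by
    intro s
    apply mul_nonneg (mul_nonneg (by positivity) (Finset.sum_nonneg (fun j _ => abs_nonneg _)))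
    positivity
  set C : ℝ := ∑ i ∈ Finset.range (m+1), (2 * K i * (4*(m:ℝ))^m + 1) with hCdef
  have hmpos : (0:ℝ) < m := by exact_mod_cast hm
  have hCterm : ∀ i, (0:ℝ) < 2 * K i * (4*(m:ℝ))^m + 1 := by
    intro i
    have := hKnonneg i
    positivity
  have hCge : ∀ s ≤ m, 2 * K s * (4*(m:ℝ))^m + 1 ≤ C := by
    intro s hs
    rw [hCdef]
    apply Finset.single_le_sum (f := fun i => 2 * K i * (4*(m:ℝ))^m + 1)
      (fun i _ => (hCterm i).le) (Finset.mem_range.mpr (Nat.lt_succ_of_le hs))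
  have hCpos : 0 < C := by
    rw [hCdef]
    apply Finset.sum_pos (fun i _ => hCterm i) ⟨0, Finset.mem_range.mpr (by omega)⟩
  refine ⟨C, hCpos, ?_⟩
  intro t₀ δ hδ d hchain hHex hf hf' s hs1 hsm
  obtain ⟨H, hH⟩ := hHex
  have ht₀o : t₀ ∈ Ioo (t₀-δ) (t₀+δ) := by constructor <;> linarith
  have hx₂o : t₀ + δ/2 ∈ Ioo (t₀-δ) (t₀+δ) := by constructor <;> linarith
  set R : Set ℝ := {r : ℝ | ∃ x ∈ Ioo (t₀-δ) (t₀+δ), ∃ y ∈ Ioo (t₀-δ) (t₀+δ),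
    x ≠ y ∧ r = |d m x - d m y| / |x - y| ^ αe} with hRdef
  have hH₀eq : HolderConst αe (Ioo (t₀-δ) (t₀+δ)) (d m) = sSup R := rfl
  set H₀ : ℝ := sSup R with hH₀def
  have hbdd : BddAbove R := by
    refine ⟨H, fun r hr => ?_⟩
    obtain ⟨x, hx, y, hy, hxy, rfl⟩ := hr
    have hpos : (0:ℝ) < |x - y| ^ αe :=
      Real.rpow_pos_of_pos (abs_pos.mpr (sub_ne_zero.mpr hxy)) _
    rw [div_le_iff₀ hpos]
    exact hH x hx y hy
  have hH₀nonneg : 0 ≤ H₀ := by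
    have hmem : |d m t₀ - d m (t₀ + δ/2)| / |t₀ - (t₀ + δ/2)| ^ αe ∈ R :=
      ⟨t₀, ht₀o, t₀ + δ/2, hx₂o, by intro hcon; nlinarith [congrArg (· - t₀) hcon], rfl⟩
    have h1 := le_csSup hbdd hmem
    have h2 : (0:ℝ) ≤ |d m t₀ - d m (t₀ + δ/2)| / |t₀ - (t₀ + δ/2)| ^ αe :=
      div_nonneg (abs_nonneg _) (Real.rpow_nonneg (abs_nonneg _) _)
    linarith
  have hHol : ∀ x ∈ Ioo (t₀-δ) (t₀+δ), ∀ y ∈ Ioo (t₀-δ) (t₀+δ),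
      |d m x - d m y| ≤ H₀ * |x - y| ^ αe := by
    intro x hx y hy
    by_cases hxy : x = y
    · subst hxy
      simp [Real.zero_rpow hα1.ne']
    · have hpos : (0:ℝ) < |x - y| ^ αe :=
        Real.rpow_pos_of_pos (abs_pos.mpr (sub_ne_zero.mpr hxy)) _
      have hmem : |d m x - d m y| / |x - y| ^ αe ∈ R := ⟨x, hx, y, hy, hxy, rfl⟩
      have h1 := le_csSup hbdd hmem
      rw [div_le_iff₀ hpos] at h1
      linarith [h1]
  set M : ℝ := |d 0 t₀| with hMdef
  have hM0 : 0 ≤ M := abs_nonneg _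
  obtain ⟨σ, hσ, hMb⟩ := sign_half t₀ δ hδ d m hm hchain hf hf'
  -- the key estimate for every small h
  have est : ∀ h : ℝ, 0 < h → h ≤ δ/(2*m) →
      |d s t₀| ≤ K s * (M + H₀ * (h ^ αe * h ^ m)) * ((h ^ s)⁻¹) := by
    intro h hh hhle
    have hmh : (m:ℝ) * h ≤ δ/2 := by
      rw [le_div_iff₀ (by positivity : (0:ℝ) < 2*(m:ℝ))] at hhle
      have h99 : (m:ℝ)*h*2 = h*(2*(m:ℝ)) := by ring
      linarith
    -- the half interval
    have hSsub : ∀ u : ℝ, u ∈ Set.uIcc t₀ (t₀ + σ * (δ/2)) → u ∈ Ioo (t₀-δ) (t₀+δ) := by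
      intro u hu
      rcases hσ with rfl | rfl
      · rw [Set.uIcc_of_le (by linarith)] at hu
        exact ⟨by linarith [hu.1], by linarith [hu.2]⟩
      · rw [Set.uIcc_of_ge (by linarith)] at hu
        exact ⟨by linarith [hu.1], by linarith [hu.2]⟩
    set S : Set ℝ := Set.uIcc t₀ (t₀ + σ * (δ/2)) with hSdef
    have hSIcc : S ⊆ Icc (t₀-δ) (t₀+δ) := fun u hu => Ioo_subset_Icc_self (hSsub u hu)
    have hmem : ∀ j : Fin (m+1), t₀ + (j:ℕ) * (σ * h) ∈ S := by
      intro j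
      have hj : ((j:ℕ):ℝ) ≤ (m:ℝ) := by exact_mod_cast Nat.le_of_lt_succ j.isLt
      have hjh1 : (0:ℝ) ≤ (j:ℕ) * h := by positivity
      have hjh2 : ((j:ℕ):ℝ) * h ≤ δ/2 := by
        calc ((j:ℕ):ℝ) * h ≤ (m:ℝ) * h := mul_le_mul_of_nonneg_right hj hh.le
          _ ≤ δ/2 := hmh
      rcases hσ with rfl | rfl
      · rw [hSdef, Set.uIcc_of_le (by linarith)]
        constructor
        · simp only [one_mul]; linarith
        · simp only [one_mul]; linarith
      · rw [hSdef, Set.uIcc_of_ge (by linarith)]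
        constructor
        · have : t₀ + (j:ℕ) * (-1 * h) = t₀ - (j:ℕ)*h := by ring
          rw [this]; linarith
        · have : t₀ + (j:ℕ) * (-1 * h) = t₀ - (j:ℕ)*h := by ring
          rw [this]; linarith
    have hchainS : DerivChain d m S := by
      intro i hi x hx
      exact (hchain i hi x (hSIcc hx)).mono hSIcc
    have hHS : ∀ u ∈ S, |d m u - d m t₀| ≤ H₀ * |u - t₀| ^ αe :=
      fun u hu => hHol u (hSsub u hu) t₀ ht₀o
    have hMS : ∀ j : Fin (m+1), |d 0 (t₀ + (j:ℕ) * (σ * h))| ≤ M := by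
      intro j
      have hj : ((j:ℕ):ℝ) ≤ (m:ℝ) := by exact_mod_cast Nat.le_of_lt_succ j.isLt
      have hjh1 : (0:ℝ) ≤ (j:ℕ) * h := by positivity
      have hjh2 : ((j:ℕ):ℝ) * h ≤ δ/2 := by
        calc ((j:ℕ):ℝ) * h ≤ (m:ℝ) * h := mul_le_mul_of_nonneg_right hj hh.le
          _ ≤ δ/2 := hmh
      have := hMb ((j:ℕ) * h) ⟨hjh1, hjh2⟩
      have heq : t₀ + (j:ℕ) * (σ * h) = t₀ + σ * ((j:ℕ) * h) := by ring
      rw [heq]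
      exact this
    have hxne : σ * h ≠ 0 := by
      rcases hσ with rfl | rfl <;> simp [hh.ne']
    have hxabs : |σ * h| = h := by
      rcases hσ with rfl | rfl <;> simp [abs_of_pos hh]
    have hnode := node_est m s hsm αe hα1 (a s) (ha s) d t₀ (σ * h) hxne S
      (convex_uIcc _ _) hmem hchainS H₀ M hH₀nonneg hHS hMS
    rw [hxabs] at hnode
    refine hnode.trans ?_
    apply mul_le_mul_of_nonneg_right _ (by positivity)
    -- massage the constant
    have hmul1 : ((m:ℝ)*h) ^ αe = (m:ℝ)^αe * h^αe := Real.mul_rpow hmpos.le hh.le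
    have hmul2 : ((m:ℝ)*h) ^ m = (m:ℝ)^m * h^m := mul_pow _ _ _
    have hmα : (m:ℝ)^αe ≤ (m:ℝ) := by
      have h1 : (m:ℝ)^αe ≤ (m:ℝ)^(1:ℝ) :=
        Real.rpow_le_rpow_of_exponent_le (by exact_mod_cast hm) hα2
      rwa [Real.rpow_one] at h1
    have hstep : H₀ * ((m:ℝ)*h) ^ αe * ((m:ℝ)*h) ^ m ≤ H₀ * (m:ℝ)^(m+1) * (h^αe * h^m) := by
      rw [hmul1, hmul2]
      have h1 : (m:ℝ)^αe * h^αe * ((m:ℝ)^m * h^m) = ((m:ℝ)^αe * (m:ℝ)^m) * (h^αe * h^m) := by ring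
      have h2 : (m:ℝ)^αe * (m:ℝ)^m ≤ (m:ℝ)^(m+1) := by
        rw [pow_succ]
        calc (m:ℝ)^αe * (m:ℝ)^m ≤ (m:ℝ) * (m:ℝ)^m :=
              mul_le_mul_of_nonneg_right hmα (by positivity)
          _ = (m:ℝ)^m * (m:ℝ) := by ring
      have hXnn : (0:ℝ) ≤ h^αe * h^m := by
        have := Real.rpow_nonneg hh.le αe
        positivity
      calc H₀ * ((m:ℝ)^αe * h^αe) * ((m:ℝ)^m * h^m)
          = H₀ * (((m:ℝ)^αe * (m:ℝ)^m) * (h^αe * h^m)) := by ring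
        _ ≤ H₀ * ((m:ℝ)^(m+1) * (h^αe * h^m)) := by
            apply mul_le_mul_of_nonneg_left _ hH₀nonneg
            exact mul_le_mul_of_nonneg_right h2 hXnn
        _ = H₀ * (m:ℝ)^(m+1) * (h^αe * h^m) := by ring
    have hB : (0:ℝ) ≤ (s.factorial * ∑ j, |a s j|) :=
      mul_nonneg (by positivity) (Finset.sum_nonneg (fun j _ => abs_nonneg _))
    have hXnn : (0:ℝ) ≤ h^αe * h^m := by
      have := Real.rpow_nonneg hh.le αe
      positivity
    have hH₀X : (0:ℝ) ≤ H₀ * (h^αe * h^m) := mul_nonneg hH₀nonneg hXnn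
    rw [hKdef]
    calc (s.factorial * ∑ j, |a s j|) * (M + H₀ * ((m:ℝ)*h) ^ αe * ((m:ℝ)*h) ^ m)
        ≤ (s.factorial * ∑ j, |a s j|) * (M + H₀ * (m:ℝ)^(m+1) * (h^αe * h^m)) := by
          apply mul_le_mul_of_nonneg_left _ hB
          linarith [hstep]
      _ ≤ (s.factorial * ∑ j, |a s j|) * (((m:ℝ)^(m+1) + 1) * (M + H₀ * (h^αe * h^m))) := by
          apply mul_le_mul_of_nonneg_left _ hB
          have hmp : (0:ℝ) ≤ (m:ℝ)^(m+1) := by positivity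
          nlinarith [hH₀X, hM0, hmp]
      _ = (s.factorial * ∑ j, |a s j|) * ((m:ℝ)^(m+1) + 1) * (M + H₀ * (h^αe * h^m)) := by
          ring
  -- optimize over h
  have hh₀pos : 0 < δ/(2*m) := by positivity
  have hopt := optimize (K s) M H₀ (δ/(2*m)) (d s t₀) (hKnonneg s) hM0 hH₀nonneg
    hh₀pos s m hs1 hsm αe hα1 est
  -- final comparison
  rw [hH₀eq]
  have h2δ : (0:ℝ) < 2*δ := by linarith
  have hm1 : (1:ℝ) ≤ (m:ℝ) := by exact_mod_cast hm
  have hinv : ((δ/(2*m)) ^ s)⁻¹ = (4*(m:ℝ))^s * ((2*δ)^s)⁻¹ := by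
    rw [div_pow, mul_pow, mul_pow]
    have hδs : (0:ℝ) < δ^s := by positivity
    have hms : (0:ℝ) < (m:ℝ)^s := by positivity
    field_simp
    rw [show (4:ℝ) = 2^2 by norm_num, ← pow_mul]
    ring
  rw [hinv] at hopt
  have hsnd : (0:ℝ) ≤ M ^ (((m:ℝ) + αe - s) / ((m:ℝ) + αe)) * H₀ ^ ((s:ℝ) / ((m:ℝ) + αe)) := by
    have := Real.rpow_nonneg hM0 (((m:ℝ) + αe - s) / ((m:ℝ) + αe))
    have := Real.rpow_nonneg hH₀nonneg ((s:ℝ) / ((m:ℝ) + αe))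
    positivity
  have hfm : (4*(m:ℝ))^s ≤ (4*(m:ℝ))^m :=
    pow_le_pow_right₀ (by linarith : (1:ℝ) ≤ 4*(m:ℝ)) hsm
  have hC1 : 2 * K s * (4*(m:ℝ))^s ≤ C := by
    have h1 : 2 * K s * (4*(m:ℝ))^s ≤ 2 * K s * (4*(m:ℝ))^m :=
      mul_le_mul_of_nonneg_left hfm (by linarith [hKnonneg s])
    linarith [hCge s hsm]
  have hC2 : 2 * K s ≤ C := by
    have h1 : (1:ℝ) ≤ (4*(m:ℝ))^m := one_le_pow₀ (by linarith)
    nlinarith [hCge s hsm, hKnonneg s]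
  have hinv2 : (0:ℝ) ≤ ((2*δ)^s)⁻¹ := by positivity
  calc |d s t₀| ≤ 2 * K s * (M * ((4*(m:ℝ))^s * ((2*δ)^s)⁻¹) +
        M ^ (((m:ℝ) + αe - s) / ((m:ℝ) + αe)) * H₀ ^ ((s:ℝ) / ((m:ℝ) + αe))) := hopt
    _ = (2 * K s * (4*(m:ℝ))^s) * (((2*δ)^s)⁻¹ * M) +
        (2 * K s) * (M ^ (((m:ℝ) + αe - s) / ((m:ℝ) + αe)) * H₀ ^ ((s:ℝ) / ((m:ℝ) + αe))) := by
        ring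
    _ ≤ C * (((2*δ)^s)⁻¹ * M) +
        C * (M ^ (((m:ℝ) + αe - s) / ((m:ℝ) + αe)) * H₀ ^ ((s:ℝ) / ((m:ℝ) + αe))) := by
        apply add_le_add
        · exact mul_le_mul_of_nonneg_right hC1 (by positivity)
        · exact mul_le_mul_of_nonneg_right hC2 hsnd
    _ = C * ((2*δ)^s)⁻¹ * (M + M ^ (((m:ℝ) + αe - s) / ((m:ℝ) + αe)) *
          H₀ ^ ((s:ℝ) / ((m:ℝ) + αe)) * (2*δ)^s) := by
        have hne : ((2*δ)^s) ≠ 0 := by positivity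
        field_simp
end
end

section
/- Let n ≥ 2 be an integer and I ⊆ ℝ a bounded open interval. For j = 2,…,n let ã_j : I → ℂ be continuous and let r_j : I → ℂ be absolutely continuous with r_j(t)^j = ã_j(t) for all t ∈ I. Let t₀ ∈ I and k ∈ {2,…,n} be such that |ã_k(t₀)|^{1/k} = max_{2≤j≤n} |ã_j(t₀)|^{1/j} ≠ 0, and let 0 < B < 1/3 be such that Σ_{j=2}^n ∫_I |r_j'(s)| ds ≤ B |ã_k(t₀)|^{1/k}. Then for every t ∈ I and every j = 2,…,n: (i) |r_j(t) − r_j(t₀)| ≤ B |ã_k(t₀)|^{1/k}; (ii) 2/3 < 1−B ≤ |ã_k(t)/ã_k(t₀)|^{1/k} ≤ 1+B < 4/3 (in particular ã_k does not vanish on I); (iii) |ã_j(t)|^{1/j} ≤ (4/3)|ã_k(t₀)|^{1/k} ≤ 2|ã_k(t)|^{1/k}. -/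
open Set MeasureTheory Real Filter Topology
open scoped ENNReal NNReal

noncomputable section

variable {f : ℝ → ℂ} {a b : ℝ}

lemma disjoint_Ioo_of_le {p q p' q' : ℝ} (h : q ≤ p') : Disjoint (Ioo p q) (Ioo p' q') := by
  rw [Set.disjoint_left]
  rintro t ⟨_, h2⟩ ⟨h3, _⟩
  exact absurd (h2.trans_le h) (not_lt.2 h3.le)

lemma acon_evar_small (hf : AbsContOn f (Ioo a b)) {ε : ℝ} (hε : 0 < ε) :
    ∃ δ : ℝ, 0 < δ ∧ ∀ x y : ℝ, Icc x y ⊆ Ioo a b → y - x < δ →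
      eVariationOn f (Icc x y) ≤ ENNReal.ofReal ε := by
  obtain ⟨δ, hδ, H⟩ := hf ε hε
  refine ⟨δ, hδ, fun x y hsub hlen => ?_⟩
  rcases le_or_gt x y with hxy | hxy
  · apply iSup_le
    rintro ⟨n, u, hu, us⟩
    have huv : ∀ i : Fin n, u i.val ≤ u (i.val + 1) ∧
        Icc (u i.val) (u (i.val + 1)) ⊆ Ioo a b := fun i =>
      ⟨hu (Nat.le_succ _), fun t ht =>
        hsub ⟨(us i.val).1.trans ht.1, ht.2.trans (us (i.val+1)).2⟩⟩
    have hdisj : ∀ i j : Fin n, i ≠ j →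
        Disjoint (Ioo (u i.val) (u (i.val+1))) (Ioo (u j.val) (u (j.val+1))) := by
      intro i j hij
      rcases lt_or_gt_of_ne (fun h => hij (Fin.ext h)) with h | h
      · exact disjoint_Ioo_of_le (hu h)
      · exact (disjoint_Ioo_of_le (hu h)).symm
    have hsum : (∑ i : Fin n, (u (i.val + 1) - u i.val)) < δ := by
      rw [Fin.sum_univ_eq_sum_range (fun i => u (i+1) - u i) n, Finset.sum_range_sub]
      have h1 : u n ≤ y := (us n).2
      have h2 : x ≤ u 0 := (us 0).1
      linarith
    have := H n (fun i : Fin n => u i.val) (fun i : Fin n => u (i.val + 1)) huv hdisj hsum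
    calc ∑ i ∈ Finset.range n, edist (f (u (i + 1))) (f (u i))
        = ENNReal.ofReal (∑ i ∈ Finset.range n, ‖f (u (i+1)) - f (u i)‖) := by
          rw [ENNReal.ofReal_sum_of_nonneg (fun i _ => norm_nonneg _)]
          refine Finset.sum_congr rfl fun i _ => ?_
          rw [edist_dist, dist_eq_norm]
      _ ≤ ENNReal.ofReal ε := by
          apply ENNReal.ofReal_le_ofReal
          rw [← Fin.sum_univ_eq_sum_range (fun i => ‖f (u (i+1)) - f (u i)‖) n]
          exact this.le
  · rw [Set.Icc_eq_empty (not_le.2 hxy)]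
    simp [eVariationOn.subsingleton f (subsingleton_empty)]

lemma acon_evar_bound (hf : AbsContOn f (Ioo a b)) :
    ∃ C : ℝ, 0 ≤ C ∧ ∀ x y : ℝ, Icc x y ⊆ Ioo a b →
      eVariationOn f (Icc x y) ≤ ENNReal.ofReal C := by
  obtain ⟨δ, hδ, H⟩ := acon_evar_small hf one_pos
  have key : ∀ m : ℕ, ∀ x y : ℝ, Icc x y ⊆ Ioo a b → y - x ≤ m * (δ/2) →
      eVariationOn f (Icc x y) ≤ ENNReal.ofReal m := by
    intro m
    induction m with
    | zero =>
      intro x y hsub hlen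
      have : (Icc x y).Subsingleton := by
        rcases lt_or_ge x y with h | h
        · exfalso; push_cast at hlen; linarith
        · intro u hu v hv
          have : u = x := le_antisymm (hu.2.trans h) hu.1
          have : v = x := le_antisymm (hv.2.trans h) hv.1
          simp_all
      simp [eVariationOn.subsingleton f this]
    | succ m ih =>
      intro x y hsub hlen
      rcases le_or_gt (y - x) (δ/2) with h | h
      · calc eVariationOn f (Icc x y) ≤ ENNReal.ofReal 1 :=
            H x y hsub (by linarith)
          _ ≤ ENNReal.ofReal ((m+1 : ℕ) : ℝ) := by
            apply ENNReal.ofReal_le_ofReal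
            push_cast
            linarith [Nat.cast_nonneg (α := ℝ) m]
      · set z := x + δ/2 with hz
        have hxz : x ≤ z := by simp [hz]; positivity
        have hzy : z ≤ y := by simp [hz]; linarith
        have h1 : Icc x y ∩ Icc x z = Icc x z := by
          rw [Set.Icc_inter_Icc]
          simp [min_eq_right hzy, max_self]
        have h2 : Icc x y ∩ Icc z y = Icc z y := by
          rw [Set.Icc_inter_Icc]
          simp [max_eq_right hxz, min_self]
        have h3 : Icc x y ∩ Icc x y = Icc x y := Set.inter_self _
        have hsplit := eVariationOn.Icc_add_Icc f (s := Icc x y) hxz hzy ⟨hxz, hzy⟩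
        rw [h1, h2, h3] at hsplit
        calc eVariationOn f (Icc x y) = eVariationOn f (Icc x z) + eVariationOn f (Icc z y) :=
              hsplit.symm
          _ ≤ ENNReal.ofReal 1 + ENNReal.ofReal m := by
              gcongr
              · exact H x z (fun t ht => hsub ⟨ht.1, ht.2.trans hzy⟩) (by simp [hz]; linarith)
              · exact ih z y (fun t ht => hsub ⟨hxz.trans ht.1, ht.2⟩)
                  (by simp [hz] at *; push_cast at hlen ⊢; linarith)
          _ = ENNReal.ofReal ((m:ℝ)+1) := by
              rw [← ENNReal.ofReal_add one_pos.le (Nat.cast_nonneg m), add_comm]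
          _ = ENNReal.ofReal ((m:ℕ)+1 : ℕ) := by push_cast; ring_nf
  obtain ⟨m, hm⟩ := exists_nat_ge ((b - a)/(δ/2))
  refine ⟨m, Nat.cast_nonneg m, fun x y hsub => ?_⟩
  apply key m x y hsub
  rcases le_or_gt x y with h | h
  · have hx := hsub ⟨le_refl x, h⟩
    have hy := hsub ⟨h, le_refl y⟩
    have : b - a ≤ m * (δ/2) := by
      rw [div_le_iff₀ (by positivity)] at hm
      linarith
    have := hx.1; have := hy.2
    linarith
  · nlinarith [Nat.cast_nonneg (α := ℝ) m, hδ]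

lemma acon_single {S : Set ℝ} (hf : AbsContOn f S) {ε : ℝ} (hε : 0 < ε) :
    ∃ δ : ℝ, 0 < δ ∧ ∀ x y : ℝ, x ≤ y → Icc x y ⊆ S → y - x < δ → ‖f y - f x‖ < ε := by
  obtain ⟨δ, hδ, H⟩ := hf ε hε
  refine ⟨δ, hδ, fun x y hxy hsub hlen => ?_⟩
  have := H 1 (fun _ => x) (fun _ => y) (fun _ => ⟨hxy, hsub⟩)
    (fun i j hij => absurd (Subsingleton.elim i j) hij) (by simpa using hlen)
  simpa using this

lemma acon_continuousOn (hf : AbsContOn f (Ioo a b)) : ContinuousOn f (Ioo a b) := by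
  intro t ht
  rw [Metric.continuousWithinAt_iff]
  intro ε hε
  obtain ⟨δ, hδ, H⟩ := acon_single hf hε
  refine ⟨δ, hδ, fun {y} hy hdist => ?_⟩
  rcases le_total y t with h | h
  · have : ‖f t - f y‖ < ε := H y t h
      (fun u hu => ⟨hy.1.trans_le hu.1, hu.2.trans_lt ht.2⟩)
      (by rw [Real.dist_eq, abs_sub_comm] at hdist; rw [abs_of_nonneg (by linarith)] at hdist; linarith)
    rw [dist_eq_norm, ← norm_neg]; simpa [neg_sub] using this
  · have : ‖f y - f t‖ < ε := H t y h
      (fun u hu => ⟨ht.1.trans_le hu.1, hu.2.trans_lt hy.2⟩)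
      (by rw [Real.dist_eq, abs_of_nonneg (by linarith)] at hdist; linarith)
    rwa [dist_eq_norm]

lemma cousin_partition {x y : ℝ} (hxy : x ≤ y) (h : ℝ → ℝ)
    (hpos : ∀ t ∈ Icc x y, 0 < h t) :
    ∃ (m : ℕ) (c τ : ℕ → ℝ), c 0 = x ∧ c m = y ∧ (∀ i < m, c i ≤ c (i+1)) ∧
      ∀ i < m, τ i ∈ Icc x y ∧ τ i ∈ Icc (c i) (c (i+1)) ∧
        Icc (c i) (c (i+1)) ⊆ Ioo (τ i - h (τ i)) (τ i + h (τ i)) := by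
  set P : ℝ → Prop := fun z =>
    ∃ (m : ℕ) (c τ : ℕ → ℝ), c 0 = x ∧ c m = z ∧ (∀ i < m, c i ≤ c (i+1)) ∧
      ∀ i < m, τ i ∈ Icc x y ∧ τ i ∈ Icc (c i) (c (i+1)) ∧
        Icc (c i) (c (i+1)) ⊆ Ioo (τ i - h (τ i)) (τ i + h (τ i)) with hP
  have hext : ∀ w z t : ℝ, P w → w ≤ z → t ∈ Icc x y → t ∈ Icc w z →
      w ∈ Ioo (t - h t) (t + h t) → z ∈ Ioo (t - h t) (t + h t) → P z := by
    rintro w z t ⟨m, c, τ, hc0, hcm, hmono, htag⟩ hwz htxy htwz hw hz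
    refine ⟨m + 1, fun i => if i ≤ m then c i else z, fun i => if i < m then τ i else t,
      ?_, ?_, ?_, ?_⟩
    · simp [Nat.zero_le m, hc0]
    · simp
    · intro i hi
      rcases Nat.lt_or_ge i m with h' | h'
      · simp only [if_pos h'.le, if_pos (Nat.succ_le_of_lt h')]
        exact hmono i h'
      · have : i = m := le_antisymm (Nat.lt_succ_iff.mp hi) h'
        subst this
        simp only [if_pos (le_refl i), if_neg (Nat.not_succ_le_self i)]
        rw [hcm]; exact hwz
    · intro i hi
      rcases Nat.lt_or_ge i m with h' | h'
      · simp only [if_pos h', if_pos h'.le, if_pos (Nat.succ_le_of_lt h')]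
        exact htag i h'
      · have : i = m := le_antisymm (Nat.lt_succ_iff.mp hi) h'
        subst this
        simp only [if_neg (lt_irrefl i), if_pos (le_refl i), if_neg (Nat.not_succ_le_self i)]
        rw [hcm]
        refine ⟨htxy, htwz, fun u hu => ?_⟩
        exact ⟨lt_of_lt_of_le hw.1 hu.1, lt_of_le_of_lt hu.2 hz.2⟩
  have hPx : P x := ⟨0, fun _ => x, fun _ => x, rfl, rfl, by omega, by omega⟩
  set Q : Set ℝ := {z | z ∈ Icc x y ∧ P z} with hQ
  have hQne : (Q : Set ℝ).Nonempty := ⟨x, ⟨le_refl x, hxy⟩, hPx⟩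
  have hQbdd : BddAbove Q := ⟨y, fun z hz => hz.1.2⟩
  set z₀ := sSup Q with hz₀
  have hz₀mem : z₀ ∈ Icc x y :=
    ⟨le_csSup hQbdd ⟨⟨le_refl x, hxy⟩, hPx⟩, csSup_le hQne (fun z hz => hz.1.2)⟩
  have hh₀ : 0 < h z₀ := hpos z₀ hz₀mem
  have hPz₀ : P z₀ := by
    obtain ⟨w, hwQ, hw⟩ := exists_lt_of_lt_csSup hQne (by linarith : z₀ - h z₀ < z₀)
    have hwz₀ : w ≤ z₀ := le_csSup hQbdd hwQ
    exact hext w z₀ z₀ hwQ.2 hwz₀ hz₀mem ⟨hwz₀, le_refl _⟩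
      ⟨hw, by linarith⟩ ⟨by linarith, by linarith⟩
  have hz₀y : z₀ = y := by
    by_contra hne
    have hlt : z₀ < y := lt_of_le_of_ne hz₀mem.2 hne
    set w := min y (z₀ + h z₀ / 2) with hw
    have hwgt : z₀ < w := lt_min hlt (by linarith)
    have hwy : w ≤ y := min_le_left _ _
    have hwmem : w ∈ Icc x y := ⟨le_trans hz₀mem.1 hwgt.le, hwy⟩
    have hPw : P w := by
      refine hext z₀ w z₀ hPz₀ hwgt.le hz₀mem ⟨le_refl _, hwgt.le⟩
        ⟨by linarith, by linarith⟩ ⟨by linarith, ?_⟩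
      calc w ≤ z₀ + h z₀ / 2 := min_le_right _ _
        _ < z₀ + h z₀ := by linarith
    have : w ≤ z₀ := le_csSup hQbdd ⟨hwmem, hPw⟩
    linarith
  rw [hz₀y] at hPz₀
  exact hPz₀

section WithC
variable {C : ℝ}

-- from L2
variable (hC0 : 0 ≤ C)
variable (hC : ∀ x y : ℝ, Icc x y ⊆ Ioo a b → eVariationOn f (Icc x y) ≤ ENNReal.ofReal C)

include hC in
lemma acon_lbv : LocallyBoundedVariationOn f (Ioo a b) := by
  intro x y hx hy
  have : Ioo a b ∩ Icc x y ⊆ Icc (min x y) (max x y) := fun t ht =>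
    ⟨le_trans (min_le_left _ _) ht.2.1, le_trans ht.2.2 (le_max_right _ _)⟩
  refine ne_top_of_le_ne_top ?_ (eVariationOn.mono f this)
  refine ne_top_of_le_ne_top ENNReal.ofReal_ne_top (hC _ _ ?_)
  intro t ht
  rcases le_total x y with h | h
  · rw [min_eq_left h, max_eq_right h] at ht
    exact ⟨hx.1.trans_le ht.1, ht.2.trans_lt hy.2⟩
  · rw [min_eq_right h, max_eq_left h] at ht
    exact ⟨hy.1.trans_le ht.1, ht.2.trans_lt hx.2⟩

include hC0 hC in
lemma l4a (hfc : ContinuousOn f (Ioo a b)) {x y y' : ℝ}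
    (hax : a < x) (hxy : x ≤ y) (hyy' : y < y') (hy'b : y' < b) :
    ∫⁻ t in Icc x y, ENNReal.ofReal ‖deriv f t‖ ≤ ENNReal.ofReal C := by
  set s := Ioo a b with hs
  have hxs : x ∈ s := ⟨hax, lt_trans (lt_of_le_of_lt hxy hyy') hy'b⟩
  have hy's : y' ∈ s := ⟨lt_of_lt_of_le hax (hxy.trans hyy'.le), hy'b⟩
  have hIccsub : Icc x y' ⊆ s := fun t ht => ⟨hax.trans_le ht.1, ht.2.trans_lt hy'b⟩
  have hlbv : LocallyBoundedVariationOn f s := acon_lbv hC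
  set V := variationOnFromTo f s x with hV
  have hVmono : MonotoneOn V s := variationOnFromTo.monotoneOn hlbv hxs
  have hVle : ∀ t₁ t₂ : ℝ, t₁ ∈ s → t₂ ∈ s → t₁ ≤ t₂ → ‖f t₂ - f t₁‖ ≤ V t₂ - V t₁ := by
    intro t₁ t₂ h₁ h₂ h12
    have hadd := variationOnFromTo.add hlbv hxs h₁ h₂
    have heq : V t₂ - V t₁ = variationOnFromTo f s t₁ t₂ := by
      rw [hV]; linarith [hadd]
    rw [heq, variationOnFromTo.eq_of_le f s h12]
    have hfin : eVariationOn f (s ∩ Icc t₁ t₂) ≤ ENNReal.ofReal C :=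
      le_trans (eVariationOn.mono f Set.inter_subset_right)
        (hC t₁ t₂ (fun u hu => ⟨h₁.1.trans_le hu.1, hu.2.trans_lt h₂.2⟩))
    have hne : eVariationOn f (s ∩ Icc t₁ t₂) ≠ ⊤ :=
      ne_top_of_le_ne_top ENNReal.ofReal_ne_top hfin
    have hed : ENNReal.ofReal (dist (f t₁) (f t₂)) ≤ eVariationOn f (s ∩ Icc t₁ t₂) := by
      rw [← edist_dist]
      exact eVariationOn.edist_le f ⟨h₁, le_refl _, h12⟩ ⟨h₂, h12, le_refl _⟩
    have := (ENNReal.ofReal_le_iff_le_toReal hne).mp hed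
    rwa [dist_comm, dist_eq_norm] at this
  have hVy' : V y' ≤ C := by
    rw [hV, variationOnFromTo.eq_of_le f s (hxy.trans hyy'.le)]
    have h1 : eVariationOn f (s ∩ Icc x y') ≤ ENNReal.ofReal C :=
      le_trans (eVariationOn.mono f Set.inter_subset_right) (hC x y' hIccsub)
    calc (eVariationOn f (s ∩ Icc x y')).toReal
        ≤ (ENNReal.ofReal C).toReal :=
          ENNReal.toReal_mono ENNReal.ofReal_ne_top h1
      _ = C := ENNReal.toReal_ofReal hC0
  have hV0 : ∀ t ∈ s, x ≤ t → 0 ≤ V t := by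
    intro t ht hxt
    have := variationOnFromTo.nonneg_of_le f s hxt
    exact this
  -- average bound
  have havg : ∀ h : ℝ, 0 < h → h ≤ y' - y → ∫ t in x..y, ‖f (t + h) - f t‖ ≤ h * C := by
    intro h hh hhy
    have hyh : y + h ≤ y' := by linarith
    have hxh : x + h ≤ y' := by linarith
    have hsub1 : Icc x y' ⊆ s := hIccsub
    have hcV : MonotoneOn V (Icc x y') := hVmono.mono hsub1
    have hVint : IntegrableOn V (Icc x y') volume :=
      hcV.integrableOn_isCompact isCompact_Icc
    have hIV : ∀ p q : ℝ, x ≤ p → q ≤ y' → p ≤ q → IntervalIntegrable V volume p q := by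
      intro p q hp hq hpq
      refine (hVint.mono_set ?_).intervalIntegrable
      rw [uIcc_of_le hpq]
      exact Icc_subset_Icc hp hq
    have hIVu : ∀ p q : ℝ, x ≤ p → x ≤ q → p ≤ y' → q ≤ y' → IntervalIntegrable V volume p q := by
      intro p q hp hq hp' hq'
      rcases le_total p q with h' | h'
      · exact hIV p q hp hq' h'
      · exact (hIV q p hq hp' h').symm
    have hcont1 : ContinuousOn (fun t => f (t + h)) (Icc x y) :=
      hfc.comp (Continuous.continuousOn (by continuity)) (fun t ht =>
        Set.mem_Ioo.mpr ⟨by linarith [ht.1], by linarith [ht.2]⟩)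
    have hcont2 : ContinuousOn f (Icc x y) :=
      hfc.mono (fun t ht => ⟨hax.trans_le ht.1, by have := ht.2; linarith⟩)
    have hcont3 : ContinuousOn (fun t => ‖f (t + h) - f t‖) (Icc x y) :=
      (hcont1.sub hcont2).norm
    have hII1 : IntervalIntegrable (fun t => ‖f (t + h) - f t‖) volume x y := by
      apply ContinuousOn.intervalIntegrable
      rwa [uIcc_of_le hxy]
    have hII2a : IntervalIntegrable (fun t => V (t + h)) volume x y := by
      have := (hIV (x + h) (y + h) (by linarith) hyh (by linarith)).comp_add_right h
      simpa using this
    have hII2b : IntervalIntegrable V volume x y := hIV x y le_rfl (by linarith) hxy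
    have step1 : ∫ t in x..y, ‖f (t + h) - f t‖ ≤ ∫ t in x..y, (V (t + h) - V t) := by
      apply intervalIntegral.integral_mono_on hxy hII1 (hII2a.sub hII2b)
      intro t ht
      exact hVle t (t + h) (hsub1 ⟨ht.1, by have := ht.2; linarith⟩)
        (hsub1 ⟨by have := ht.1; linarith, by have := ht.2; linarith⟩) (by linarith)
    have step2 : ∫ t in x..y, (V (t + h) - V t) =
        (∫ t in y..(y + h), V t) - ∫ t in x..(x + h), V t := by
      rw [intervalIntegral.integral_sub hII2a hII2b]
      rw [intervalIntegral.integral_comp_add_right V h]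
      have e1 : ∫ t in (x+h)..(y+h), V t =
          (∫ t in (x+h)..y, V t) + ∫ t in y..(y+h), V t :=
        (intervalIntegral.integral_add_adjacent_intervals
          (hIVu (x+h) y (by linarith) hxy hxh (by linarith))
          (hIV y (y+h) hxy hyh (by linarith))).symm
      have e2 : ∫ t in x..y, V t =
          (∫ t in x..(x+h), V t) + ∫ t in (x+h)..y, V t :=
        (intervalIntegral.integral_add_adjacent_intervals
          (hIV x (x+h) le_rfl hxh (by linarith))
          (hIVu (x+h) y (by linarith) hxy hxh (by linarith))).symm
      rw [e1, e2]; ring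
    have step3 : ∫ t in y..(y + h), V t ≤ h * C := by
      have : ∫ t in y..(y + h), V t ≤ ∫ _ in y..(y + h), C := by
        apply intervalIntegral.integral_mono_on (by linarith)
          (hIV y (y+h) hxy hyh (by linarith)) intervalIntegrable_const
        intro t ht
        exact le_trans (hVmono (hsub1 ⟨hxy.trans ht.1, ht.2.trans hyh⟩) hy's
          (ht.2.trans hyh)) hVy'
      simpa [mul_comm] using this
    have step4 : 0 ≤ ∫ t in x..(x + h), V t := by
      apply intervalIntegral.integral_nonneg (by linarith)
      intro t ht
      exact hV0 t (hsub1 ⟨ht.1, ht.2.trans hxh⟩) ht.1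
    calc ∫ t in x..y, ‖f (t + h) - f t‖ ≤ ∫ t in x..y, (V (t + h) - V t) := step1
      _ = (∫ t in y..(y + h), V t) - ∫ t in x..(x + h), V t := step2
      _ ≤ h * C - 0 := sub_le_sub step3 step4
      _ = h * C := by ring
  -- Fatou argument
  set hm : ℕ → ℝ := fun m => (y' - y)/(m+1) with hhm
  have hmpos : ∀ m : ℕ, 0 < hm m := fun m => div_pos (by linarith) (by positivity)
  have hmle : ∀ m : ℕ, hm m ≤ y' - y := by
    intro m
    rw [hhm]
    calc (y' - y)/(m+1 : ℝ) ≤ (y' - y)/1 := by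
          apply div_le_div_of_nonneg_left (by linarith) one_pos (by push_cast; linarith)
      _ = y' - y := div_one _
  have hmt : Tendsto hm atTop (𝓝 0) := by
    have h1 : Tendsto (fun n : ℕ => (y' - y) * (1/(n+1))) atTop (𝓝 ((y' - y) * 0)) :=
      tendsto_one_div_add_atTop_nhds_zero_nat.const_mul (y' - y)
    rw [mul_zero] at h1
    apply h1.congr
    intro n
    rw [hhm]; field_simp
  set g : ℕ → ℝ → ℝ≥0∞ := fun m t => ENNReal.ofReal (‖f (t + hm m) - f t‖ / hm m) with hg
  have hcont2 : ContinuousOn f (Icc x y) :=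
    hfc.mono (fun t ht => ⟨hax.trans_le ht.1, by
      have := ht.2; exact lt_of_le_of_lt this (hyy'.trans hy'b)⟩)
  have hcont3 : ∀ m : ℕ, ContinuousOn (fun t => ‖f (t + hm m) - f t‖ / hm m) (Icc x y) := by
    intro m
    have hcont1 : ContinuousOn (fun t => f (t + hm m)) (Icc x y) :=
      hfc.comp (Continuous.continuousOn (by continuity)) (fun t ht =>
        Set.mem_Ioo.mpr ⟨by linarith [ht.1, hmpos m],
          by have h2 := ht.2; have h3 := hmle m; linarith⟩)
    exact ((hcont1.sub hcont2).norm).div_const _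
  have hgmeas : ∀ m, AEMeasurable (g m) (volume.restrict (Icc x y)) := fun m =>
    ((hcont3 m).aemeasurable measurableSet_Icc).ennreal_ofReal
  have hbound : ∀ m, ∫⁻ t in Icc x y, g m t ≤ ENNReal.ofReal C := by
    intro m
    have hint : IntegrableOn (fun t => ‖f (t + hm m) - f t‖ / hm m) (Icc x y) volume :=
      (hcont3 m).integrableOn_Icc
    rw [hg]
    rw [← ofReal_integral_eq_lintegral_ofReal hint
      (Filter.Eventually.of_forall (fun t => div_nonneg (norm_nonneg _) (hmpos m).le))]
    apply ENNReal.ofReal_le_ofReal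
    have heq : ∫ t in Icc x y, ‖f (t + hm m) - f t‖ / hm m =
        (∫ t in x..y, ‖f (t + hm m) - f t‖) / hm m := by
      rw [integral_Icc_eq_integral_Ioc, ← intervalIntegral.integral_of_le hxy,
        intervalIntegral.integral_div]
    rw [heq, div_le_iff₀ (hmpos m), mul_comm]
    exact havg (hm m) (hmpos m) (hmle m)
  have hpt : ∀ᵐ t ∂(volume.restrict (Icc x y)),
      ENNReal.ofReal ‖deriv f t‖ ≤ liminf (fun m => g m t) atTop := by
    have h0 : (volume : Measure ℝ) ({x, y} : Set ℝ) = 0 := by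
      have : ({x, y} : Set ℝ) = {x} ∪ {y} := rfl
      rw [this]
      exact measure_union_null (measure_singleton x) (measure_singleton y)
    have hae1 := ae_restrict_mem (μ := (volume : Measure ℝ)) (measurableSet_Icc (a := x) (b := y))
    have hae1' := ae_restrict_of_ae (s := Icc x y) (measure_eq_zero_iff_ae_notMem.mp h0)
    have hae2 := ae_restrict_of_ae (s := Icc x y) hlbv.ae_differentiableWithinAt_of_mem
    filter_upwards [hae1, hae1', hae2] with t htIcc htne hdiff
    have htIoo : t ∈ Ioo x y := by
      have hx' : t ≠ x := fun e => htne (by simp [e])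
      have hy' : t ≠ y := fun e => htne (by simp [e])
      exact ⟨htIcc.1.lt_of_ne hx'.symm, htIcc.2.lt_of_ne hy'⟩
    have hts : t ∈ s := ⟨hax.trans htIoo.1, htIoo.2.trans (hyy'.trans hy'b)⟩
    have hda : HasDerivAt f (deriv f t) t :=
      ((hdiff hts).differentiableAt (isOpen_Ioo.mem_nhds hts)).hasDerivAt
    have h1 : Tendsto (fun m => t + hm m) atTop (𝓝[≠] t) := by
      apply tendsto_nhdsWithin_of_tendsto_nhds_of_eventually_within
      · simpa using (tendsto_const_nhds (x := t)).add hmt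
      · refine Filter.Eventually.of_forall (fun m => ?_)
        simp only [Set.mem_compl_iff, Set.mem_singleton_iff]
        have := hmpos m
        intro hcon
        nlinarith [hcon]
    have h2 : Tendsto (fun m => ‖slope f t (t + hm m)‖) atTop (𝓝 ‖deriv f t‖) :=
      ((hasDerivAt_iff_tendsto_slope.mp hda).comp h1).norm
    have h3 : ∀ m, ‖slope f t (t + hm m)‖ = ‖f (t + hm m) - f t‖ / hm m := by
      intro m
      rw [slope_def_module, add_sub_cancel_left, norm_smul, Real.norm_eq_abs, abs_inv,
        abs_of_pos (hmpos m), div_eq_inv_mul]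
    have h4 : Tendsto (fun m => g m t) atTop (𝓝 (ENNReal.ofReal ‖deriv f t‖)) := by
      apply (ENNReal.continuous_ofReal.tendsto _).comp
      exact h2.congr h3
    exact le_of_eq (h4.liminf_eq).symm
  calc ∫⁻ t in Icc x y, ENNReal.ofReal ‖deriv f t‖
      ≤ ∫⁻ t in Icc x y, liminf (fun m => g m t) atTop := lintegral_mono_ae hpt
    _ ≤ liminf (fun m => ∫⁻ t in Icc x y, g m t) atTop := lintegral_liminf_le' hgmeas
    _ ≤ ENNReal.ofReal C := by
        refine le_trans (liminf_le_liminf (Filter.Eventually.of_forall hbound)) ?_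
        simp [Filter.liminf_const]


include hC0 hC in
lemma acon_integrableOn_deriv (hab : a < b) (hfc : ContinuousOn f (Ioo a b)) :
    IntegrableOn (fun t => ‖deriv f t‖) (Ioo a b) volume ∧
    ∫⁻ t in Ioo a b, ENNReal.ofReal ‖deriv f t‖ ≤ ENNReal.ofReal C := by
  set e : ℕ → ℝ := fun n => (b - a)/(n + 3) with he
  have hepos : ∀ n : ℕ, 0 < e n := fun n => div_pos (by linarith) (by positivity)
  have he3 : ∀ n : ℕ, 3 * e n ≤ b - a := by
    intro n
    have h1 : (0:ℝ) < (n:ℝ) + 3 := by positivity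
    have h3 : (3:ℝ) ≤ (n:ℝ) + 3 := by
      have : (0:ℝ) ≤ (n:ℝ) := Nat.cast_nonneg n
      linarith
    simp only [he]
    calc 3 * ((b - a)/((n:ℝ) + 3)) = (b - a) * (3/((n:ℝ) + 3)) := by ring
      _ ≤ (b - a) * 1 := by
          apply mul_le_mul_of_nonneg_left _ (by linarith)
          rw [div_le_one h1]
          exact h3
      _ = b - a := mul_one _
  set A : ℕ → Set ℝ := fun n => Icc (a + e n) (b - 2 * e n) with hA
  have heanti : ∀ n m : ℕ, n ≤ m → e m ≤ e n := by
    intro n m hnm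
    have : (n:ℝ) ≤ (m:ℝ) := Nat.cast_le.mpr hnm
    apply div_le_div_of_nonneg_left (by linarith) (by positivity) (by linarith)
  have hbound : ∀ n, ∫⁻ t in A n, ENNReal.ofReal ‖deriv f t‖ ≤ ENNReal.ofReal C := by
    intro n
    exact l4a hC0 hC hfc (y' := b - e n) (by linarith [hepos n]) (by linarith [he3 n])
      (by linarith [hepos n]) (by linarith [hepos n])
  have hsubIoo : ∀ n, A n ⊆ Ioo a b := fun n t ht =>
    ⟨by linarith [ht.1, hepos n], by linarith [ht.2, hepos n]⟩
  have hunion : (⋃ n, A n) = Ioo a b := by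
    apply Set.Subset.antisymm
    · exact Set.iUnion_subset hsubIoo
    · intro t ht
      set c := min (t - a) ((b - t)/2) with hc
      have hcpos : 0 < c := lt_min (by linarith [ht.1]) (by linarith [ht.2])
      obtain ⟨n, hn⟩ := exists_nat_ge ((b - a)/c)
      have hen : e n ≤ c := by
        rw [he, div_le_iff₀ (by positivity)]
        rw [div_le_iff₀ hcpos] at hn
        nlinarith [hcpos]
      apply Set.mem_iUnion.mpr ⟨n, ?_⟩
      constructor
      · have : c ≤ t - a := min_le_left _ _
        linarith
      · have : c ≤ (b - t)/2 := min_le_right _ _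
        linarith
  set G : ℝ → ℝ≥0∞ := fun t => ENNReal.ofReal ‖deriv f t‖ with hG
  have hGmeas : Measurable G := (measurable_deriv f).norm.ennreal_ofReal
  have hind : ∀ t, (⨆ n, (A n).indicator G t) = (Ioo a b).indicator G t := by
    intro t
    by_cases ht : t ∈ Ioo a b
    · rw [Set.indicator_of_mem ht]
      rw [← hunion] at ht
      obtain ⟨n₀, hn₀⟩ := Set.mem_iUnion.mp ht
      apply le_antisymm
      · exact iSup_le fun n => Set.indicator_le_self _ _ t
      · exact le_iSup_of_le n₀ (le_of_eq (Set.indicator_of_mem hn₀ G).symm)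
    · rw [Set.indicator_of_notMem ht]
      refine le_antisymm (iSup_le fun n => ?_) zero_le
      rw [Set.indicator_of_notMem (fun hc => ht (hsubIoo n hc))]
  have hkey : ∫⁻ t in Ioo a b, G t ≤ ENNReal.ofReal C := by
    calc ∫⁻ t in Ioo a b, G t = ∫⁻ t, (Ioo a b).indicator G t := by
          rw [lintegral_indicator measurableSet_Ioo G]
      _ = ∫⁻ t, ⨆ n, (A n).indicator G t := by
          apply lintegral_congr
          intro t
          exact (hind t).symm
      _ = ⨆ n, ∫⁻ t, (A n).indicator G t := by
          apply lintegral_iSup (fun n => hGmeas.indicator measurableSet_Icc)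
          intro n m hnm
          apply Set.indicator_le_indicator_of_subset
          · exact Set.Icc_subset_Icc (by linarith [heanti n m hnm]) (by linarith [heanti n m hnm])
          · exact fun t => zero_le
      _ ≤ ENNReal.ofReal C := iSup_le fun n => by
          rw [lintegral_indicator measurableSet_Icc]
          exact hbound n
  constructor
  · refine ⟨((measurable_deriv f).norm).aestronglyMeasurable, ?_⟩
    rw [hasFiniteIntegral_iff_norm]
    refine lt_of_le_of_lt ?_ (ENNReal.ofReal_lt_top (r := C))
    refine le_trans (le_of_eq ?_) hkey
    apply lintegral_congr
    intro t
    rw [norm_norm]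
  · exact hkey
end WithC

lemma acon_ftc (hf : AbsContOn f (Ioo a b))
    (hInt : IntegrableOn (fun t => ‖deriv f t‖) (Ioo a b) volume)
    (hdiff : ∀ᵐ t ∂(volume : Measure ℝ), t ∈ Ioo a b → DifferentiableWithinAt ℝ f (Ioo a b) t)
    {x y : ℝ} (hx : x ∈ Ioo a b) (hy : y ∈ Ioo a b) (hxy : x ≤ y) :
    ‖f y - f x‖ ≤ ∫ t in Ioo a b, ‖deriv f t‖ := by
  set s := Ioo a b with hs
  set I := ∫ t in s, ‖deriv f t‖ with hI
  have hI0 : 0 ≤ I := setIntegral_nonneg measurableSet_Ioo (fun t _ => norm_nonneg _)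
  have hIccs : Icc x y ⊆ s := fun t ht => ⟨hx.1.trans_le ht.1, ht.2.trans_lt hy.2⟩
  have main : ∀ ε : ℝ, 0 < ε → ‖f y - f x‖ ≤ I + ε * (y - x + 2) := by
    intro ε hε
    obtain ⟨δ, hδ, HAC⟩ := hf ε hε
    have hlin : ∫⁻ t in s, ENNReal.ofReal ‖deriv f t‖ = ENNReal.ofReal I :=
      (ofReal_integral_eq_lintegral_ofReal hInt
        (Filter.Eventually.of_forall fun t => norm_nonneg _)).symm
    -- Vitali–Carathéodory
    set F : ℝ → ℝ≥0 := fun t => s.indicator (fun u => ‖deriv f u‖₊) t with hF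
    have hFmeas : Measurable F := ((measurable_deriv f).nnnorm).indicator measurableSet_Ioo
    obtain ⟨g, hgF, hglsc, hgint⟩ := exists_lt_lowerSemicontinuous_lintegral_ge volume F hFmeas
      (ε := ENNReal.ofReal ε) (by simp [ENNReal.ofReal_eq_zero, not_le, hε])
    have hFlin : ∫⁻ t, (F t : ℝ≥0∞) ∂volume = ENNReal.ofReal I := by
      have h1 : ∀ t, (F t : ℝ≥0∞) = s.indicator (fun u => ENNReal.ofReal ‖deriv f u‖) t := by
        intro t
        by_cases ht : t ∈ s
        · rw [hF]; simp only [Set.indicator_of_mem ht, ofReal_norm, enorm_eq_nnnorm]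
        · rw [hF]; simp [Set.indicator_of_notMem ht]
      calc ∫⁻ t, (F t : ℝ≥0∞) ∂volume
          = ∫⁻ t, s.indicator (fun u => ENNReal.ofReal ‖deriv f u‖) t ∂volume :=
            lintegral_congr h1
        _ = ∫⁻ t in s, ENNReal.ofReal ‖deriv f t‖ ∂volume :=
            lintegral_indicator measurableSet_Ioo _
        _ = ENNReal.ofReal I := hlin
    have hgtot : ∫⁻ t, g t ∂volume ≤ ENNReal.ofReal (I + ε) := by
      calc ∫⁻ t, g t ∂volume ≤ (∫⁻ t, (F t : ℝ≥0∞) ∂volume) + ENNReal.ofReal ε := hgint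
        _ = ENNReal.ofReal I + ENNReal.ofReal ε := by rw [hFlin]
        _ = ENNReal.ofReal (I + ε) := (ENNReal.ofReal_add hI0 hε.le).symm
    have hgne : ∫⁻ t, g t ∂volume ≠ ⊤ := ne_top_of_le_ne_top ENNReal.ofReal_ne_top hgtot
    -- null set and open cover
    have hN : volume {t : ℝ | ¬ (t ∈ s → DifferentiableWithinAt ℝ f s t)} = 0 :=
      ae_iff.mp hdiff
    obtain ⟨U, hUN, hUopen, hUvol⟩ := exists_isOpen_lt_of_lt _ (ENNReal.ofReal δ)
      (by rw [hN]; exact ENNReal.ofReal_pos.mpr hδ)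
    -- gauge
    set pred : ℝ → ℝ → Prop := fun t r =>
      (∀ u ∈ Ioo (t - r) (t + r),
        ‖f u - f t‖ ≤ (‖deriv f t‖ + ε) * |u - t| ∧ ((‖deriv f t‖₊ : ℝ≥0∞) < g u))
      ∨ Ioo (t - r) (t + r) ⊆ U with hpreddef
    have hgauge : ∀ t : ℝ, ∃ r : ℝ, 0 < r ∧ (t ∈ Icc x y → pred t r) := by
      intro t
      by_cases ht : t ∈ Icc x y
      · have hts : t ∈ s := hIccs ht
        by_cases hdt : t ∈ s → DifferentiableWithinAt ℝ f s t
        · have hder : HasDerivAt f (deriv f t) t :=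
            ((hdt hts).differentiableAt (isOpen_Ioo.mem_nhds hts)).hasDerivAt
          have h1 : ∀ᶠ u in 𝓝 t, ‖f u - f t - (u - t) • deriv f t‖ ≤ ε * ‖u - t‖ :=
            (hasDerivAt_iff_isLittleO.mp hder).bound hε
          have h1' : ∀ᶠ u in 𝓝 t, ‖f u - f t‖ ≤ (‖deriv f t‖ + ε) * |u - t| := by
            filter_upwards [h1] with u hu
            have t1 : ‖f u - f t‖ ≤ ‖f u - f t - (u - t) • deriv f t‖ + ‖(u - t) • deriv f t‖ := by
              calc ‖f u - f t‖ = ‖(f u - f t - (u - t) • deriv f t) + (u - t) • deriv f t‖ := by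
                    congr 1; ring
                _ ≤ _ := norm_add_le _ _
            have t2 : ‖(u - t) • deriv f t‖ = |u - t| * ‖deriv f t‖ := by
              rw [norm_smul, Real.norm_eq_abs]
            rw [Real.norm_eq_abs] at hu
            calc ‖f u - f t‖ ≤ ε * |u - t| + |u - t| * ‖deriv f t‖ := by
                  rw [t2] at t1; linarith
              _ = (‖deriv f t‖ + ε) * |u - t| := by ring
          have hFt : (F t : ℝ≥0∞) = (‖deriv f t‖₊ : ℝ≥0∞) := by
            rw [hF]; simp [Set.indicator_of_mem hts]
          have h2 : ∀ᶠ u in 𝓝 t, ((‖deriv f t‖₊ : ℝ≥0∞)) < g u :=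
            hglsc t _ (hFt ▸ hgF t)
          obtain ⟨r, hr, hball⟩ := Metric.eventually_nhds_iff_ball.mp (h1'.and h2)
          refine ⟨r, hr, fun _ => Or.inl fun u hu => hball u ?_⟩
          rw [Real.ball_eq_Ioo]
          exact hu
        · have : U ∈ 𝓝 t := hUopen.mem_nhds (hUN hdt)
          obtain ⟨r, hr, hball⟩ := Metric.mem_nhds_iff.mp this
          refine ⟨r, hr, fun _ => Or.inr ?_⟩
          rw [← Real.ball_eq_Ioo]
          exact hball
      · exact ⟨1, one_pos, fun h' => absurd h' ht⟩
    choose h hh0 hpred using hgauge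
    obtain ⟨m, c, τ, hc0, hcm, hcmono, htags⟩ :=
      cousin_partition hxy h (fun t _ => hh0 t)
    have hcmono' : ∀ i j, i ≤ j → j ≤ m → c i ≤ c j := by
      intro i j hij
      refine Nat.le_induction (fun _ => le_refl (c i)) ?_ j hij
      intro n hn ih hnm
      exact le_trans (ih (by omega)) (hcmono n (by omega))
    have hcx : ∀ i, i ≤ m → x ≤ c i := fun i hi => hc0 ▸ hcmono' 0 i (Nat.zero_le i) hi
    have hcy : ∀ i, i ≤ m → c i ≤ y := fun i hi => hcm ▸ hcmono' i m hi le_rfl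
    have hpiecesub : ∀ i, i < m → Icc (c i) (c (i+1)) ⊆ Icc x y := fun i hi t ht =>
      ⟨(hcx i hi.le).trans ht.1, ht.2.trans (hcy (i+1) hi)⟩
    have htel : f y - f x = ∑ i ∈ Finset.range m, (f (c (i+1)) - f (c i)) := by
      rw [Finset.sum_range_sub (fun i => f (c i)) m, hc0, hcm]
    classical
    set p : ℕ → Prop := fun i =>
      ∀ u ∈ Ioo (τ i - h (τ i)) (τ i + h (τ i)),
        ‖f u - f (τ i)‖ ≤ (‖deriv f (τ i)‖ + ε) * |u - τ i| ∧
          ((‖deriv f (τ i)‖₊ : ℝ≥0∞) < g u) with hp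
    set A := (Finset.range m).filter p with hA
    set B := (Finset.range m).filter (fun i => ¬ p i) with hB
    have hdisjIoo : ∀ i ∈ Finset.range m, ∀ j ∈ Finset.range m, i ≠ j →
        Disjoint (Ioo (c i) (c (i+1))) (Ioo (c j) (c (j+1))) := by
      intro i hi j hj hij
      rw [Finset.mem_range] at hi hj
      rcases Nat.lt_or_ge i j with h' | h'
      · exact disjoint_Ioo_of_le (hcmono' (i+1) j h' hj.le)
      · have h'' : j < i := by omega
        exact (disjoint_Ioo_of_le (hcmono' (j+1) i h'' hi.le)).symm
    -- piecewise estimate on A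
    have hgmeas : Measurable g := hglsc.measurable
    have hpieceA : ∀ i ∈ A, ‖f (c (i+1)) - f (c i)‖ ≤
        (∫⁻ u in Ioo (c i) (c (i+1)), g u).toReal + ε * (c (i+1) - c i) := by
      intro i hiA
      obtain ⟨hiR, hpi⟩ := Finset.mem_filter.mp hiA
      have him := Finset.mem_range.mp hiR
      obtain ⟨hτxy, hτc, hsubIoo⟩ := htags i him
      have hcc : c i ≤ c (i+1) := hcmono i him
      have hci : c i ∈ Ioo (τ i - h (τ i)) (τ i + h (τ i)) := hsubIoo ⟨le_rfl, hcc⟩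
      have hci1 : c (i+1) ∈ Ioo (τ i - h (τ i)) (τ i + h (τ i)) := hsubIoo ⟨hcc, le_rfl⟩
      have e2 := (hpi _ hci1).1
      have e1 := (hpi _ hci).1
      have hτ1 : c i ≤ τ i := hτc.1
      have hτ2 : τ i ≤ c (i+1) := hτc.2
      have habs1 : |c i - τ i| = τ i - c i := by
        rw [abs_sub_comm, abs_of_nonneg (by linarith)]
      have habs2 : |c (i+1) - τ i| = c (i+1) - τ i := abs_of_nonneg (by linarith)
      set K := ‖deriv f (τ i)‖ + ε with hK
      have key1 : ‖f (c (i+1)) - f (c i)‖ ≤ K * (c (i+1) - c i) := by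
        have t0 : ‖f (c (i+1)) - f (c i)‖ ≤
            ‖f (c (i+1)) - f (τ i)‖ + ‖f (τ i) - f (c i)‖ :=
          norm_sub_le_norm_sub_add_norm_sub _ _ _
        have t1 : ‖f (τ i) - f (c i)‖ = ‖f (c i) - f (τ i)‖ := norm_sub_rev _ _
        have t2 : K * (c (i+1) - τ i) + K * (τ i - c i) = K * (c (i+1) - c i) := by ring
        rw [habs2] at e2
        rw [habs1] at e1
        linarith
      have hfinpiece : ∫⁻ u in Ioo (c i) (c (i+1)), g u ≠ ⊤ :=
        ne_top_of_le_ne_top hgne (setLIntegral_le_lintegral _ _)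
      have key2 : ‖deriv f (τ i)‖ * (c (i+1) - c i) ≤
          (∫⁻ u in Ioo (c i) (c (i+1)), g u).toReal := by
        have hlow : ENNReal.ofReal (‖deriv f (τ i)‖ * (c (i+1) - c i)) ≤
            ∫⁻ u in Ioo (c i) (c (i+1)), g u := by
          have hmon : ∫⁻ u in Ioo (c i) (c (i+1)), ((‖deriv f (τ i)‖₊ : ℝ≥0∞)) ≤
              ∫⁻ u in Ioo (c i) (c (i+1)), g u :=
            setLIntegral_mono hgmeas
              (fun u hu => ((hpi u (hsubIoo (Set.Ioo_subset_Icc_self hu))).2).le)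
          calc ENNReal.ofReal (‖deriv f (τ i)‖ * (c (i+1) - c i))
              = (‖deriv f (τ i)‖₊ : ℝ≥0∞) * ENNReal.ofReal (c (i+1) - c i) := by
                rw [ENNReal.ofReal_mul (norm_nonneg _), ofReal_norm, enorm_eq_nnnorm]
            _ = ∫⁻ _ in Ioo (c i) (c (i+1)), ((‖deriv f (τ i)‖₊ : ℝ≥0∞)) := by
                rw [setLIntegral_const, Real.volume_Ioo]
            _ ≤ _ := hmon
        exact (ENNReal.ofReal_le_iff_le_toReal hfinpiece).mp hlow
      calc ‖f (c (i+1)) - f (c i)‖ ≤ K * (c (i+1) - c i) := key1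
        _ = ‖deriv f (τ i)‖ * (c (i+1) - c i) + ε * (c (i+1) - c i) := by rw [hK]; ring
        _ ≤ (∫⁻ u in Ioo (c i) (c (i+1)), g u).toReal + ε * (c (i+1) - c i) :=
            add_le_add_left key2 _
    -- sum over A
    have hsumA1 : ∑ i ∈ A, (∫⁻ u in Ioo (c i) (c (i+1)), g u).toReal ≤ I + ε := by
      have hAsub : A ⊆ Finset.range m := Finset.filter_subset _ _
      have hdisjA : (↑A : Set ℕ).PairwiseDisjoint (fun i => Ioo (c i) (c (i+1))) :=
        fun i hi j hj hij => hdisjIoo i (hAsub hi) j (hAsub hj) hij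
      have h1 : ∑ i ∈ A, ∫⁻ u in Ioo (c i) (c (i+1)), g u =
          ∫⁻ u in (⋃ i ∈ A, Ioo (c i) (c (i+1))), g u :=
        (lintegral_biUnion_finset hdisjA (fun i _ => measurableSet_Ioo) g).symm
      have h2 : (∑ i ∈ A, ∫⁻ u in Ioo (c i) (c (i+1)), g u) ≤ ENNReal.ofReal (I + ε) := by
        rw [h1]
        exact le_trans (setLIntegral_le_lintegral _ _) hgtot
      calc ∑ i ∈ A, (∫⁻ u in Ioo (c i) (c (i+1)), g u).toReal
          = (∑ i ∈ A, ∫⁻ u in Ioo (c i) (c (i+1)), g u).toReal :=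
            (ENNReal.toReal_sum (fun i _ =>
              ne_top_of_le_ne_top hgne (setLIntegral_le_lintegral _ _))).symm
        _ ≤ (ENNReal.ofReal (I + ε)).toReal :=
            ENNReal.toReal_mono ENNReal.ofReal_ne_top h2
        _ = I + ε := ENNReal.toReal_ofReal (by linarith)
    have hsumA2 : ∑ i ∈ A, (ε * (c (i+1) - c i)) ≤ ε * (y - x) := by
      rw [← Finset.mul_sum]
      apply mul_le_mul_of_nonneg_left _ hε.le
      calc ∑ i ∈ A, (c (i+1) - c i) ≤ ∑ i ∈ Finset.range m, (c (i+1) - c i) :=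
            Finset.sum_le_sum_of_subset_of_nonneg (Finset.filter_subset _ _)
              (fun i hi _ => by linarith [hcmono i (Finset.mem_range.mp hi)])
        _ = c m - c 0 := Finset.sum_range_sub _ _
        _ = y - x := by rw [hc0, hcm]
    -- B estimate
    have hBsubU : ∀ i ∈ B, Ioo (c i) (c (i+1)) ⊆ U := by
      intro i hiB
      obtain ⟨hiR, hnpi⟩ := Finset.mem_filter.mp hiB
      have him := Finset.mem_range.mp hiR
      obtain ⟨hτxy, hτc, hsubIoo⟩ := htags i him
      have hpr := hpred (τ i) hτxy
      rcases hpr with h' | h'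
      · exact absurd h' hnpi
      · exact fun u hu => h' (hsubIoo (Set.Ioo_subset_Icc_self hu))
    have hlenB : ∑ i ∈ B, (c (i+1) - c i) < δ := by
      have hBsub : B ⊆ Finset.range m := Finset.filter_subset _ _
      have hdisjB : (↑B : Set ℕ).PairwiseDisjoint (fun i => Ioo (c i) (c (i+1))) :=
        fun i hi j hj hij => hdisjIoo i (hBsub hi) j (hBsub hj) hij
      have h1 : ENNReal.ofReal (∑ i ∈ B, (c (i+1) - c i)) =
          volume (⋃ i ∈ B, Ioo (c i) (c (i+1))) := by
        rw [measure_biUnion_finset hdisjB (fun i _ => measurableSet_Ioo)]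
        rw [ENNReal.ofReal_sum_of_nonneg
          (fun i hi => by linarith [hcmono i (Finset.mem_range.mp (hBsub hi))])]
        exact Finset.sum_congr rfl fun i _ => by rw [Real.volume_Ioo]
      have h3 : volume (⋃ i ∈ B, Ioo (c i) (c (i+1))) ≤ volume U :=
        measure_mono (Set.iUnion₂_subset hBsubU)
      have h4 : ENNReal.ofReal (∑ i ∈ B, (c (i+1) - c i)) < ENNReal.ofReal δ :=
        lt_of_le_of_lt (h1 ▸ h3) hUvol
      have h5 : (0:ℝ) ≤ ∑ i ∈ B, (c (i+1) - c i) :=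
        Finset.sum_nonneg (fun i hi => by
          linarith [hcmono i (Finset.mem_range.mp (hBsub hi))])
      exact (ENNReal.ofReal_lt_ofReal_iff_of_nonneg h5).mp h4
    have hsumB : ∑ i ∈ B, ‖f (c (i+1)) - f (c i)‖ < ε := by
      set Nb := B.card with hNb
      set eB : Fin Nb ≃o {z // z ∈ B} := B.orderIsoOfFin rfl with heB
      have htrans : ∀ (G : ℕ → ℝ), ∑ i : Fin Nb, G ((eB i : ℕ)) = ∑ i ∈ B, G i := by
        intro G
        rw [← Finset.sum_coe_sort B G]
        exact Fintype.sum_equiv eB.toEquiv _ _ (fun i => rfl)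
      have hmemB : ∀ i : Fin Nb, ((eB i : ℕ)) ∈ B := fun i => (eB i).2
      have hmemR : ∀ i : Fin Nb, ((eB i : ℕ)) < m := fun i =>
        Finset.mem_range.mp (Finset.filter_subset _ _ (hmemB i))
      have hcond1 : ∀ i : Fin Nb, c ((eB i : ℕ)) ≤ c ((eB i : ℕ) + 1) ∧
          Icc (c ((eB i : ℕ))) (c ((eB i : ℕ) + 1)) ⊆ Ioo a b := fun i =>
        ⟨hcmono _ (hmemR i), fun t ht => hIccs (hpiecesub _ (hmemR i) ht)⟩
      have hcond2 : ∀ i j : Fin Nb, i ≠ j →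
          Disjoint (Ioo (c ((eB i : ℕ))) (c ((eB i : ℕ) + 1)))
            (Ioo (c ((eB j : ℕ))) (c ((eB j : ℕ) + 1))) := by
        intro i j hij
        have hne : ((eB i : ℕ)) ≠ ((eB j : ℕ)) := fun hc' =>
          hij (eB.injective (Subtype.ext hc'))
        exact hdisjIoo _ (Finset.filter_subset _ _ (hmemB i)) _
          (Finset.filter_subset _ _ (hmemB j)) hne
      have hcond3 : (∑ i : Fin Nb, (c ((eB i : ℕ) + 1) - c ((eB i : ℕ)))) < δ := by
        rw [htrans (fun i => c (i+1) - c i)]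
        exact hlenB
      have := HAC Nb (fun i => c ((eB i : ℕ))) (fun i => c ((eB i : ℕ) + 1))
        hcond1 hcond2 hcond3
      rwa [htrans (fun i => ‖f (c (i+1)) - f (c i)‖)] at this
    -- combine
    calc ‖f y - f x‖ = ‖∑ i ∈ Finset.range m, (f (c (i+1)) - f (c i))‖ := by rw [htel]
      _ ≤ ∑ i ∈ Finset.range m, ‖f (c (i+1)) - f (c i)‖ := norm_sum_le _ _
      _ = (∑ i ∈ A, ‖f (c (i+1)) - f (c i)‖) + ∑ i ∈ B, ‖f (c (i+1)) - f (c i)‖ :=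
          (Finset.sum_filter_add_sum_filter_not _ _ _).symm
      _ ≤ (∑ i ∈ A, ((∫⁻ u in Ioo (c i) (c (i+1)), g u).toReal + ε * (c (i+1) - c i))) + ε :=
          add_le_add (Finset.sum_le_sum hpieceA) hsumB.le
      _ = (∑ i ∈ A, (∫⁻ u in Ioo (c i) (c (i+1)), g u).toReal) +
          (∑ i ∈ A, (ε * (c (i+1) - c i))) + ε := by
          rw [Finset.sum_add_distrib]
      _ ≤ (I + ε) + ε * (y - x) + ε :=
          add_le_add (add_le_add hsumA1 hsumA2) le_rfl
      _ = I + ε * (y - x + 2) := by ring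
  refine le_of_forall_pos_le_add fun ε hε => ?_
  have h2 : (0:ℝ) < y - x + 2 := by linarith
  have := main (ε / (y - x + 2)) (by positivity)
  calc ‖f y - f x‖ ≤ I + (ε / (y - x + 2)) * (y - x + 2) := this
    _ = I + ε := by rw [div_mul_cancel₀]; exact ne_of_gt h2


lemma acon_key (hab : a < b) (hf : AbsContOn f (Ioo a b)) {x y : ℝ}
    (hx : x ∈ Ioo a b) (hy : y ∈ Ioo a b) :
    ‖f y - f x‖ ≤ ∫ t in Ioo a b, ‖deriv f t‖ := by
  obtain ⟨C, hC0, hC⟩ := acon_evar_bound hf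
  have hfc := acon_continuousOn hf
  have hInt := (acon_integrableOn_deriv hC0 hC hab hfc).1
  have hdiff := (acon_lbv hC).ae_differentiableWithinAt_of_mem
  rcases le_total x y with h | h
  · exact acon_ftc hf hInt hdiff hx hy h
  · rw [norm_sub_rev]
    exact acon_ftc hf hInt hdiff hy hx h


/-- **Lemma lem1.** Under the dominance and smallness assumptions on the
radicals `r_j` of the coefficients `ã_j`, one has for all `t ∈ I`, `j = 2,…,n`:
(i) `|r_j(t) - r_j(t₀)| ≤ B |ã_k(t₀)|^{1/k}`;
(ii) `2/3 < 1-B ≤ |ã_k(t)/ã_k(t₀)|^{1/k} ≤ 1+B < 4/3`;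
(iii) `|ã_j(t)|^{1/j} ≤ (4/3)|ã_k(t₀)|^{1/k} ≤ 2 |ã_k(t)|^{1/k}`. -/
theorem coefficient_stability (n : ℕ) (hn : 2 ≤ n) (a b : ℝ) (hab : a < b)
    (ta : ℕ → ℝ → ℂ) (r : ℕ → ℝ → ℂ)
    (hcont : ∀ j ∈ Finset.Icc 2 n, ContinuousOn (ta j) (Ioo a b))
    (hAC : ∀ j ∈ Finset.Icc 2 n, AbsContOn (r j) (Ioo a b))
    (hroot : ∀ j ∈ Finset.Icc 2 n, ∀ t ∈ Ioo a b, r j t ^ j = ta j t)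
    (t₀ : ℝ) (ht₀ : t₀ ∈ Ioo a b) (k : ℕ) (hk : k ∈ Finset.Icc 2 n)
    (hmax : ∀ j ∈ Finset.Icc 2 n, ‖ta j t₀‖ ^ ((j : ℝ)⁻¹) ≤ ‖ta k t₀‖ ^ ((k : ℝ)⁻¹))
    (hne : ta k t₀ ≠ 0)
    (B : ℝ) (hB0 : 0 < B) (hB : B < 1 / 3)
    (hsum : ∑ j ∈ Finset.Icc 2 n, ∫ t in Ioo a b, ‖deriv (r j) t‖ ≤
      B * ‖ta k t₀‖ ^ ((k : ℝ)⁻¹)) :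
    ∀ t ∈ Ioo a b, ∀ j ∈ Finset.Icc 2 n,
      (‖r j t - r j t₀‖ ≤ B * ‖ta k t₀‖ ^ ((k : ℝ)⁻¹)) ∧
      ((2 : ℝ) / 3 < 1 - B ∧
        1 - B ≤ (‖ta k t‖ / ‖ta k t₀‖) ^ ((k : ℝ)⁻¹) ∧
        (‖ta k t‖ / ‖ta k t₀‖) ^ ((k : ℝ)⁻¹) ≤ 1 + B ∧
        1 + B < (4 : ℝ) / 3) ∧
      (‖ta j t‖ ^ ((j : ℝ)⁻¹) ≤ 4 / 3 * ‖ta k t₀‖ ^ ((k : ℝ)⁻¹) ∧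
        4 / 3 * ‖ta k t₀‖ ^ ((k : ℝ)⁻¹) ≤ 2 * ‖ta k t‖ ^ ((k : ℝ)⁻¹)) := by

  intro t ht j hj
  set S := ‖ta k t₀‖ ^ ((k : ℝ)⁻¹) with hS
  have hS0 : 0 < S := Real.rpow_pos_of_pos (norm_pos_iff.mpr hne) _
  have hnorm : ∀ j' ∈ Finset.Icc 2 n, ∀ u ∈ Ioo a b,
      ‖ta j' u‖ ^ ((j' : ℝ)⁻¹) = ‖r j' u‖ := by
    intro j' hj' u hu
    have hj2 : 2 ≤ j' := (Finset.mem_Icc.mp hj').1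
    have hj0 : (j' : ℝ) ≠ 0 := Nat.cast_ne_zero.mpr (by omega)
    rw [← hroot j' hj' u hu, norm_pow, ← Real.rpow_natCast ‖r j' u‖ j',
      ← Real.rpow_mul (norm_nonneg _), mul_inv_cancel₀ hj0, Real.rpow_one]
  have hkey : ∀ j' ∈ Finset.Icc 2 n, ‖r j' t - r j' t₀‖ ≤ B * S := by
    intro j' hj'
    have h1 : ‖r j' t - r j' t₀‖ ≤ ∫ u in Ioo a b, ‖deriv (r j') u‖ :=
      acon_key hab (hAC j' hj') ht₀ ht
    have h2 : ∫ u in Ioo a b, ‖deriv (r j') u‖ ≤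
        ∑ j'' ∈ Finset.Icc 2 n, ∫ u in Ioo a b, ‖deriv (r j'') u‖ :=
      Finset.single_le_sum (f := fun j'' => ∫ u in Ioo a b, ‖deriv (r j'') u‖)
        (fun j'' _ => setIntegral_nonneg measurableSet_Ioo fun u _ => norm_nonneg _) hj'
    linarith
  have hi := hkey j hj
  have hik := hkey k hk
  have hrt₀k : ‖r k t₀‖ = S := (hnorm k hk t₀ ht₀).symm
  have hrtk : ‖r k t‖ = ‖ta k t‖ ^ ((k : ℝ)⁻¹) := (hnorm k hk t ht).symm
  have habs := abs_norm_sub_norm_le (r k t) (r k t₀)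
  rw [hrt₀k] at habs
  have habs2 := abs_le.mp (le_trans habs hik)
  have hlow : (1 - B) * S ≤ ‖r k t‖ := by linarith [habs2.1]
  have hhigh : ‖r k t‖ ≤ (1 + B) * S := by linarith [habs2.2]
  have hratio : (‖ta k t‖ / ‖ta k t₀‖) ^ ((k : ℝ)⁻¹) = ‖r k t‖ / S := by
    rw [Real.div_rpow (norm_nonneg _) (norm_nonneg _), ← hS, hrtk]
  refine ⟨hi, ⟨by linarith, ?_, ?_, by linarith⟩, ?_, ?_⟩
  · rw [hratio, le_div_iff₀ hS0]
    linarith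
  · rw [hratio, div_le_iff₀ hS0]
    linarith
  · rw [hnorm j hj t ht]
    have h1 : ‖r j t‖ - ‖r j t₀‖ ≤ B * S := by
      have := abs_le.mp (le_trans (abs_norm_sub_norm_le (r j t) (r j t₀)) hi)
      linarith [this.1]
    have h2 : ‖r j t₀‖ ≤ S := by
      rw [← hnorm j hj t₀ ht₀]
      exact hmax j hj
    nlinarith
  · rw [← hrtk]
    nlinarith
end
end
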